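/- arXiv:1011.3379 — 4 statements merged into one kernel-verified Lean document; each statement's English description precedes it below -/
import Mathlib

section
/- For i ∈ {0,1}, the backward scale function S̃ has a finite limit at i (that is, S̃(i) := lim_{p→i} S̃(p) exists in ℝ) if and only if either λwᵢ is not identically zero on [0,1] or 2|μ(i)| < |v'(i)|. (This is the statement that the boundary point i is accessible to the diffusion with scale function S̃ if and only if i is accessible to the forward jump-diffusion.) -/
open MeasureTheory Set Filter Topology Asymptotics

/-- The infinitesimal generator of the forward jump-diffusion process (Eq. (7) of the paper). -/
noncomputable def fwdGen (lam : ℝ) (v mu w0 : ℝ → ℝ) (phi : ℝ → ℝ) (p : ℝ) : ℝ :=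
  1 / 2 * v p * deriv (deriv phi) p + mu p * deriv phi p
    + lam * w0 p * (phi 0 - phi p) + lam * (1 - w0 p) * (phi 1 - phi p)

/-- Standing assumptions on the coefficients (Assumption 2.1 of the paper). -/
structure ModelAssumptions (lam : ℝ) (v mu w0 : ℝ → ℝ) : Prop where
  lam_nonneg : 0 ≤ lam
  analytic : ∃ U : Set ℝ, IsOpen U ∧ Icc (0 : ℝ) 1 ⊆ U ∧
    AnalyticOnNhd ℝ v U ∧ AnalyticOnNhd ℝ mu U ∧ AnalyticOnNhd ℝ w0 U
  w0_mem : ∀ p ∈ Icc (0 : ℝ) 1, w0 p ∈ Icc (0 : ℝ) 1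
  mu_zero_pos : 0 < mu 0
  mu_one_neg : mu 1 < 0
  v_zero : v 0 = 0
  v_one : v 1 = 0
  v_pos : ∀ p ∈ Ioo (0 : ℝ) 1, 0 < v p
  deriv_v_zero_pos : 0 < deriv v 0
  deriv_v_one_neg : deriv v 1 < 0

/-- `pi` is a smooth, integrable, normalized, positive solution of the stationary
boundary value problem (Eq. (14) of the paper). -/
structure StationaryDensity (lam : ℝ) (v mu w0 : ℝ → ℝ) (pi : ℝ → ℝ) : Prop where
  contDiffOn : ContDiffOn ℝ 2 pi (Ioo (0 : ℝ) 1)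
  pos : ∀ p ∈ Ioo (0 : ℝ) 1, 0 < pi p
  integrableOn : IntegrableOn pi (Ioo (0 : ℝ) 1)
  total_mass : (∫ p in Ioo (0 : ℝ) 1, pi p) = 1
  ode : ∀ p ∈ Ioo (0 : ℝ) 1,
    deriv (deriv fun q => 1 / 2 * v q * pi q) p - deriv (fun q => mu q * pi q) p
      - lam * pi p = 0
  bc_zero : Tendsto (fun p => mu p * pi p - deriv (fun q => 1 / 2 * v q * pi q) p)
    (𝓝[Ioo (0 : ℝ) 1] 0) (𝓝 (lam * ∫ p in Ioo (0 : ℝ) 1, w0 p * pi p))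
  bc_one : Tendsto (fun p => mu p * pi p - deriv (fun q => 1 / 2 * v q * pi q) p)
    (𝓝[Ioo (0 : ℝ) 1] 1) (𝓝 (-(lam * ∫ p in Ioo (0 : ℝ) 1, (1 - w0 p) * pi p)))
  vpi_zero : Tendsto (fun p => v p * pi p) (𝓝[Ioo (0 : ℝ) 1] 0) (𝓝 0)
  vpi_one : Tendsto (fun p => v p * pi p) (𝓝[Ioo (0 : ℝ) 1] 1) (𝓝 0)

/-- The drift of the diffusive motion of the time-reversed process:
`μ̃(p) = −μ(p) + (vπ)'(p)/π(p)`. -/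
noncomputable def bwdDrift (v mu pi : ℝ → ℝ) (p : ℝ) : ℝ :=
  -mu p + deriv (fun q => v q * pi q) p / pi p

/-- The scale density of the backward diffusive motion:
`S̃'(p) = exp(−∫_{1/2}^p 2μ̃(z)/v(z) dz)`. -/
noncomputable def bwdScaleDensity (v mu pi : ℝ → ℝ) (p : ℝ) : ℝ :=
  Real.exp (-∫ z in (1 / 2 : ℝ)..p, 2 * bwdDrift v mu pi z / v z)

/-- The scale function of the backward diffusive motion: `S̃(p) = ∫_{1/2}^p S̃'(x) dx`. -/
noncomputable def bwdScale (v mu pi : ℝ → ℝ) (p : ℝ) : ℝ :=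
  ∫ x in (1 / 2 : ℝ)..p, bwdScaleDensity v mu pi x

/-- The speed density of the backward diffusive motion: `m̃(p) = 1/(v(p)S̃'(p))`. -/
noncomputable def bwdSpeedDensity (v mu pi : ℝ → ℝ) (p : ℝ) : ℝ :=
  1 / (v p * bwdScaleDensity v mu pi p)


noncomputable def auxJ (v mu : ℝ → ℝ) (x : ℝ) : ℝ := ∫ z in (1/2:ℝ)..x, 2 * mu z / v z
noncomputable def auxE (v mu : ℝ → ℝ) (x : ℝ) : ℝ := Real.exp (auxJ v mu x)
noncomputable def auxF (v mu pi : ℝ → ℝ) (x : ℝ) : ℝ := v x * pi x / auxE v mu x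
noncomputable def auxG (v mu pi : ℝ → ℝ) (p : ℝ) : ℝ :=
  mu p * pi p - deriv (fun q => 1/2 * v q * pi q) p
noncomputable def auxP (pi : ℝ → ℝ) (p : ℝ) : ℝ := ∫ t in Ioo (0:ℝ) p, pi t

section Basic

variable {lam : ℝ} {v mu w0 pi : ℝ → ℝ}

lemma uIcc_sub_Ioo {p q : ℝ} (hp : p ∈ Ioo (0:ℝ) 1) (hq : q ∈ Ioo (0:ℝ) 1) :
    uIcc p q ⊆ Ioo (0:ℝ) 1 := by
  rcases le_total p q with h | h
  · rw [uIcc_of_le h]; exact Icc_subset_Ioo hp.1 hq.2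
  · rw [uIcc_of_ge h]; exact Icc_subset_Ioo hq.1 hp.2

lemma half_mem_Ioo : (1/2 : ℝ) ∈ Ioo (0:ℝ) 1 := by norm_num

namespace ModelAssumptions

lemma analyticAt_v (H : ModelAssumptions lam v mu w0) {x : ℝ} (hx : x ∈ Icc (0:ℝ) 1) :
    AnalyticAt ℝ v x := by
  obtain ⟨U, _, hU, hv, -, -⟩ := H.analytic
  exact hv x (hU hx)

lemma analyticAt_mu (H : ModelAssumptions lam v mu w0) {x : ℝ} (hx : x ∈ Icc (0:ℝ) 1) :
    AnalyticAt ℝ mu x := by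
  obtain ⟨U, _, hU, -, hm, -⟩ := H.analytic
  exact hm x (hU hx)

lemma analyticAt_w0 (H : ModelAssumptions lam v mu w0) {x : ℝ} (hx : x ∈ Icc (0:ℝ) 1) :
    AnalyticAt ℝ w0 x := by
  obtain ⟨U, _, hU, -, -, hw⟩ := H.analytic
  exact hw x (hU hx)

end ModelAssumptions

/-- `v*pi` is C² on the open interval. -/
lemma contDiffOn_vpi (H : ModelAssumptions lam v mu w0) (HP : StationaryDensity lam v mu w0 pi) :
    ContDiffOn ℝ 2 (fun q => v q * pi q) (Ioo (0:ℝ) 1) := by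
  have hv : ContDiffOn ℝ 2 v (Ioo (0:ℝ) 1) := fun x hx =>
    ((H.analyticAt_v (Ioo_subset_Icc_self hx)).contDiffAt).contDiffWithinAt
  exact hv.mul HP.contDiffOn

lemma hasDerivAt_vpi (H : ModelAssumptions lam v mu w0) (HP : StationaryDensity lam v mu w0 pi)
    {x : ℝ} (hx : x ∈ Ioo (0:ℝ) 1) :
    HasDerivAt (fun q => v q * pi q) (deriv (fun q => v q * pi q) x) x := by
  have h := (contDiffOn_vpi H HP).contDiffAt (isOpen_Ioo.mem_nhds hx)
  exact (h.differentiableAt (by norm_num)).hasDerivAt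

lemma continuousOn_deriv_vpi (H : ModelAssumptions lam v mu w0)
    (HP : StationaryDensity lam v mu w0 pi) :
    ContinuousOn (deriv (fun q => v q * pi q)) (Ioo (0:ℝ) 1) :=
  (contDiffOn_vpi H HP).continuousOn_deriv_of_isOpen isOpen_Ioo (by norm_num)

lemma contOn_pi (HP : StationaryDensity lam v mu w0 pi) :
    ContinuousOn pi (Ioo (0:ℝ) 1) := HP.contDiffOn.continuousOn

lemma continuousOn_v (H : ModelAssumptions lam v mu w0) :
    ContinuousOn v (Icc (0:ℝ) 1) := fun x hx => (H.analyticAt_v hx).continuousAt.continuousWithinAt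

lemma continuousOn_mu (H : ModelAssumptions lam v mu w0) :
    ContinuousOn mu (Icc (0:ℝ) 1) := fun x hx => (H.analyticAt_mu hx).continuousAt.continuousWithinAt

lemma continuousOn_w0 (H : ModelAssumptions lam v mu w0) :
    ContinuousOn w0 (Icc (0:ℝ) 1) := fun x hx => (H.analyticAt_w0 hx).continuousAt.continuousWithinAt

end Basic

section Infra

variable {lam : ℝ} {v mu w0 pi : ℝ → ℝ}

lemma nebot_zero : (𝓝[Ioo (0:ℝ) 1] (0:ℝ)).NeBot := by
  refine mem_closure_iff_nhdsWithin_neBot.mp ?_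
  rw [closure_Ioo (zero_ne_one)]
  exact ⟨le_refl 0, zero_le_one⟩

lemma nebot_one : (𝓝[Ioo (0:ℝ) 1] (1:ℝ)).NeBot := by
  refine mem_closure_iff_nhdsWithin_neBot.mp ?_
  rw [closure_Ioo (zero_ne_one)]
  exact ⟨zero_le_one, le_refl 1⟩

lemma f_pos (H : ModelAssumptions lam v mu w0) (HP : StationaryDensity lam v mu w0 pi)
    {x : ℝ} (hx : x ∈ Ioo (0:ℝ) 1) : 0 < v x * pi x :=
  mul_pos (H.v_pos x hx) (HP.pos x hx)

lemma E_pos (x : ℝ) : 0 < auxE v mu x := Real.exp_pos _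

lemma contOn_muv (H : ModelAssumptions lam v mu w0) :
    ContinuousOn (fun z => 2 * mu z / v z) (Ioo (0:ℝ) 1) := by
  refine ContinuousOn.div ?_ ((continuousOn_v H).mono Ioo_subset_Icc_self)
    (fun x hx => (H.v_pos x hx).ne')
  exact continuousOn_const.mul ((continuousOn_mu H).mono Ioo_subset_Icc_self)

lemma hasDerivAt_J (H : ModelAssumptions lam v mu w0) {x : ℝ} (hx : x ∈ Ioo (0:ℝ) 1) :
    HasDerivAt (auxJ v mu) (2 * mu x / v x) x := by
  refine intervalIntegral.integral_hasDerivAt_right ?_ ?_ ?_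
  · exact ((contOn_muv H).mono (uIcc_sub_Ioo half_mem_Ioo hx)).intervalIntegrable
  · exact (contOn_muv H).stronglyMeasurableAtFilter isOpen_Ioo x hx
  · exact (contOn_muv H).continuousAt (isOpen_Ioo.mem_nhds hx)

lemma hasDerivAt_E (H : ModelAssumptions lam v mu w0) {x : ℝ} (hx : x ∈ Ioo (0:ℝ) 1) :
    HasDerivAt (auxE v mu) (2 * mu x / v x * auxE v mu x) x := by
  have := (hasDerivAt_J H hx).exp
  show HasDerivAt (fun x => Real.exp (auxJ v mu x)) _ x
  simpa [auxE, mul_comm] using this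

lemma contOn_E (H : ModelAssumptions lam v mu w0) :
    ContinuousOn (auxE v mu) (Ioo (0:ℝ) 1) := fun x hx =>
  ((hasDerivAt_E H hx).continuousAt).continuousWithinAt

lemma deriv_halfvpi (x : ℝ) :
    deriv (fun q => 1 / 2 * v q * pi q) x = 1 / 2 * deriv (fun q => v q * pi q) x := by
  have : (fun q => 1 / 2 * v q * pi q) = fun q => 1 / 2 * ((fun q => v q * pi q) q) :=
    funext fun q => by ring
  rw [this, deriv_const_mul_field]

lemma auxG_eq (p : ℝ) :
    auxG v mu pi p = mu p * pi p - 1 / 2 * deriv (fun q => v q * pi q) p := by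
  rw [auxG, deriv_halfvpi]

lemma contOn_G (H : ModelAssumptions lam v mu w0) (HP : StationaryDensity lam v mu w0 pi) :
    ContinuousOn (auxG v mu pi) (Ioo (0:ℝ) 1) := by
  have : ContinuousOn (fun p => mu p * pi p - 1 / 2 * deriv (fun q => v q * pi q) p)
      (Ioo (0:ℝ) 1) := by
    refine ContinuousOn.sub ?_ (continuousOn_const.mul (continuousOn_deriv_vpi H HP))
    exact ((continuousOn_mu H).mono Ioo_subset_Icc_self).mul (contOn_pi HP)
  exact this.congr fun p _ => auxG_eq p

lemma contDiffOn_halfvpi (H : ModelAssumptions lam v mu w0)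
    (HP : StationaryDensity lam v mu w0 pi) :
    ContDiffOn ℝ 2 (fun q => 1 / 2 * v q * pi q) (Ioo (0:ℝ) 1) := by
  have : (fun q => 1 / 2 * v q * pi q) = fun q => 1 / 2 * ((fun q => v q * pi q) q) :=
    funext fun q => by ring
  rw [this]
  exact contDiffOn_const.mul (contDiffOn_vpi H HP)

lemma hasDerivAt_G (H : ModelAssumptions lam v mu w0) (HP : StationaryDensity lam v mu w0 pi)
    {x : ℝ} (hx : x ∈ Ioo (0:ℝ) 1) :
    HasDerivAt (auxG v mu pi) (-(lam * pi x)) x := by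
  have hmem := isOpen_Ioo.mem_nhds hx
  -- derivative of mu*pi
  have hmp : ContDiffAt ℝ 1 (fun q => mu q * pi q) x := by
    have hmu : ContDiffAt ℝ 1 mu x := (H.analyticAt_mu (Ioo_subset_Icc_self hx)).contDiffAt
    exact hmu.mul ((HP.contDiffOn.contDiffAt hmem).of_le (by norm_num))
  have h1 : HasDerivAt (fun q => mu q * pi q) (deriv (fun q => mu q * pi q) x) x :=
    (hmp.differentiableAt one_ne_zero).hasDerivAt
  -- derivative of deriv (1/2 v pi)
  have hD : ContDiffOn ℝ 1 (deriv (fun q => 1 / 2 * v q * pi q)) (Ioo (0:ℝ) 1) :=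
    (contDiffOn_halfvpi H HP).deriv_of_isOpen isOpen_Ioo (by norm_num)
  have h2 : HasDerivAt (deriv (fun q => 1 / 2 * v q * pi q))
      (deriv (deriv (fun q => 1 / 2 * v q * pi q)) x) x :=
    (((hD.contDiffAt hmem)).differentiableAt one_ne_zero).hasDerivAt
  have hode := HP.ode x hx
  have h3 := h1.sub h2
  have : deriv (fun q => mu q * pi q) x - deriv (deriv fun q => 1 / 2 * v q * pi q) x
      = -(lam * pi x) := by linarith
  rw [this] at h3
  exact h3

lemma P_tendsto_zero (HP : StationaryDensity lam v mu w0 pi) :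
    Tendsto (auxP pi) (𝓝[Ioo (0:ℝ) 1] 0) (𝓝 0) := by
  have key : Tendsto (fun q => ∫ t in Ioo (0:ℝ) 1, (Ioo (0:ℝ) q).indicator pi t)
      (𝓝[Ioo (0:ℝ) 1] 0) (𝓝 (∫ _t in Ioo (0:ℝ) 1, (0:ℝ))) := by
    refine MeasureTheory.tendsto_integral_filter_of_dominated_convergence
      (fun t => |pi t|) ?_ ?_ ?_ ?_
    · exact Eventually.of_forall fun q =>
        (HP.integrableOn.1).indicator measurableSet_Ioo
    · exact Eventually.of_forall fun q => ae_of_all _ fun t => by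
        rw [Real.norm_eq_abs]
        rcases Set.indicator_eq_zero_or_self (Ioo (0:ℝ) q) pi t with h | h <;> rw [h] <;> simp
    · exact HP.integrableOn.abs
    · refine ae_of_all _ fun t => ?_
      rcases le_or_gt t 0 with ht | ht
      · have : ∀ q, (Ioo (0:ℝ) q).indicator pi t = 0 := fun q =>
          Set.indicator_of_notMem (fun hm => absurd hm.1 (not_lt.mpr ht)) pi
        simpa [this] using tendsto_const_nhds
      · refine Tendsto.congr' ?_ tendsto_const_nhds
        filter_upwards [nhdsWithin_le_nhds (Iio_mem_nhds ht)] with q hq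
        exact (Set.indicator_of_notMem (fun hm => absurd hq (not_lt.mpr hm.2.le)) pi).symm
  rw [integral_const] at key
  simp only [smul_zero] at key
  refine key.congr' ?_
  filter_upwards [self_mem_nhdsWithin] with q hq
  rw [MeasureTheory.integral_indicator measurableSet_Ioo,
    Measure.restrict_restrict measurableSet_Ioo,
    Set.inter_eq_left.mpr (Ioo_subset_Ioo le_rfl hq.2.le)]
  rfl

lemma Ioo_diff_Ioo {q p : ℝ} (hq : 0 < q) (hqp : q ≤ p) :
    Ioo (0:ℝ) p \ Ioo (0:ℝ) q = Ico q p := by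
  ext x
  simp only [mem_diff, mem_Ioo, mem_Ico, not_and, not_lt]
  constructor
  · rintro ⟨⟨hx0, hxp⟩, h⟩
    exact ⟨h hx0, hxp⟩
  · rintro ⟨hqx, hxp⟩
    exact ⟨⟨lt_of_lt_of_le hq hqx, hxp⟩, fun _ => hqx⟩

lemma intInt_pi (HP : StationaryDensity lam v mu w0 pi) {q p : ℝ}
    (hq : q ∈ Ioo (0:ℝ) 1) (hp : p ∈ Ioo (0:ℝ) 1) (hqp : q ≤ p) :
    ∫ z in q..p, pi z = auxP pi p - auxP pi q := by
  have hsub : Ioo (0:ℝ) p ⊆ Ioo (0:ℝ) 1 := Ioo_subset_Ioo le_rfl hp.2.le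
  have := MeasureTheory.integral_diff (f := pi) (μ := volume) measurableSet_Ioo
    (HP.integrableOn.mono_set hsub) (Ioo_subset_Ioo le_rfl hqp)
  rw [Ioo_diff_Ioo hq.1 hqp] at this
  rw [intervalIntegral.integral_of_le hqp, MeasureTheory.integral_Ioc_eq_integral_Ioo,
    ← MeasureTheory.integral_Ico_eq_integral_Ioo, this]
  rfl

lemma G_eq (H : ModelAssumptions lam v mu w0) (HP : StationaryDensity lam v mu w0 pi)
    {p : ℝ} (hp : p ∈ Ioo (0:ℝ) 1) :
    auxG v mu pi p = lam * (∫ t in Ioo (0:ℝ) 1, w0 t * pi t) - lam * auxP pi p := by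
  haveI := nebot_zero
  set c := lam * ∫ t in Ioo (0:ℝ) 1, w0 t * pi t with hc
  have key : ∀ q ∈ Ioo (0:ℝ) 1, q ≤ p →
      auxG v mu pi q = auxG v mu pi p + lam * auxP pi p - lam * auxP pi q := by
    intro q hq hqp
    have husub := uIcc_sub_Ioo hq hp
    have hftc : ∫ x in q..p, -(lam * pi x) = auxG v mu pi p - auxG v mu pi q := by
      refine intervalIntegral.integral_eq_sub_of_hasDerivAt
        (fun x hx => hasDerivAt_G H HP (husub hx)) ?_
      refine ContinuousOn.intervalIntegrable ?_
      exact (continuousOn_const.mul ((contOn_pi HP).mono husub)).neg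
    have hInt : ∫ x in q..p, -(lam * pi x) = -(lam * (auxP pi p - auxP pi q)) := by
      rw [show (fun x => -(lam * pi x)) = fun x => (-lam) * pi x from funext fun x => by ring]
      rw [intervalIntegral.integral_const_mul, intInt_pi HP hq hp hqp]
      ring
    rw [hInt] at hftc
    linarith
  have h1 : Tendsto (auxG v mu pi) (𝓝[Ioo (0:ℝ) 1] 0)
      (𝓝 (auxG v mu pi p + lam * auxP pi p - lam * 0)) := by
    refine Tendsto.congr' ?_ (((tendsto_const_nhds).add tendsto_const_nhds).sub
      (tendsto_const_nhds.mul (P_tendsto_zero HP)))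
    filter_upwards [self_mem_nhdsWithin, nhdsWithin_le_nhds (Iio_mem_nhds hp.1)]
      with q hq hq2
    exact (key q hq hq2.le).symm
  have h2 : Tendsto (auxG v mu pi) (𝓝[Ioo (0:ℝ) 1] 0) (𝓝 c) := HP.bc_zero
  have := tendsto_nhds_unique h1 h2
  rw [mul_zero, sub_zero] at this
  linarith

end Infra

section ScaleRep

variable {lam : ℝ} {v mu w0 pi : ℝ → ℝ}

/-- Key representation of the backward scale density: `S̃'(p) = E(p) f(1/2)² / f(p)²`. -/
lemma scaleDensity_eq (H : ModelAssumptions lam v mu w0)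
    (HP : StationaryDensity lam v mu w0 pi) {p : ℝ} (hp : p ∈ Ioo (0:ℝ) 1) :
    bwdScaleDensity v mu pi p
      = auxE v mu p * (v (1/2) * pi (1/2))^2 / (v p * pi p)^2 := by
  set f := fun q => v q * pi q with hf
  have husub := uIcc_sub_Ioo half_mem_Ioo hp
  have hφ : ∀ x ∈ Ioo (0:ℝ) 1, HasDerivAt (fun y => 2 * Real.log (f y) - auxJ v mu y)
      (2 * (deriv f x / f x) - 2 * mu x / v x) x := by
    intro x hx
    have hlog : HasDerivAt (fun y => Real.log (f y)) (deriv f x / f x) x :=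
      (hasDerivAt_vpi H HP hx).log (f_pos H HP hx).ne'
    exact (hlog.const_mul 2).sub (hasDerivAt_J H hx)
  have heq : EqOn (fun z => 2 * bwdDrift v mu pi z / v z)
      (fun x => 2 * (deriv f x / f x) - 2 * mu x / v x) (uIcc (1/2 : ℝ) p) := by
    intro x hx
    have hxI := husub hx
    have hv := (H.v_pos x hxI).ne'
    have hpi := (HP.pos x hxI).ne'
    simp only [bwdDrift, hf]
    field_simp
    ring
  have hcontd : ContinuousOn (fun x => 2 * (deriv f x / f x) - 2 * mu x / v x)
      (Ioo (0:ℝ) 1) := by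
    refine ContinuousOn.sub ?_ (contOn_muv H)
    refine continuousOn_const.mul (ContinuousOn.div (continuousOn_deriv_vpi H HP) ?_ ?_)
    · exact ((continuousOn_v H).mono Ioo_subset_Icc_self).mul (contOn_pi HP)
    · exact fun x hx => (f_pos H HP hx).ne'
  have hint : ∫ z in (1/2 : ℝ)..p, 2 * bwdDrift v mu pi z / v z
      = (2 * Real.log (f p) - auxJ v mu p) - (2 * Real.log (f (1/2)) - auxJ v mu (1/2)) := by
    rw [intervalIntegral.integral_congr heq]
    exact intervalIntegral.integral_eq_sub_of_hasDerivAt (fun x hx => hφ x (husub hx))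
      ((hcontd.mono husub).intervalIntegrable)
  have hJhalf : auxJ v mu (1/2 : ℝ) = 0 := intervalIntegral.integral_same
  rw [bwdScaleDensity, hint, hJhalf]
  have hfp : 0 < f p := f_pos H HP hp
  have hfh : 0 < f (1/2 : ℝ) := f_pos H HP half_mem_Ioo
  have : -(2 * Real.log (f p) - auxJ v mu p - (2 * Real.log (f (1/2)) - 0))
      = auxJ v mu p + (Real.log (f (1/2)) + Real.log (f (1/2)))
        - (Real.log (f p) + Real.log (f p)) := by ring
  rw [this, Real.exp_sub, Real.exp_add, Real.exp_add, Real.exp_add, Real.exp_log hfh, Real.exp_log hfp]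
  rw [auxE]
  have h1 : f (1/2:ℝ) * f (1/2:ℝ) = (v (1/2:ℝ) * pi (1/2:ℝ))^2 := by rw [hf]; ring
  have h2 : f p * f p = (v p * pi p)^2 := by rw [hf]; ring
  rw [mul_comm (Real.exp (auxJ v mu p))]
  rw [h1, h2] at *
  field_simp

lemma contOn_SD (H : ModelAssumptions lam v mu w0) (HP : StationaryDensity lam v mu w0 pi) :
    ContinuousOn (bwdScaleDensity v mu pi) (Ioo (0:ℝ) 1) := by
  have hc : ContinuousOn (fun p => auxE v mu p * (v (1/2) * pi (1/2))^2 / (v p * pi p)^2)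
      (Ioo (0:ℝ) 1) := by
    refine ContinuousOn.div ((contOn_E H).mul continuousOn_const) ?_ ?_
    · exact (((continuousOn_v H).mono Ioo_subset_Icc_self).mul (contOn_pi HP)).pow 2
    · exact fun x hx => pow_ne_zero 2 (f_pos H HP hx).ne'
  exact hc.congr fun p hp => scaleDensity_eq H HP hp

lemma SD_pos (p : ℝ) : 0 < bwdScaleDensity v mu pi p := Real.exp_pos _

lemma intInt_SD (H : ModelAssumptions lam v mu w0) (HP : StationaryDensity lam v mu w0 pi)
    {p q : ℝ} (hp : p ∈ Ioo (0:ℝ) 1) (hq : q ∈ Ioo (0:ℝ) 1) :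
    IntervalIntegrable (bwdScaleDensity v mu pi) volume p q :=
  ((contOn_SD H HP).mono (uIcc_sub_Ioo hp hq)).intervalIntegrable

lemma bwdScale_sub (H : ModelAssumptions lam v mu w0) (HP : StationaryDensity lam v mu w0 pi)
    {p q : ℝ} (hp : p ∈ Ioo (0:ℝ) 1) (hq : q ∈ Ioo (0:ℝ) 1) :
    bwdScale v mu pi q - bwdScale v mu pi p = ∫ x in p..q, bwdScaleDensity v mu pi x :=
  intervalIntegral.integral_interval_sub_left (intInt_SD H HP half_mem_Ioo hq)
    (intInt_SD H HP half_mem_Ioo hp)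

lemma bwdScale_mono (H : ModelAssumptions lam v mu w0)
    (HP : StationaryDensity lam v mu w0 pi) :
    MonotoneOn (bwdScale v mu pi) (Ioo (0:ℝ) 1) := by
  intro p hp q hq hpq
  have h := bwdScale_sub H HP hp hq
  have hnn : 0 ≤ ∫ x in p..q, bwdScaleDensity v mu pi x :=
    intervalIntegral.integral_nonneg hpq (fun x _ => (SD_pos x).le)
  linarith

lemma exists_limit_of_bdd (H : ModelAssumptions lam v mu w0)
    (HP : StationaryDensity lam v mu w0 pi)
    (hB : ∃ δ B : ℝ, δ ∈ Ioo (0:ℝ) 1 ∧ ∀ p ∈ Ioo (0:ℝ) δ, B ≤ bwdScale v mu pi p) :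
    ∃ L : ℝ, Tendsto (bwdScale v mu pi) (𝓝[Ioo (0:ℝ) 1] 0) (𝓝 L) := by
  obtain ⟨δ, B, hδ, hbd⟩ := hB
  have hmono := bwdScale_mono H HP
  have hδ2 : δ/2 ∈ Ioo (0:ℝ) 1 := ⟨by linarith [hδ.1], by linarith [hδ.2]⟩
  have hbdd : BddBelow (bwdScale v mu pi '' Ioo (0:ℝ) 1) := by
    refine ⟨min B (bwdScale v mu pi (δ/2)), ?_⟩
    rintro y ⟨p, hp, rfl⟩
    rcases lt_or_ge p δ with h | h
    · exact le_trans (min_le_left _ _) (hbd p ⟨hp.1, h⟩)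
    · exact le_trans (min_le_right _ _)
        (hmono hδ2 hp (by linarith [hδ.1]))
  have := MonotoneOn.tendsto_nhdsWithin_Ioo_right (y := (1:ℝ)) (x := (0:ℝ))
    ⟨1/2, half_mem_Ioo⟩ hmono hbdd
  exact ⟨_, this.mono_left (nhdsWithin_mono 0 Ioo_subset_Ioi_self)⟩

lemma no_limit_of_unbdd (H : ModelAssumptions lam v mu w0)
    (HP : StationaryDensity lam v mu w0 pi)
    (hK : ∀ K : ℝ, ∃ δ, δ ∈ Ioo (0:ℝ) 1 ∧ ∀ p ∈ Ioo (0:ℝ) δ, bwdScale v mu pi p ≤ K) :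
    ¬ ∃ L : ℝ, Tendsto (bwdScale v mu pi) (𝓝[Ioo (0:ℝ) 1] 0) (𝓝 L) := by
  haveI := nebot_zero
  have hbot : Tendsto (bwdScale v mu pi) (𝓝[Ioo (0:ℝ) 1] 0) atBot := by
    rw [tendsto_atBot]
    intro K
    obtain ⟨δ, hδ, hbd⟩ := hK K
    filter_upwards [self_mem_nhdsWithin, nhdsWithin_le_nhds (Iio_mem_nhds hδ.1)] with p hp hp2
    exact hbd p ⟨hp.1, hp2⟩
  rintro ⟨L, hL⟩
  exact not_tendsto_nhds_of_tendsto_atBot hbot L hL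

end ScaleRep

section FFun

variable {lam : ℝ} {v mu w0 pi : ℝ → ℝ}

lemma contOn_F (H : ModelAssumptions lam v mu w0) (HP : StationaryDensity lam v mu w0 pi) :
    ContinuousOn (auxF v mu pi) (Ioo (0:ℝ) 1) := by
  refine ContinuousOn.div ?_ (contOn_E H) (fun x _ => (E_pos x).ne')
  exact ((continuousOn_v H).mono Ioo_subset_Icc_self).mul (contOn_pi HP)

lemma F_pos (H : ModelAssumptions lam v mu w0) (HP : StationaryDensity lam v mu w0 pi)
    {x : ℝ} (hx : x ∈ Ioo (0:ℝ) 1) : 0 < auxF v mu pi x :=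
  div_pos (f_pos H HP hx) (E_pos x)

lemma E_half : auxE v mu (1/2 : ℝ) = 1 := by
  rw [auxE, auxJ, intervalIntegral.integral_same, Real.exp_zero]

lemma F_half : auxF v mu pi (1/2 : ℝ) = v (1/2 : ℝ) * pi (1/2 : ℝ) := by
  rw [auxF, E_half, div_one]

lemma hasDerivAt_F (H : ModelAssumptions lam v mu w0) (HP : StationaryDensity lam v mu w0 pi)
    {x : ℝ} (hx : x ∈ Ioo (0:ℝ) 1) :
    HasDerivAt (auxF v mu pi) (-2 * auxG v mu pi x / auxE v mu x) x := by
  have h := (hasDerivAt_vpi H HP hx).div (hasDerivAt_E H hx) (E_pos x).ne'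
  have hval : (deriv (fun q => v q * pi q) x * auxE v mu x
      - (v x * pi x) * (2 * mu x / v x * auxE v mu x)) / (auxE v mu x)^2
      = -2 * auxG v mu pi x / auxE v mu x := by
    rw [auxG_eq]
    have hv := (H.v_pos x hx).ne'
    have hE := (E_pos (v := v) (mu := mu) x).ne'
    field_simp
    ring
  rw [hval] at h
  exact h

lemma monoOn_F (H : ModelAssumptions lam v mu w0) (HP : StationaryDensity lam v mu w0 pi)
    (hc : lam * (∫ t in Ioo (0:ℝ) 1, w0 t * pi t) = 0) :
    MonotoneOn (auxF v mu pi) (Ioo (0:ℝ) 1) := by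
  have hP : ∀ x ∈ Ioo (0:ℝ) 1, 0 ≤ auxP pi x := by
    intro x hx
    exact MeasureTheory.setIntegral_nonneg measurableSet_Ioo fun t ht =>
      (HP.pos t ⟨ht.1, ht.2.trans hx.2⟩).le
  refine monotoneOn_of_deriv_nonneg (convex_Ioo 0 1)
    (fun x hx => ((hasDerivAt_F H HP hx).continuousAt).continuousWithinAt) ?_ ?_
  · intro x hx
    rw [interior_Ioo] at hx
    exact (hasDerivAt_F H HP hx).differentiableAt.differentiableWithinAt
  · intro x hx
    rw [interior_Ioo] at hx
    rw [(hasDerivAt_F H HP hx).deriv]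
    have hG : auxG v mu pi x = -(lam * auxP pi x) := by
      rw [G_eq H HP hx, hc]; ring
    rw [hG]
    have h0 : 0 ≤ lam * auxP pi x := mul_nonneg H.lam_nonneg (hP x hx)
    have hE := (E_pos (v := v) (mu := mu) x)
    have : -2 * -(lam * auxP pi x) = 2 * (lam * auxP pi x) := by ring
    rw [this]
    positivity

lemma SD_eq2 (H : ModelAssumptions lam v mu w0) (HP : StationaryDensity lam v mu w0 pi)
    {x : ℝ} (hx : x ∈ Ioo (0:ℝ) 1) :
    bwdScaleDensity v mu pi x
      = (v (1/2 : ℝ) * pi (1/2 : ℝ))^2 / (auxE v mu x * (auxF v mu pi x)^2) := by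
  rw [scaleDensity_eq H HP hx, auxF]
  have hE := (E_pos (v := v) (mu := mu) x).ne'
  have hf := (f_pos H HP hx).ne'
  field_simp

lemma P_mono (HP : StationaryDensity lam v mu w0 pi) {z δ : ℝ} (hz : 0 < z) (hzδ : z ≤ δ)
    (hδ : δ < 1) : auxP pi z ≤ auxP pi δ := by
  refine MeasureTheory.setIntegral_mono_set
    (HP.integrableOn.mono_set (Ioo_subset_Ioo le_rfl hδ.le)) ?_ ?_
  · exact (ae_restrict_mem measurableSet_Ioo).mono fun t ht =>
      (HP.pos t ⟨ht.1, lt_trans ht.2 hδ⟩).le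
  · exact HasSubset.Subset.eventuallyLE (Ioo_subset_Ioo le_rfl hzδ)

/-- Case `λκ₀ > 0`: the scale function is bounded below near 0. -/
lemma bdd_of_cpos (H : ModelAssumptions lam v mu w0) (HP : StationaryDensity lam v mu w0 pi)
    (hc : 0 < lam * ∫ t in Ioo (0:ℝ) 1, w0 t * pi t) :
    ∃ δ B : ℝ, δ ∈ Ioo (0:ℝ) 1 ∧ ∀ p ∈ Ioo (0:ℝ) δ, B ≤ bwdScale v mu pi p := by
  haveI := nebot_zero
  set c := lam * ∫ t in Ioo (0:ℝ) 1, w0 t * pi t with hcdef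
  -- find δ with lam * P δ ≤ c/2
  have hev : ∀ᶠ q in 𝓝[Ioo (0:ℝ) 1] 0,
      q ∈ Ioo (0:ℝ) 1 ∧ q < 1/2 ∧ lam * auxP pi q < c/2 := by
    have h1 := self_mem_nhdsWithin (s := Ioo (0:ℝ) 1) (a := (0:ℝ))
    have h2 : ∀ᶠ q in 𝓝[Ioo (0:ℝ) 1] (0:ℝ), q < 1/2 := by
      filter_upwards [nhdsWithin_le_nhds (Iio_mem_nhds (by norm_num : (0:ℝ) < 1/2))] with q hq
      exact hq
    have hlim : Tendsto (fun q => lam * auxP pi q) (𝓝[Ioo (0:ℝ) 1] 0) (𝓝 0) := by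
      simpa using tendsto_const_nhds.mul (P_tendsto_zero HP)
    have h3 : ∀ᶠ q in 𝓝[Ioo (0:ℝ) 1] (0:ℝ), lam * auxP pi q < c/2 :=
      hlim.eventually_lt_const (by linarith)
    filter_upwards [h1, h2, h3] with q hq1 hq2 hq3 using ⟨hq1, hq2, hq3⟩
  obtain ⟨δ, hδI, hδhalf, hδP⟩ := hev.exists
  -- G ≥ c/2 on (0, δ]
  have hG : ∀ z ∈ Ioo (0:ℝ) 1, z ≤ δ → c/2 ≤ auxG v mu pi z := by
    intro z hz hzδ
    rw [G_eq H HP hz, ← hcdef]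
    have : lam * auxP pi z ≤ lam * auxP pi δ :=
      mul_le_mul_of_nonneg_left (P_mono HP hz.1 hzδ hδI.2) H.lam_nonneg
    linarith
  set cf := (v (1/2 : ℝ) * pi (1/2 : ℝ))^2 with hcf
  have hcfpos : 0 < cf := by
    rw [hcf]; exact pow_pos (f_pos H HP half_mem_Ioo) 2
  set K := 2 * cf / c with hK
  have hKpos : 0 < K := by positivity
  have hKc : K * c = 2 * cf := by rw [hK]; field_simp
  refine ⟨δ, bwdScale v mu pi δ - K / auxF v mu pi δ, hδI, ?_⟩
  intro p hp
  have hpI : p ∈ Ioo (0:ℝ) 1 := ⟨hp.1, hp.2.trans hδI.2⟩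
  have hpδ : p ≤ δ := hp.2.le
  have hIccsub : Icc p δ ⊆ Ioo (0:ℝ) 1 := Icc_subset_Ioo hp.1 hδI.2
  -- pointwise bound SD ≤ K * invF'
  have hpt : ∀ x ∈ Icc p δ, bwdScaleDensity v mu pi x
      ≤ K * (2 * auxG v mu pi x / auxE v mu x / (auxF v mu pi x)^2) := by
    intro x hx
    have hxI := hIccsub hx
    rw [SD_eq2 H HP hxI]
    have hE := E_pos (v := v) (mu := mu) x
    have hF := F_pos H HP hxI
    have hGx := hG x hxI hx.2
    have h1 : cf ≤ K * 2 * auxG v mu pi x := by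
      have h2G : K * c ≤ K * (2 * auxG v mu pi x) :=
        mul_le_mul_of_nonneg_left (by linarith) hKpos.le
      nlinarith [hKc]
    have hrw : K * (2 * auxG v mu pi x / auxE v mu x / (auxF v mu pi x)^2)
        = (K * 2 * auxG v mu pi x) / (auxE v mu x * (auxF v mu pi x)^2) := by
      field_simp
    rw [hrw]
    gcongr
  -- invF has derivative
  have hinv : ∀ x ∈ Icc p δ, HasDerivAt (fun y => (auxF v mu pi y)⁻¹)
      (2 * auxG v mu pi x / auxE v mu x / (auxF v mu pi x)^2) x := by
    intro x hx
    have hxI := hIccsub hx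
    have h := (hasDerivAt_F H HP hxI).inv (F_pos H HP hxI).ne'
    exact h.congr_deriv (by ring)
  have hcontg : ContinuousOn (fun x => 2 * auxG v mu pi x / auxE v mu x / (auxF v mu pi x)^2)
      (Ioo (0:ℝ) 1) := by
    refine ContinuousOn.div (ContinuousOn.div (continuousOn_const.mul (contOn_G H HP))
      (contOn_E H) (fun x _ => (E_pos x).ne')) ((contOn_F H HP).pow 2)
      (fun x hx => (pow_pos (F_pos H HP hx) 2).ne')
  have hIntg : IntervalIntegrable
      (fun x => 2 * auxG v mu pi x / auxE v mu x / (auxF v mu pi x)^2) volume p δ := by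
    refine ContinuousOn.intervalIntegrable ?_
    refine hcontg.mono ?_
    rw [uIcc_of_le hpδ]
    exact hIccsub
  have hIntSD := intInt_SD H HP hpI hδI
  have hle := intervalIntegral.integral_mono_on hpδ hIntSD (hIntg.const_mul K) hpt
  have hFTC : ∫ x in p..δ, (2 * auxG v mu pi x / auxE v mu x / (auxF v mu pi x)^2)
      = (auxF v mu pi δ)⁻¹ - (auxF v mu pi p)⁻¹ := by
    refine intervalIntegral.integral_eq_sub_of_hasDerivAt
      (f := fun y => (auxF v mu pi y)⁻¹) ?_ hIntg
    intro x hx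
    rw [uIcc_of_le hpδ] at hx
    exact hinv x hx
  rw [intervalIntegral.integral_const_mul, hFTC] at hle
  have hFp : 0 < (auxF v mu pi p)⁻¹ := inv_pos.mpr (F_pos H HP hpI)
  have hFδ : 0 < auxF v mu pi δ := F_pos H HP hδI
  have hsub := bwdScale_sub H HP hpI hδI
  have hKF : K * ((auxF v mu pi δ)⁻¹ - (auxF v mu pi p)⁻¹) ≤ K / auxF v mu pi δ := by
    rw [div_eq_mul_inv]
    nlinarith
  linarith

end FFun

section RHS

variable {lam : ℝ} {v mu w0 pi : ℝ → ℝ}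

lemma kappa_nonneg (H : ModelAssumptions lam v mu w0) (HP : StationaryDensity lam v mu w0 pi) :
    0 ≤ ∫ t in Ioo (0:ℝ) 1, w0 t * pi t :=
  MeasureTheory.setIntegral_nonneg measurableSet_Ioo fun t ht =>
    mul_nonneg (H.w0_mem t (Ioo_subset_Icc_self ht)).1 (HP.pos t ht).le

lemma RHS2_iff (H : ModelAssumptions lam v mu w0) :
    (2 * |mu 0| < |deriv v 0|) ↔ (2 * mu 0 / deriv v 0 < 1) := by
  rw [abs_of_pos H.mu_zero_pos, abs_of_pos H.deriv_v_zero_pos, div_lt_one H.deriv_v_zero_pos]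

lemma RHS1_iff (H : ModelAssumptions lam v mu w0) (HP : StationaryDensity lam v mu w0 pi) :
    (∃ p ∈ Icc (0:ℝ) 1, lam * w0 p ≠ 0) ↔
      0 < lam * ∫ t in Ioo (0:ℝ) 1, w0 t * pi t := by
  constructor
  · rintro ⟨p₀, hp₀, hne⟩
    have hlam : lam ≠ 0 := fun h => hne (by rw [h, zero_mul])
    have hlampos : 0 < lam := H.lam_nonneg.lt_of_ne (Ne.symm hlam)
    have hw0 : 0 < w0 p₀ := by
      rcases lt_or_eq_of_le (H.w0_mem p₀ hp₀).1 with h | h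
      · exact h
      · exact absurd (by rw [← h, mul_zero]) hne
    -- continuity of w0 at p₀
    have hcont : ContinuousAt w0 p₀ := (H.analyticAt_w0 hp₀).continuousAt
    obtain ⟨ε, hε, hball⟩ := Metric.continuousAt_iff.mp hcont (w0 p₀) (by positivity)
    set a := max (p₀ - ε) 0 with ha
    set b := min (p₀ + ε) 1 with hb
    have hab : a < b := by
      rcases hp₀ with ⟨h0, h1⟩
      rw [ha, hb]
      rcases max_cases (p₀ - ε) 0 with ⟨h, _⟩ | ⟨h, _⟩ <;>
        rcases min_cases (p₀ + ε) 1 with ⟨h', _⟩ | ⟨h', _⟩ <;> rw [h, h'] <;> linarith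
    have hsub : Ioo a b ⊆ Ioo (0:ℝ) 1 := fun x hx =>
      ⟨lt_of_le_of_lt (le_max_right _ _) hx.1, lt_of_lt_of_le hx.2 (min_le_right _ _)⟩
    have hwpos : ∀ x ∈ Ioo a b, 0 < w0 x := by
      intro x hx
      have hdist : dist x p₀ < ε := by
        rw [Real.dist_eq, abs_lt]
        constructor
        · have := lt_of_le_of_lt (le_max_left (p₀ - ε) 0) hx.1; linarith
        · have := lt_of_lt_of_le hx.2 (min_le_left (p₀ + ε) 1); linarith
      have := hball hdist
      rw [Real.dist_eq, abs_lt] at this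
      linarith [this.1]
    -- integrability of w0 * pi on Ioo 0 1
    have hInt : IntegrableOn (fun t => w0 t * pi t) (Ioo (0:ℝ) 1) := by
      refine Integrable.mono' HP.integrableOn ?_ ?_
      · exact (((continuousOn_w0 H).mono Ioo_subset_Icc_self).aestronglyMeasurable
          measurableSet_Ioo).mul HP.integrableOn.1
      · refine (ae_restrict_mem measurableSet_Ioo).mono fun t ht => ?_
        have h0 := (H.w0_mem t (Ioo_subset_Icc_self ht)).1
        have h1 := (H.w0_mem t (Ioo_subset_Icc_self ht)).2
        have hπ := (HP.pos t ht).le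
        rw [Real.norm_eq_abs, abs_of_nonneg (mul_nonneg h0 hπ)]
        nlinarith
    refine mul_pos hlampos ?_
    rw [MeasureTheory.setIntegral_pos_iff_support_of_nonneg_ae ?_ hInt]
    · refine lt_of_lt_of_le ?_ (measure_mono (?_ : Ioo a b ⊆ _))
      · rw [Real.volume_Ioo]
        exact ENNReal.ofReal_pos.mpr (by linarith)
      · intro x hx
        refine ⟨?_, hsub hx⟩
        have := mul_pos (hwpos x hx) (HP.pos x (hsub hx))
        exact fun h => this.ne' h
    · refine (ae_restrict_mem measurableSet_Ioo).mono fun t ht => ?_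
      exact mul_nonneg (H.w0_mem t (Ioo_subset_Icc_self ht)).1 (HP.pos t ht).le
  · intro hpos
    by_contra hno
    push_neg at hno
    rcases eq_or_ne lam 0 with h | h
    · rw [h, zero_mul] at hpos; exact lt_irrefl 0 hpos
    · have hw : ∀ t ∈ Ioo (0:ℝ) 1, w0 t * pi t = 0 := by
        intro t ht
        have := hno t (Ioo_subset_Icc_self ht)
        have hw0 : w0 t = 0 := by
          rcases mul_eq_zero.mp this with h' | h'
          · exact absurd h' h
          · exact h'
        rw [hw0, zero_mul]
      have : (∫ t in Ioo (0:ℝ) 1, w0 t * pi t) = 0 := by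
        rw [MeasureTheory.setIntegral_congr_fun measurableSet_Ioo hw]
        simp
      rw [this, mul_zero] at hpos
      exact lt_irrefl 0 hpos

end RHS

section EAsymp

variable {lam : ℝ} {v mu w0 pi : ℝ → ℝ}

/-- The singular part of `2μ/v` near 0 is `A/z`, with a bounded remainder. -/
lemma muv_split (H : ModelAssumptions lam v mu w0) :
    ∃ M εb : ℝ, 0 < εb ∧ ∀ z, 0 < z → z < εb → z < 1 →
      |2 * mu z / v z - (2 * mu 0 / deriv v 0) / z| ≤ M := by
  set A := 2 * mu 0 / deriv v 0 with hA
  have h0 : (0:ℝ) ∈ Icc (0:ℝ) 1 := ⟨le_rfl, zero_le_one⟩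
  have hv0 := H.analyticAt_v h0
  have hmu0 := H.analyticAt_mu h0
  set w := dslope v 0 with hw
  have hw_an : AnalyticAt ℝ w 0 := by
    obtain ⟨pv, hpv⟩ := hv0
    exact ⟨_, hpv.has_fpower_series_dslope_fslope⟩
  have hw0 : w 0 = deriv v 0 := dslope_same v 0
  set h := fun z => 2 * mu z - A * w z with hh
  have hh_an : AnalyticAt ℝ h 0 := ((analyticAt_const).mul hmu0).sub ((analyticAt_const).mul hw_an)
  have hh0 : h 0 = 0 := by
    have hvne : deriv v 0 ≠ 0 := H.deriv_v_zero_pos.ne'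
    rw [hh]
    simp only [hw0, hA]
    field_simp
    ring
  set g := dslope h 0 with hg
  have hg_an : AnalyticAt ℝ g 0 := by
    obtain ⟨ph, hph⟩ := hh_an
    exact ⟨_, hph.has_fpower_series_dslope_fslope⟩
  have hwne : w 0 ≠ 0 := by rw [hw0]; exact H.deriv_v_zero_pos.ne'
  have hφ0 : ContinuousAt (fun z => g z / w z) 0 :=
    (hg_an.continuousAt).div (hw_an.continuousAt) hwne
  obtain ⟨ε, hεpos, hb⟩ := Metric.continuousAt_iff.mp hφ0 1 one_pos
  refine ⟨|g 0 / w 0| + 1, ε, hεpos, ?_⟩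
  intro z hz0 hzε hz1
  have hzne : z ≠ 0 := hz0.ne'
  have hvz : v z ≠ 0 := (H.v_pos z ⟨hz0, hz1⟩).ne'
  -- identity
  have hwz : w z = v z / z := by
    rw [hw, dslope_of_ne v hzne, slope_def_field, H.v_zero, sub_zero, sub_zero]
  have hgz : g z = (2 * mu z - A * w z) / z := by
    rw [hg, dslope_of_ne h hzne, slope_def_field, sub_zero, hh0, sub_zero]
  have hiden : 2 * mu z / v z - A / z = g z / w z := by
    rw [hgz, hwz]
    field_simp
  rw [hiden]
  have hd : dist z 0 < ε := by
    rw [Real.dist_eq, sub_zero, abs_of_pos hz0]; exact hzε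
  have := hb hd
  rw [Real.dist_eq] at this
  calc |g z / w z| = |g 0 / w 0 + (g z / w z - g 0 / w 0)| := by ring_nf
    _ ≤ |g 0 / w 0| + |g z / w z - g 0 / w 0| := abs_add_le _ _
    _ ≤ |g 0 / w 0| + 1 := by linarith

/-- Two-sided power bounds for `E` near 0. -/
lemma E_asymp (H : ModelAssumptions lam v mu w0) :
    ∃ δ C₁ C₂ : ℝ, δ ∈ Ioo (0:ℝ) (1/2) ∧ 0 < C₁ ∧ 0 < C₂ ∧
      ∀ p ∈ Ioc (0:ℝ) δ,
        C₁ * p ^ (2 * mu 0 / deriv v 0) ≤ auxE v mu p ∧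
        auxE v mu p ≤ C₂ * p ^ (2 * mu 0 / deriv v 0) := by
  set A := 2 * mu 0 / deriv v 0 with hA
  obtain ⟨M, εb, hεb, hM⟩ := muv_split H
  have hM0 : 0 ≤ M := by
    have := hM (min (εb/2) (1/4)) (by positivity) (by
      rcases le_total (εb/2) (1/4) with h | h
      · rw [min_eq_left h]; linarith
      · rw [min_eq_right h]; linarith) (by
      rcases le_total (εb/2) (1/4) with h | h
      · rw [min_eq_left h]; linarith
      · rw [min_eq_right h]; norm_num)
    exact le_trans (abs_nonneg _) this
  set δ := min (εb/2) (1/4) with hδdef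
  have hδpos : 0 < δ := by positivity
  have hδlt : δ < 1/2 := lt_of_le_of_lt (min_le_right _ _) (by norm_num)
  have hδεb : δ < εb := lt_of_le_of_lt (min_le_left _ _) (by linarith)
  have hδI : δ ∈ Ioo (0:ℝ) 1 := ⟨hδpos, by linarith⟩
  set C₀ := auxJ v mu δ - A * Real.log δ with hC₀
  refine ⟨δ, Real.exp (C₀ - M), Real.exp (C₀ + M), ⟨hδpos, hδlt⟩,
    Real.exp_pos _, Real.exp_pos _, ?_⟩
  intro p hp
  have hpI : p ∈ Ioo (0:ℝ) 1 := ⟨hp.1, by linarith [hp.2]⟩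
  have hsubI : Icc p δ ⊆ Ioo (0:ℝ) 1 := Icc_subset_Ioo hp.1 hδI.2
  -- J δ - J p = ∫_p^δ 2μ/v
  have hint1 : IntervalIntegrable (fun z => 2 * mu z / v z) volume (1/2) δ :=
    ((contOn_muv H).mono (uIcc_sub_Ioo half_mem_Ioo hδI)).intervalIntegrable
  have hint2 : IntervalIntegrable (fun z => 2 * mu z / v z) volume (1/2) p :=
    ((contOn_muv H).mono (uIcc_sub_Ioo half_mem_Ioo hpI)).intervalIntegrable
  have hJdiff : auxJ v mu δ - auxJ v mu p = ∫ z in p..δ, 2 * mu z / v z :=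
    intervalIntegral.integral_interval_sub_left hint1 hint2
  -- split the integral
  have huIcc : uIcc p δ = Icc p δ := uIcc_of_le hp.2
  have hphi_cont : ContinuousOn (fun z => 2 * mu z / v z - A / z) (Icc p δ) := by
    refine ContinuousOn.sub ((contOn_muv H).mono hsubI) ?_
    exact continuousOn_const.div continuousOn_id (fun x hx => (lt_of_lt_of_le hp.1 hx.1).ne')
  have hAz_cont : ContinuousOn (fun z => A / z) (Icc p δ) :=
    continuousOn_const.div continuousOn_id (fun x hx => (lt_of_lt_of_le hp.1 hx.1).ne')
  have hIφ : IntervalIntegrable (fun z => 2 * mu z / v z - A / z) volume p δ := by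
    apply ContinuousOn.intervalIntegrable; rwa [huIcc]
  have hIA : IntervalIntegrable (fun z => A / z) volume p δ := by
    apply ContinuousOn.intervalIntegrable; rwa [huIcc]
  have hsplit : ∫ z in p..δ, 2 * mu z / v z
      = (∫ z in p..δ, A / z) + ∫ z in p..δ, (2 * mu z / v z - A / z) := by
    rw [← intervalIntegral.integral_add hIA hIφ]
    exact intervalIntegral.integral_congr fun z _ => by ring
  have h0notin : (0:ℝ) ∉ uIcc p δ := by
    rw [huIcc]
    exact fun hmem => absurd hmem.1 (not_le.mpr hp.1)
  have hAint : ∫ z in p..δ, A / z = A * (Real.log δ - Real.log p) := by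
    have h1 : ∫ z in p..δ, A / z = A * ∫ z in p..δ, 1 / z := by
      rw [← intervalIntegral.integral_const_mul]
      exact intervalIntegral.integral_congr fun z _ => by ring
    rw [h1, integral_one_div h0notin, Real.log_div hδpos.ne' hp.1.ne']
  have hrbound : |∫ z in p..δ, (2 * mu z / v z - A / z)| ≤ M := by
    have hb := intervalIntegral.norm_integral_le_of_norm_le_const (C := M)
      (f := fun z => 2 * mu z / v z - A / z) (a := p) (b := δ) ?_
    · rw [Real.norm_eq_abs] at hb
      refine le_trans hb ?_
      have h1 : |δ - p| ≤ 1 := by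
        rw [abs_of_nonneg (by linarith [hp.2])]
        have := hp.1
        have : δ ≤ 1/4 := min_le_right _ _
        linarith [hp.1]
      nlinarith
    · intro x hx
      rw [uIoc_of_le hp.2] at hx
      rw [Real.norm_eq_abs]
      exact hM x (lt_trans hp.1 hx.1) (lt_of_le_of_lt hx.2 hδεb)
        (by linarith [hx.2, hδlt])
  set r := ∫ z in p..δ, (2 * mu z / v z - A / z) with hr
  have hJp : auxJ v mu p = C₀ + A * Real.log p - r := by
    rw [hC₀]
    rw [hsplit, hAint] at hJdiff
    linarith
  have hexp : auxE v mu p = Real.exp (C₀ - r) * p ^ A := by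
    rw [auxE, hJp, Real.rpow_def_of_pos hp.1, ← Real.exp_add]
    congr 1
    ring
  have habs := abs_le.mp hrbound
  have hrpow : (0:ℝ) ≤ p ^ A := Real.rpow_nonneg hp.1.le A
  constructor
  · rw [hexp]
    exact mul_le_mul_of_nonneg_right (Real.exp_le_exp.mpr (by linarith)) hrpow
  · rw [hexp]
    exact mul_le_mul_of_nonneg_right (Real.exp_le_exp.mpr (by linarith)) hrpow

end EAsymp

section FBdd

variable {lam : ℝ} {v mu w0 pi : ℝ → ℝ}

/-- Case `λκ₀ = 0`: `F` is bounded below by a positive constant near 0. -/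
lemma F_bddBelow (H : ModelAssumptions lam v mu w0) (HP : StationaryDensity lam v mu w0 pi)
    (hc : lam * (∫ t in Ioo (0:ℝ) 1, w0 t * pi t) = 0) :
    ∃ δ ε : ℝ, δ ∈ Ioo (0:ℝ) (1/2) ∧ 0 < ε ∧ ∀ q ∈ Ioo (0:ℝ) δ, ε ≤ auxF v mu pi q := by
  haveI := nebot_zero
  set m := mu 0 / 2 with hm
  have hmpos : 0 < m := half_pos H.mu_zero_pos
  obtain ⟨ε₀, hε₀, hball⟩ := Metric.continuousAt_iff.mp
    (H.analyticAt_mu ⟨le_rfl, zero_le_one⟩).continuousAt m hmpos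
  have hmulow : ∀ x : ℝ, 0 < x → x < ε₀ → m < mu x := by
    intro x hx0 hxε
    have hd : dist x 0 < ε₀ := by rw [Real.dist_eq, sub_zero, abs_of_pos hx0]; exact hxε
    have := hball hd
    rw [Real.dist_eq, abs_lt] at this
    have := this.1
    rw [hm] at *
    linarith
  set δ := min (ε₀/2) (min (1/4) (m / (2*(lam+1)))) with hδdef
  have hlam1 : 0 < lam + 1 := by linarith [H.lam_nonneg]
  have hδpos : 0 < δ := by
    rw [hδdef]
    refine lt_min (by positivity) (lt_min (by norm_num) (by positivity))
  have hδε₀ : δ < ε₀ := lt_of_le_of_lt (min_le_left _ _) (by linarith)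
  have hδ14 : δ ≤ 1/4 := le_trans (min_le_right _ _) (min_le_left _ _)
  have hδm : δ ≤ m / (2*(lam+1)) := le_trans (min_le_right _ _) (min_le_right _ _)
  have hδhalf : δ < 1/2 := lt_of_le_of_lt hδ14 (by norm_num)
  have hδI : δ ∈ Ioo (0:ℝ) 1 := ⟨hδpos, by linarith⟩
  have hGP : ∀ x ∈ Ioo (0:ℝ) 1, auxG v mu pi x = -(lam * auxP pi x) := by
    intro x hx
    rw [G_eq H HP hx, hc]; ring
  have hFmono := monoOn_F H HP hc
  have hFδpos := F_pos H HP hδI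
  -- Step (4): P z ≤ F δ * E z / (2 m) for z ∈ (0, δ]
  have hPbound : ∀ z ∈ Ioo (0:ℝ) 1, z ≤ δ → auxP pi z ≤ auxF v mu pi δ * auxE v mu z / (2*m) := by
    intro z hz hzδ
    -- bound ∫_r^z pi for r ∈ (0, z)
    have hIb : ∀ r ∈ Ioo (0:ℝ) 1, r < z →
        (∫ x in r..z, pi x) ≤ auxF v mu pi δ * auxE v mu z / (2*m) := by
      intro r hr hrz
      have hIccsub : Icc r z ⊆ Ioo (0:ℝ) 1 := Icc_subset_Ioo hr.1 hz.2
      have hu : uIcc r z = Icc r z := uIcc_of_le hrz.le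
      -- FTC for E
      have hIntE : IntervalIntegrable (fun x => 2 * mu x / v x * auxE v mu x) volume r z := by
        apply ContinuousOn.intervalIntegrable
        rw [hu]
        exact (((contOn_muv H).mono hIccsub).mul ((contOn_E H).mono hIccsub))
      have hEdiff : ∫ x in r..z, 2 * mu x / v x * auxE v mu x = auxE v mu z - auxE v mu r :=
        intervalIntegral.integral_eq_sub_of_hasDerivAt
          (fun x hx => hasDerivAt_E H (hIccsub (hu ▸ hx))) hIntE
      -- pointwise: pi x ≤ (F δ / (2m)) * (2 mu x / v x * E x)
      have hpt : ∀ x ∈ Icc r z, pi x ≤ auxF v mu pi δ / (2*m) * (2 * mu x / v x * auxE v mu x) := by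
        intro x hx
        have hxI := hIccsub hx
        have hvx := H.v_pos x hxI
        have hEx := E_pos (v := v) (mu := mu) x
        have hFx := F_pos H HP hxI
        have hmux : m < mu x := hmulow x hxI.1 (by
          calc x ≤ z := hx.2
          _ ≤ δ := hzδ
          _ < ε₀ := hδε₀)
        have hFxδ : auxF v mu pi x ≤ auxF v mu pi δ :=
          hFmono hxI hδI (le_trans hx.2 hzδ)
        -- pi x = E x * F x / v x
        have hpi_eq : pi x = auxE v mu x * auxF v mu pi x / v x := by
          rw [auxF]
          field_simp
        have hRHS : auxF v mu pi δ / (2*m) * (2 * mu x / v x * auxE v mu x) * v x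
            = auxF v mu pi δ * (mu x * auxE v mu x) / m := by field_simp
        rw [hpi_eq, div_le_iff₀ hvx, hRHS, le_div_iff₀ hmpos]
        nlinarith [mul_le_mul_of_nonneg_left hFxδ hEx.le,
          mul_le_mul_of_nonneg_left hmux.le (mul_nonneg hEx.le hFδpos.le),
          hmpos.le, hFx.le]
      have hIntpi : IntervalIntegrable pi volume r z := by
        apply ContinuousOn.intervalIntegrable
        rw [hu]
        exact (contOn_pi HP).mono hIccsub
      have h1 : (∫ x in r..z, pi x)
          ≤ ∫ x in r..z, auxF v mu pi δ / (2*m) * (2 * mu x / v x * auxE v mu x) :=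
        intervalIntegral.integral_mono_on hrz.le hIntpi (hIntE.const_mul _) hpt
      rw [intervalIntegral.integral_const_mul, hEdiff] at h1
      have hEr : 0 < auxE v mu r := E_pos r
      have hFd2m : 0 ≤ auxF v mu pi δ / (2*m) := by positivity
      calc (∫ x in r..z, pi x) ≤ auxF v mu pi δ / (2*m) * (auxE v mu z - auxE v mu r) := h1
        _ ≤ auxF v mu pi δ / (2*m) * auxE v mu z := by nlinarith
        _ = auxF v mu pi δ * auxE v mu z / (2*m) := by ring
    -- pass to the limit r → 0
    have htd : Tendsto (fun r => auxP pi z - auxP pi r) (𝓝[Ioo (0:ℝ) 1] 0)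
        (𝓝 (auxP pi z)) := by
      have := (tendsto_const_nhds (x := auxP pi z)
        (f := 𝓝[Ioo (0:ℝ) 1] (0:ℝ))).sub (P_tendsto_zero HP)
      simpa using this
    refine le_of_tendsto htd ?_
    filter_upwards [self_mem_nhdsWithin, nhdsWithin_le_nhds (Iio_mem_nhds hz.1)] with r hr hrz
    rw [← intInt_pi HP hr hz hrz.le]
    exact hIb r hr hrz
  -- Step (5): F δ - F q ≤ (1/2) F δ for q ∈ (0, δ)
  refine ⟨δ, auxF v mu pi δ / 2, ⟨hδpos, hδhalf⟩, by positivity, ?_⟩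
  intro q hq
  have hqI : q ∈ Ioo (0:ℝ) 1 := ⟨hq.1, lt_trans hq.2 hδI.2⟩
  have hIccsub : Icc q δ ⊆ Ioo (0:ℝ) 1 := Icc_subset_Ioo hq.1 hδI.2
  have hu : uIcc q δ = Icc q δ := uIcc_of_le hq.2.le
  have hIntF' : IntervalIntegrable (fun x => -2 * auxG v mu pi x / auxE v mu x) volume q δ := by
    apply ContinuousOn.intervalIntegrable
    rw [hu]
    exact ((continuousOn_const.mul ((contOn_G H HP).mono hIccsub)).div
      ((contOn_E H).mono hIccsub) (fun x hx => (E_pos x).ne'))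
  have hFTC : ∫ x in q..δ, -2 * auxG v mu pi x / auxE v mu x
      = auxF v mu pi δ - auxF v mu pi q :=
    intervalIntegral.integral_eq_sub_of_hasDerivAt
      (fun x hx => hasDerivAt_F H HP (hIccsub (hu ▸ hx))) hIntF'
  have hptF : ∀ x ∈ Icc q δ, -2 * auxG v mu pi x / auxE v mu x
      ≤ lam * auxF v mu pi δ / m := by
    intro x hx
    have hxI := hIccsub hx
    have hEx := E_pos (v := v) (mu := mu) x
    rw [hGP x hxI]
    have hPx := hPbound x hxI hx.2
    have hPnn : 0 ≤ auxP pi x :=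
      MeasureTheory.setIntegral_nonneg measurableSet_Ioo fun t ht =>
        (HP.pos t ⟨ht.1, lt_trans ht.2 hxI.2⟩).le
    have h1 : -2 * -(lam * auxP pi x) / auxE v mu x = 2 * lam * auxP pi x / auxE v mu x := by
      ring
    rw [h1, div_le_iff₀ hEx]
    have h2 : 2 * lam * auxP pi x ≤ 2 * lam * (auxF v mu pi δ * auxE v mu x / (2*m)) := by
      apply mul_le_mul_of_nonneg_left hPx
      have := H.lam_nonneg; linarith
    calc 2 * lam * auxP pi x ≤ 2 * lam * (auxF v mu pi δ * auxE v mu x / (2*m)) := h2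
      _ = lam * auxF v mu pi δ / m * auxE v mu x := by field_simp
  have hmono := intervalIntegral.integral_mono_on hq.2.le hIntF'
    (intervalIntegrable_const) hptF
  rw [hFTC, intervalIntegral.integral_const, smul_eq_mul] at hmono
  -- (δ - q) * (lam F δ / m) ≤ (1/2) F δ
  have hfinal : (δ - q) * (lam * auxF v mu pi δ / m) ≤ auxF v mu pi δ / 2 := by
    have h2 : δ * (2*(lam+1)) ≤ m := by
      rw [le_div_iff₀ (by positivity)] at hδm; exact hδm
    have h1 : (δ - q) * lam ≤ m / 2 := by
      nlinarith [H.lam_nonneg, hq.1.le, hδpos.le, mul_nonneg hq.1.le H.lam_nonneg]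
    have hrw : (δ - q) * (lam * auxF v mu pi δ / m)
        = ((δ - q) * lam) * (auxF v mu pi δ / m) := by ring
    rw [hrw]
    calc ((δ - q) * lam) * (auxF v mu pi δ / m) ≤ (m/2) * (auxF v mu pi δ / m) :=
        mul_le_mul_of_nonneg_right h1 (by positivity)
      _ = auxF v mu pi δ / 2 := by field_simp
  linarith

end FBdd

section CZero

variable {lam : ℝ} {v mu w0 pi : ℝ → ℝ}

lemma bdd_of_czero_Alt1 (H : ModelAssumptions lam v mu w0)
    (HP : StationaryDensity lam v mu w0 pi)
    (hc : lam * (∫ t in Ioo (0:ℝ) 1, w0 t * pi t) = 0)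
    (hA : 2 * mu 0 / deriv v 0 < 1) :
    ∃ δ B : ℝ, δ ∈ Ioo (0:ℝ) 1 ∧ ∀ p ∈ Ioo (0:ℝ) δ, B ≤ bwdScale v mu pi p := by
  obtain ⟨δ₁, ε, hδ₁, hε, hF⟩ := F_bddBelow H HP hc
  obtain ⟨δ₂, C₁, C₂, hδ₂, hC₁, hC₂, hE⟩ := E_asymp H
  set A := 2 * mu 0 / deriv v 0 with hAdef
  have hA0 : 0 < A := div_pos (by linarith [H.mu_zero_pos]) H.deriv_v_zero_pos
  set δ := min δ₁ δ₂ / 2 with hδdef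
  have hδpos : 0 < δ := by
    rw [hδdef]; have := lt_min hδ₁.1 hδ₂.1; linarith
  have hδδ₁ : δ < δ₁ := by
    have h := min_le_left δ₁ δ₂; rw [hδdef]; linarith [hδ₁.1, lt_min hδ₁.1 hδ₂.1]
  have hδδ₂ : δ < δ₂ := by
    have h := min_le_right δ₁ δ₂; rw [hδdef]; linarith [lt_min hδ₁.1 hδ₂.1]
  have hδI : δ ∈ Ioo (0:ℝ) 1 := ⟨hδpos, by linarith [hδ₂.2]⟩
  set cf := (v (1/2 : ℝ) * pi (1/2 : ℝ))^2 with hcf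
  have hcfpos : 0 < cf := pow_pos (f_pos H HP half_mem_Ioo) 2
  set K := cf / (C₁ * ε^2) with hK
  have hKpos : 0 < K := by positivity
  refine ⟨δ, bwdScale v mu pi δ - K * δ ^ (1 - A) / (1 - A), hδI, ?_⟩
  intro p hp
  have hpI : p ∈ Ioo (0:ℝ) 1 := ⟨hp.1, lt_trans hp.2 hδI.2⟩
  have hIccsub : Icc p δ ⊆ Ioo (0:ℝ) 1 := Icc_subset_Ioo hp.1 hδI.2
  have hsub := bwdScale_sub H HP hpI hδI
  -- pointwise bound
  have hpt : ∀ x ∈ Icc p δ, bwdScaleDensity v mu pi x ≤ K * x ^ (-A) := by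
    intro x hx
    have hxI := hIccsub hx
    have hx0 : 0 < x := hxI.1
    have hEx := E_pos (v := v) (mu := mu) x
    have hFx := F_pos H HP hxI
    have hElow := (hE x ⟨hx0, le_trans hx.2 hδδ₂.le⟩).1
    have hFlow : ε ≤ auxF v mu pi x := hF x ⟨hx0, lt_of_le_of_lt hx.2 hδδ₁⟩
    rw [SD_eq2 H HP hxI, ← hcf]
    have hrp : 0 < x ^ A := Real.rpow_pos_of_pos hx0 A
    have hdenom : C₁ * x ^ A * ε^2 ≤ auxE v mu x * (auxF v mu pi x)^2 := by
      have h2 : ε^2 ≤ (auxF v mu pi x)^2 := by nlinarith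
      nlinarith
    have h3 : cf / (auxE v mu x * (auxF v mu pi x)^2) ≤ cf / (C₁ * x ^ A * ε^2) := by
      gcongr
    refine le_trans h3 (le_of_eq ?_)
    have h4 : x ^ A ≠ 0 := hrp.ne'
    have h5 : C₁ ≠ 0 := hC₁.ne'
    have h6 : ε ≠ 0 := hε.ne'
    rw [hK, Real.rpow_neg hx0.le]
    ring
  -- integrate
  have hIntSD := intInt_SD H HP hpI hδI
  have hIntrp : IntervalIntegrable (fun x => K * x ^ (-A)) volume p δ := by
    apply ContinuousOn.intervalIntegrable
    rw [uIcc_of_le hp.2.le]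
    exact continuousOn_const.mul (fun x hx =>
      ((Real.continuousAt_rpow_const x (-A) (Or.inl (lt_of_lt_of_le hp.1 hx.1).ne')).continuousWithinAt))
  have hle := intervalIntegral.integral_mono_on hp.2.le hIntSD hIntrp hpt
  have hrint : ∫ x in p..δ, x ^ (-A) = (δ ^ (-A+1) - p ^ (-A+1)) / (-A+1) :=
    integral_rpow (Or.inl (by linarith))
  rw [intervalIntegral.integral_const_mul, hrint] at hle
  have hbound : K * ((δ ^ (-A+1) - p ^ (-A+1)) / (-A+1)) ≤ K * δ ^ (1-A) / (1-A) := by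
    have h1 : (0:ℝ) ≤ p ^ (-A+1) := Real.rpow_nonneg hp.1.le _
    have h2 : (0:ℝ) < 1 - A := by linarith
    have h3 : (-A+1 : ℝ) = (1-A) := by ring
    rw [h3] at h1 ⊢
    have h5 : (δ ^ (1-A) - p ^ (1-A)) / (1-A) ≤ δ ^ (1-A) / (1-A) :=
      (div_le_div_iff_of_pos_right h2).mpr (by linarith)
    rw [mul_div_assoc]
    exact mul_le_mul_of_nonneg_left h5 hKpos.le
  linarith

lemma unbdd_of_czero_Age1 (H : ModelAssumptions lam v mu w0)
    (HP : StationaryDensity lam v mu w0 pi)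
    (hc : lam * (∫ t in Ioo (0:ℝ) 1, w0 t * pi t) = 0)
    (hA : 1 ≤ 2 * mu 0 / deriv v 0) :
    ∀ K : ℝ, ∃ δ', δ' ∈ Ioo (0:ℝ) 1 ∧ ∀ p ∈ Ioo (0:ℝ) δ', bwdScale v mu pi p ≤ K := by
  obtain ⟨δ₂, C₁, C₂, hδ₂, hC₁, hC₂, hE⟩ := E_asymp H
  set A := 2 * mu 0 / deriv v 0 with hAdef
  intro K
  have hδI : δ₂ ∈ Ioo (0:ℝ) 1 := ⟨hδ₂.1, by linarith [hδ₂.2]⟩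
  set cf := (v (1/2 : ℝ) * pi (1/2 : ℝ))^2 with hcf
  have hcfpos : 0 < cf := pow_pos (f_pos H HP half_mem_Ioo) 2
  have hFmono := monoOn_F H HP hc
  -- pointwise lower bound for SD on (0, δ₂]
  have hpt : ∀ x ∈ Ioc (0:ℝ) δ₂, (1/C₂) * x⁻¹ ≤ bwdScaleDensity v mu pi x := by
    intro x hx
    have hxI : x ∈ Ioo (0:ℝ) 1 := ⟨hx.1, lt_of_le_of_lt hx.2 hδI.2⟩
    have hEx := E_pos (v := v) (mu := mu) x
    have hFx := F_pos H HP hxI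
    have hEup := (hE x hx).2
    have hFup : auxF v mu pi x ≤ v (1/2 : ℝ) * pi (1/2 : ℝ) := by
      rw [← F_half (v := v) (mu := mu) (pi := pi)]
      exact hFmono hxI half_mem_Ioo (by linarith [hx.2, hδ₂.2])
    rw [SD_eq2 H HP hxI, ← hcf]
    have hrp : 0 < x ^ A := Real.rpow_pos_of_pos hx.1 A
    have hF2 : (auxF v mu pi x)^2 ≤ cf := by rw [hcf]; nlinarith
    have hEF : auxE v mu x * (auxF v mu pi x)^2 ≤ C₂ * x ^ A * cf :=
      mul_le_mul hEup hF2 (by positivity) (by positivity)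
    have h1 : cf / (C₂ * x ^ A * cf) ≤ cf / (auxE v mu x * (auxF v mu pi x)^2) := by
      gcongr
    refine le_trans ?_ h1
    have hxinv : cf / (C₂ * x ^ A * cf) = (1/C₂) * (x ^ A)⁻¹ := by
      field_simp
    rw [hxinv]
    have hxA : x⁻¹ ≤ (x ^ A)⁻¹ := by
      rw [← Real.rpow_neg_one x, ← Real.rpow_neg hx.1.le]
      exact Real.rpow_le_rpow_of_exponent_ge hx.1 (by linarith [hxI.2]) (by linarith)
    have : (0:ℝ) ≤ 1/C₂ := by positivity
    exact mul_le_mul_of_nonneg_left hxA this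
  set δ' := min (δ₂/2) (Real.exp (Real.log δ₂ - C₂*(bwdScale v mu pi δ₂ - K))) with hδ'
  have hδ'pos : 0 < δ' := lt_min (by linarith [hδ₂.1]) (Real.exp_pos _)
  refine ⟨δ', ⟨hδ'pos, lt_of_le_of_lt (min_le_left _ _) (by linarith [hδ₂.2])⟩, ?_⟩
  intro p hp
  have hpδ₂ : p < δ₂ := lt_of_lt_of_le hp.2 (le_trans (min_le_left _ _) (by linarith [hδ₂.1]))
  have hpI : p ∈ Ioo (0:ℝ) 1 := ⟨hp.1, lt_trans hpδ₂ hδI.2⟩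
  have hsub := bwdScale_sub H HP hpI hδI
  -- lower bound the integral
  have hIntSD := intInt_SD H HP hpI hδI
  have hIntinv : IntervalIntegrable (fun x => (1/C₂) * x⁻¹) volume p δ₂ := by
    apply ContinuousOn.intervalIntegrable
    rw [uIcc_of_le hpδ₂.le]
    exact continuousOn_const.mul
      (continuousOn_inv₀.mono (fun x hx => (lt_of_lt_of_le hp.1 hx.1).ne'))
  have hptIcc : ∀ x ∈ Icc p δ₂, (1/C₂) * x⁻¹ ≤ bwdScaleDensity v mu pi x := fun x hx =>
    hpt x ⟨lt_of_lt_of_le hp.1 hx.1, hx.2⟩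
  have hle := intervalIntegral.integral_mono_on hpδ₂.le hIntinv hIntSD hptIcc
  have hlog : ∫ x in p..δ₂, (1/C₂) * x⁻¹ = (1/C₂) * (Real.log δ₂ - Real.log p) := by
    rw [intervalIntegral.integral_const_mul]
    have h0 : (0:ℝ) ∉ uIcc p δ₂ := by
      rw [uIcc_of_le hpδ₂.le]
      exact fun hm => absurd hm.1 (not_le.mpr hp.1)
    have h2 : ∫ x in p..δ₂, x⁻¹ = Real.log δ₂ - Real.log p := by
      have h3 : ∫ x in p..δ₂, x⁻¹ = ∫ x in p..δ₂, 1/x :=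
        intervalIntegral.integral_congr fun x _ => (one_div x).symm
      rw [h3, integral_one_div h0, Real.log_div hδ₂.1.ne' hp.1.ne']
    rw [h2]
  rw [hlog] at hle
  have hlogp : Real.log p ≤ Real.log δ₂ - C₂ * (bwdScale v mu pi δ₂ - K) := by
    have h4 : Real.log p < Real.log δ' := Real.log_lt_log hp.1 hp.2
    have h6 : δ' ≤ Real.exp (Real.log δ₂ - C₂ * (bwdScale v mu pi δ₂ - K)) := min_le_right _ _
    have h5 : Real.log δ' ≤ Real.log δ₂ - C₂ * (bwdScale v mu pi δ₂ - K) := by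
      calc Real.log δ' ≤ Real.log (Real.exp (Real.log δ₂ - C₂*(bwdScale v mu pi δ₂ - K))) :=
          Real.log_le_log hδ'pos h6
        _ = _ := Real.log_exp _
    linarith
  have h7 : bwdScale v mu pi δ₂ - K ≤ (1/C₂) * (Real.log δ₂ - Real.log p) := by
    have h8 : C₂ * (bwdScale v mu pi δ₂ - K) ≤ Real.log δ₂ - Real.log p := by linarith
    have h9 : (1/C₂) * (C₂ * (bwdScale v mu pi δ₂ - K)) ≤ (1/C₂) * (Real.log δ₂ - Real.log p) :=
      mul_le_mul_of_nonneg_left h8 (by positivity)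
    have h10 : (1/C₂) * (C₂ * (bwdScale v mu pi δ₂ - K)) = bwdScale v mu pi δ₂ - K := by
      field_simp
    linarith
  linarith

end CZero

section ZeroCase

variable {lam : ℝ} {v mu w0 pi : ℝ → ℝ}

theorem stmt12_zero (H : ModelAssumptions lam v mu w0) (HP : StationaryDensity lam v mu w0 pi) :
    (∃ L : ℝ, Tendsto (bwdScale v mu pi) (𝓝[Ioo (0 : ℝ) 1] 0) (𝓝 L)) ↔
      ((∃ p ∈ Icc (0 : ℝ) 1, lam * w0 p ≠ 0) ∨ 2 * |mu 0| < |deriv v 0|) := by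
  have h0 : 0 ≤ lam * ∫ t in Ioo (0:ℝ) 1, w0 t * pi t :=
    mul_nonneg H.lam_nonneg (kappa_nonneg H HP)
  rcases h0.lt_or_eq with hpos | heq
  · constructor
    · intro _; exact Or.inl ((RHS1_iff H HP).mpr hpos)
    · intro _; exact exists_limit_of_bdd H HP (bdd_of_cpos H HP hpos)
  · have hc := heq.symm
    have hnot1 : ¬(∃ p ∈ Icc (0:ℝ) 1, lam * w0 p ≠ 0) := by
      intro h
      have := (RHS1_iff H HP).mp h
      rw [hc] at this
      exact lt_irrefl 0 this
    constructor
    · intro hlim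
      by_contra hR
      push_neg at hR
      have hA : 1 ≤ 2 * mu 0 / deriv v 0 := by
        have h2 := hR.2
        rw [abs_of_pos H.mu_zero_pos, abs_of_pos H.deriv_v_zero_pos] at h2
        rw [le_div_iff₀ H.deriv_v_zero_pos]
        linarith
      exact (no_limit_of_unbdd H HP (unbdd_of_czero_Age1 H HP hc hA)) hlim
    · intro hR
      rcases hR with h1 | h2
      · exact absurd h1 hnot1
      · have hA : 2 * mu 0 / deriv v 0 < 1 := (RHS2_iff H).mp h2
        exact exists_limit_of_bdd H HP (bdd_of_czero_Alt1 H HP hc hA)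

end ZeroCase

section Reflect

variable {lam : ℝ} {v mu w0 pi : ℝ → ℝ}

lemma refl_integral (h : ℝ → ℝ) :
    ∫ p in Ioo (0:ℝ) 1, h (1-p) = ∫ p in Ioo (0:ℝ) 1, h p := by
  have h1 : ∫ p in Ioo (0:ℝ) 1, h (1-p) = ∫ p in (0:ℝ)..1, h (1-p) := by
    rw [intervalIntegral.integral_of_le zero_le_one,
      MeasureTheory.integral_Ioc_eq_integral_Ioo]
  have h2 : ∫ p in Ioo (0:ℝ) 1, h p = ∫ p in (0:ℝ)..1, h p := by
    rw [intervalIntegral.integral_of_le zero_le_one,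
      MeasureTheory.integral_Ioc_eq_integral_Ioo]
  rw [h1, h2, intervalIntegral.integral_comp_sub_left h 1]
  norm_num

lemma refl_mem_Ioo {p : ℝ} (hp : p ∈ Ioo (0:ℝ) 1) : 1 - p ∈ Ioo (0:ℝ) 1 :=
  ⟨by linarith [hp.2], by linarith [hp.1]⟩

lemma refl_tendsto_zero_one :
    Tendsto (fun p : ℝ => 1 - p) (𝓝[Ioo (0:ℝ) 1] 0) (𝓝[Ioo (0:ℝ) 1] 1) := by
  refine tendsto_nhdsWithin_of_tendsto_nhds_of_eventually_within _ ?_ ?_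
  · have h : Tendsto (fun p : ℝ => 1 - p) (𝓝 0) (𝓝 (1 - 0)) :=
      (continuous_const.sub continuous_id).tendsto 0
    rw [sub_zero] at h
    exact h.mono_left nhdsWithin_le_nhds
  · filter_upwards [self_mem_nhdsWithin] with p hp
    exact refl_mem_Ioo hp

lemma refl_tendsto_one_zero :
    Tendsto (fun p : ℝ => 1 - p) (𝓝[Ioo (0:ℝ) 1] 1) (𝓝[Ioo (0:ℝ) 1] 0) := by
  refine tendsto_nhdsWithin_of_tendsto_nhds_of_eventually_within _ ?_ ?_
  · have h : Tendsto (fun p : ℝ => 1 - p) (𝓝 1) (𝓝 (1 - 1)) :=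
      (continuous_const.sub continuous_id).tendsto 1
    rw [sub_self] at h
    exact h.mono_left nhdsWithin_le_nhds
  · filter_upwards [self_mem_nhdsWithin] with p hp
    exact refl_mem_Ioo hp

lemma MA_reflect (H : ModelAssumptions lam v mu w0) :
    ModelAssumptions lam (fun p => v (1-p)) (fun p => -mu (1-p)) (fun p => 1 - w0 (1-p)) := by
  obtain ⟨U, hUopen, hUsub, hv, hm, hw⟩ := H.analytic
  have hr : ∀ x : ℝ, AnalyticAt ℝ (fun p : ℝ => 1 - p) x := fun x =>
    analyticAt_const.sub analyticAt_id
  refine ⟨H.lam_nonneg, ?_, ?_, ?_, ?_, ?_, ?_, ?_, ?_, ?_⟩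
  · refine ⟨(fun p : ℝ => 1 - p) ⁻¹' U, hUopen.preimage (by continuity), ?_, ?_, ?_, ?_⟩
    · intro p hp
      have h1 : (1:ℝ) - p ∈ Icc (0:ℝ) 1 := ⟨by linarith [hp.2], by linarith [hp.1]⟩
      exact hUsub h1
    · intro x hx
      exact (hv _ hx).comp (hr x)
    · intro x hx
      exact ((hm _ hx).comp (hr x)).neg
    · intro x hx
      exact analyticAt_const.sub ((hw _ hx).comp (hr x))
  · intro p hp
    have h1 : (1:ℝ) - p ∈ Icc (0:ℝ) 1 := ⟨by linarith [hp.2], by linarith [hp.1]⟩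
    have := H.w0_mem (1-p) h1
    exact ⟨by linarith [this.2], by linarith [this.1]⟩
  · show 0 < -mu (1 - 0)
    rw [sub_zero]
    linarith [H.mu_one_neg]
  · show -mu (1 - 1) < 0
    rw [sub_self]
    linarith [H.mu_zero_pos]
  · show v (1 - 0) = 0
    rw [sub_zero]; exact H.v_one
  · show v (1 - 1) = 0
    rw [sub_self]; exact H.v_zero
  · intro p hp
    exact H.v_pos (1-p) (refl_mem_Ioo hp)
  · show 0 < deriv (fun p => v (1 - p)) 0
    rw [deriv_comp_const_sub v 1 0, sub_zero]
    linarith [H.deriv_v_one_neg]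
  · show deriv (fun p => v (1 - p)) 1 < 0
    rw [deriv_comp_const_sub v 1 1, sub_self]
    linarith [H.deriv_v_zero_pos]

lemma SD_reflect (H : ModelAssumptions lam v mu w0) (HP : StationaryDensity lam v mu w0 pi) :
    StationaryDensity lam (fun p => v (1-p)) (fun p => -mu (1-p)) (fun p => 1 - w0 (1-p))
      (fun p => pi (1-p)) := by
  have hrCD : ContDiffOn ℝ 2 (fun p : ℝ => 1 - p) (Ioo (0:ℝ) 1) :=
    (contDiff_const.sub contDiff_id).contDiffOn
  have hmaps : MapsTo (fun p : ℝ => 1 - p) (Ioo (0:ℝ) 1) (Ioo (0:ℝ) 1) :=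
    fun p hp => refl_mem_Ioo hp
  -- first derivative of the reflected half-v-pi function
  have h1 : ∀ x : ℝ, deriv (fun q => 1/2 * v (1-q) * pi (1-q)) x
      = -deriv (fun r => 1/2 * v r * pi r) (1-x) :=
    fun x => deriv_comp_const_sub (fun r => 1/2 * v r * pi r) 1 x
  have h1f : (deriv (fun q => 1/2 * v (1-q) * pi (1-q)))
      = fun x => -(deriv (fun r => 1/2 * v r * pi r) (1-x)) := funext h1
  have hode2 : ∀ p : ℝ, deriv (deriv (fun q => 1/2 * v (1-q) * pi (1-q))) p
      = deriv (deriv (fun q => 1/2 * v q * pi q)) (1-p) := by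
    intro p
    rw [h1f, deriv.fun_neg]
    have h3 : deriv (fun x => deriv (fun r => 1/2 * v r * pi r) (1-x)) p
        = -deriv (deriv (fun r => 1/2 * v r * pi r)) (1-p) :=
      deriv_comp_const_sub (deriv (fun r => 1/2 * v r * pi r)) 1 p
    rw [h3, neg_neg]
  have hmp : ∀ p : ℝ, deriv (fun q => -mu (1-q) * pi (1-q)) p
      = deriv (fun q => mu q * pi q) (1-p) := by
    intro p
    have e1 : (fun q => -mu (1-q) * pi (1-q)) = fun q => -(mu (1-q) * pi (1-q)) :=
      funext fun q => by ring
    rw [e1, deriv.fun_neg]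
    have h4 : deriv (fun q => mu (1-q) * pi (1-q)) p
        = -deriv (fun r => mu r * pi r) (1-p) :=
      deriv_comp_const_sub (fun r => mu r * pi r) 1 p
    rw [h4, neg_neg]
  have hflux : ∀ p : ℝ, -mu (1-p) * pi (1-p) - deriv (fun q => 1/2 * v (1-q) * pi (1-q)) p
      = -(mu (1-p) * pi (1-p) - deriv (fun q => 1/2 * v q * pi q) (1-p)) := by
    intro p
    rw [h1 p]
    ring
  refine ⟨?_, ?_, ?_, ?_, ?_, ?_, ?_, ?_, ?_⟩
  · exact HP.contDiffOn.comp hrCD hmaps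
  · intro p hp
    exact HP.pos (1-p) (refl_mem_Ioo hp)
  · have hInt1 : IntervalIntegrable pi volume 0 1 := by
      rw [intervalIntegrable_iff_integrableOn_Ioo_of_le zero_le_one]
      exact HP.integrableOn
    have h2 := (hInt1.comp_sub_left 1).symm
    norm_num at h2
    rw [intervalIntegrable_iff_integrableOn_Ioo_of_le zero_le_one] at h2
    exact h2
  · rw [refl_integral pi]
    exact HP.total_mass
  · intro p hp
    have hode := HP.ode (1-p) (refl_mem_Ioo hp)
    show deriv (deriv fun q => 1/2 * v (1-q) * pi (1-q)) p
      - deriv (fun q => -mu (1-q) * pi (1-q)) p - lam * pi (1-p) = 0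
    rw [hode2, hmp]
    exact hode
  · show Tendsto (fun p => -mu (1-p) * pi (1-p)
        - deriv (fun q => 1/2 * v (1-q) * pi (1-q)) p) (𝓝[Ioo (0:ℝ) 1] 0)
      (𝓝 (lam * ∫ p in Ioo (0:ℝ) 1, (1 - w0 (1-p)) * pi (1-p)))
    have hcomp := (HP.bc_one.comp refl_tendsto_zero_one).neg
    rw [neg_neg] at hcomp
    have hconst : (∫ p in Ioo (0:ℝ) 1, (1 - w0 (1-p)) * pi (1-p))
        = ∫ p in Ioo (0:ℝ) 1, (1 - w0 p) * pi p :=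
      refl_integral (fun t => (1 - w0 t) * pi t)
    rw [hconst]
    refine Tendsto.congr (fun p => ?_) hcomp
    exact (hflux p).symm
  · show Tendsto (fun p => -mu (1-p) * pi (1-p)
        - deriv (fun q => 1/2 * v (1-q) * pi (1-q)) p) (𝓝[Ioo (0:ℝ) 1] 1)
      (𝓝 (-(lam * ∫ p in Ioo (0:ℝ) 1, (1 - (1 - w0 (1-p))) * pi (1-p))))
    have hcomp := (HP.bc_zero.comp refl_tendsto_one_zero).neg
    have hconst : (∫ p in Ioo (0:ℝ) 1, (1 - (1 - w0 (1-p))) * pi (1-p))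
        = ∫ p in Ioo (0:ℝ) 1, w0 p * pi p := by
      have he : (fun p => (1 - (1 - w0 (1-p))) * pi (1-p))
          = fun p => (fun t => w0 t * pi t) (1-p) := by
        funext p; show (1 - (1 - w0 (1-p))) * pi (1-p) = w0 (1-p) * pi (1-p); ring
      rw [he, refl_integral (fun t => w0 t * pi t)]
    rw [hconst]
    refine Tendsto.congr (fun p => ?_) hcomp
    exact (hflux p).symm
  · show Tendsto (fun p => v (1-p) * pi (1-p)) (𝓝[Ioo (0:ℝ) 1] 0) (𝓝 0)
    exact HP.vpi_one.comp refl_tendsto_zero_one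
  · show Tendsto (fun p => v (1-p) * pi (1-p)) (𝓝[Ioo (0:ℝ) 1] 1) (𝓝 0)
    exact HP.vpi_zero.comp refl_tendsto_one_zero

lemma bwdScale_reflect (p : ℝ) :
    bwdScale (fun q => v (1-q)) (fun q => -mu (1-q)) (fun q => pi (1-q)) p
      = -(bwdScale v mu pi (1-p)) := by
  have hdrift : ∀ z : ℝ, bwdDrift (fun q => v (1-q)) (fun q => -mu (1-q)) (fun q => pi (1-q)) z
      = -(bwdDrift v mu pi (1-z)) := by
    intro z
    show -(-mu (1-z)) + deriv (fun q => v (1-q) * pi (1-q)) z / pi (1-z)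
      = -(bwdDrift v mu pi (1-z))
    have h : deriv (fun q => v (1-q) * pi (1-q)) z = -deriv (fun r => v r * pi r) (1-z) :=
      deriv_comp_const_sub (fun r => v r * pi r) 1 z
    rw [h, bwdDrift]
    ring
  have hSD : ∀ x : ℝ,
      bwdScaleDensity (fun q => v (1-q)) (fun q => -mu (1-q)) (fun q => pi (1-q)) x
        = bwdScaleDensity v mu pi (1-x) := by
    intro x
    rw [bwdScaleDensity, bwdScaleDensity]
    congr 1
    have step1 : (∫ z in (1/2 : ℝ)..x,
        2 * bwdDrift (fun q => v (1-q)) (fun q => -mu (1-q)) (fun q => pi (1-q)) z / v (1-z))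
        = ∫ z in (1/2 : ℝ)..x, -(2 * bwdDrift v mu pi (1-z) / v (1-z)) := by
      refine intervalIntegral.integral_congr fun z _ => ?_
      rw [hdrift z]
      ring
    have step2 : (∫ z in (1/2 : ℝ)..x, -(2 * bwdDrift v mu pi (1-z) / v (1-z)))
        = -∫ z in (1/2 : ℝ)..x, 2 * bwdDrift v mu pi (1-z) / v (1-z) :=
      intervalIntegral.integral_neg
    have step3 : (∫ z in (1/2 : ℝ)..x, 2 * bwdDrift v mu pi (1-z) / v (1-z))
        = ∫ z in (1 - x)..(1 - 1/2 : ℝ), 2 * bwdDrift v mu pi z / v z :=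
      intervalIntegral.integral_comp_sub_left (fun y => 2 * bwdDrift v mu pi y / v y) 1
    have step4 : (∫ z in (1 - x)..(1 - 1/2 : ℝ), 2 * bwdDrift v mu pi z / v z)
        = ∫ z in (1 - x)..(1/2 : ℝ), 2 * bwdDrift v mu pi z / v z := by norm_num
    have step5 : (∫ z in (1 - x)..(1/2 : ℝ), 2 * bwdDrift v mu pi z / v z)
        = -∫ z in (1/2 : ℝ)..(1 - x), 2 * bwdDrift v mu pi z / v z :=
      intervalIntegral.integral_symm _ _
    rw [step1, step2, step3, step4, step5, neg_neg]
  rw [bwdScale, bwdScale]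
  rw [intervalIntegral.integral_congr (fun x _ => hSD x)]
  have step3 : (∫ x in (1/2 : ℝ)..p, bwdScaleDensity v mu pi (1-x))
      = ∫ x in (1 - p)..(1 - 1/2 : ℝ), bwdScaleDensity v mu pi x :=
    intervalIntegral.integral_comp_sub_left (bwdScaleDensity v mu pi) 1
  have step4 : (∫ x in (1 - p)..(1 - 1/2 : ℝ), bwdScaleDensity v mu pi x)
      = ∫ x in (1 - p)..(1/2 : ℝ), bwdScaleDensity v mu pi x := by norm_num
  rw [step3, step4, intervalIntegral.integral_symm]

end Reflect
/-- the backward scale function `S̃` has a finite limit at `i` if and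
only if `λ wᵢ` is not identically zero on [0,1] or `2|μ(i)| < |v'(i)|`. -/
theorem stmt_12 (lam : ℝ) (v mu w0 pi : ℝ → ℝ)
    (H : ModelAssumptions lam v mu w0)
    (HP : StationaryDensity lam v mu w0 pi)
    (i : ℝ) (wi : ℝ → ℝ)
    (hwi : (i = 0 ∧ wi = w0) ∨ (i = 1 ∧ wi = fun p => 1 - w0 p)) :
    (∃ L : ℝ, Tendsto (bwdScale v mu pi) (𝓝[Ioo (0 : ℝ) 1] i) (𝓝 L)) ↔
      ((∃ p ∈ Icc (0 : ℝ) 1, lam * wi p ≠ 0) ∨ 2 * |mu i| < |deriv v i|) := by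
  rcases hwi with ⟨hi, hw⟩ | ⟨hi, hw⟩
  · subst hi; subst hw
    exact stmt12_zero H HP
  · subst hi; subst hw
    have H' := MA_reflect H
    have HP' := SD_reflect H HP
    have hiff := stmt12_zero H' HP'
    have hL : (∃ L : ℝ, Tendsto (bwdScale v mu pi) (𝓝[Ioo (0:ℝ) 1] 1) (𝓝 L)) ↔
        (∃ L : ℝ, Tendsto (bwdScale (fun q => v (1-q)) (fun q => -mu (1-q))
          (fun q => pi (1-q))) (𝓝[Ioo (0:ℝ) 1] 0) (𝓝 L)) := by
      constructor
      · rintro ⟨L, hL⟩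
        refine ⟨-L, ?_⟩
        have h1 := (hL.comp refl_tendsto_zero_one).neg
        refine Tendsto.congr (fun p => ?_) h1
        exact (bwdScale_reflect p).symm
      · rintro ⟨L, hL⟩
        refine ⟨-L, ?_⟩
        have h2 := (hL.comp refl_tendsto_one_zero).neg
        refine Tendsto.congr (fun p => ?_) h2
        have h3 : (1:ℝ) - (1 - p) = p := by ring
        show -(bwdScale (fun q => v (1-q)) (fun q => -mu (1-q)) (fun q => pi (1-q)) (1-p))
          = bwdScale v mu pi p
        rw [bwdScale_reflect (1-p), h3, neg_neg]
    have hR1 : (∃ p ∈ Icc (0:ℝ) 1, lam * (1 - w0 (1-p)) ≠ 0) ↔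
        (∃ p ∈ Icc (0:ℝ) 1, lam * (1 - w0 p) ≠ 0) := by
      constructor
      · rintro ⟨p, hp, hne⟩
        exact ⟨1-p, ⟨by linarith [hp.2], by linarith [hp.1]⟩, hne⟩
      · rintro ⟨p, hp, hne⟩
        refine ⟨1-p, ⟨by linarith [hp.2], by linarith [hp.1]⟩, ?_⟩
        have h3 : (1:ℝ) - (1 - p) = p := by ring
        rw [h3]
        exact hne
    have hR2 : (2 * |-mu (1-(0:ℝ))| < |deriv (fun p => v (1-p)) 0|) ↔
        (2 * |mu 1| < |deriv v 1|) := by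
      rw [deriv_comp_const_sub v 1 0, sub_zero, abs_neg, abs_neg]
    exact hL.trans (hiff.trans (or_congr hR1 hR2))
end

section
/- For i ∈ {0,1}, the limit rᵢ := lim_{p→i} (m̃(p)/π(p)) · λκᵢ exists in [0,∞] and satisfies: rᵢ ∈ (0,∞) if 2|μ(i)| < |v'(i)| and λwᵢ is not identically zero on [0,1]; rᵢ = ∞ if 2|μ(i)| ≥ |v'(i)| and λwᵢ is not identically zero on [0,1]; and rᵢ = 0 if λwᵢ is identically zero on [0,1]. -/
open MeasureTheory Set Filter Topology Asymptotics

lemma lemB (v mu : ℝ → ℝ) (U : Set ℝ) (hU : IsOpen U) (h0 : (0:ℝ) ∈ U)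
    (hv : AnalyticOnNhd ℝ v U) (hmu : AnalyticOnNhd ℝ mu U)
    (hv0 : v 0 = 0) (hv' : 0 < deriv v 0) :
    ∃ δ > (0:ℝ), ∃ M : ℝ, ∀ z ∈ Ioo (0:ℝ) δ,
      (deriv v 0 / 2) * z < v z ∧
      |2 * mu z / v z - (2 * mu 0 / deriv v 0) / z| ≤ M := by
  set α : ℝ := 2 * mu 0 / deriv v 0 with hαdef
  set N : ℝ → ℝ := fun z => 2 * mu z * z - α * v z with hNdef
  set D : ℝ → ℝ := fun x => 2 * deriv mu x * x + 2 * mu x - α * deriv v x with hDdef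
  have hDa : AnalyticOnNhd ℝ D U := by
    exact (((analyticOnNhd_const.mul hmu.deriv).mul analyticOnNhd_id).add
      (analyticOnNhd_const.mul hmu)).sub (analyticOnNhd_const.mul hv.deriv)
  have hND : ∀ x ∈ U, HasDerivAt N (D x) x := by
    intro x hx
    have h1 : HasDerivAt (fun z => 2 * mu z * z) (2 * deriv mu x * x + 2 * mu x * 1) x := by
      exact (((hmu x hx).differentiableAt.hasDerivAt.const_mul 2).mul (hasDerivAt_id x))
    have h2 : HasDerivAt (fun z => α * v z) (α * deriv v x) x :=
      (hv x hx).differentiableAt.hasDerivAt.const_mul α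
    have := h1.sub h2
    exact this.congr_deriv (by simp only [hDdef, mul_one])
  have hDD : ∀ x ∈ U, HasDerivAt D (deriv D x) x := fun x hx =>
    ((hDa x hx).differentiableAt).hasDerivAt
  -- radius
  obtain ⟨ε, hε, hball⟩ := Metric.mem_nhds_iff.1 (hU.mem_nhds h0)
  set r : ℝ := ε / 2 with hrdef
  have hr : 0 < r := by positivity
  have hIccU : Icc (0:ℝ) r ⊆ U := by
    intro x hx
    apply hball
    simp only [Metric.mem_ball, Real.dist_eq]
    rw [sub_zero, abs_of_nonneg hx.1]
    linarith [hx.2]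
  obtain ⟨M₃, hM₃⟩ := (isCompact_Icc (a := (0:ℝ)) (b := r)).exists_bound_of_continuousOn
    ((hDa.deriv.continuousOn).mono hIccU)
  have hM₃0 : 0 ≤ M₃ := le_trans (norm_nonneg _) (hM₃ 0 ⟨le_refl _, le_of_lt hr⟩)
  have hα : α * deriv v 0 = 2 * mu 0 := div_mul_cancel₀ _ (ne_of_gt hv')
  have hD0 : D 0 = 0 := by simp [hDdef, hα]
  -- |D x| ≤ M₃ * x on Icc 0 r
  have hDbound : ∀ x ∈ Icc (0:ℝ) r, |D x| ≤ M₃ * x := by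
    intro x hx
    have := norm_image_sub_le_of_norm_deriv_le_segment'
      (f := D) (f' := deriv D) (a := (0:ℝ)) (b := r)
      (fun y hy => (hDD y (hIccU hy)).hasDerivWithinAt)
      (fun y hy => hM₃ y (Ico_subset_Icc_self hy)) x hx
    rw [hD0, sub_zero, sub_zero] at this
    simpa using this
  -- |N z| ≤ M₃ * z^2 on Icc 0 r
  have hN0 : N 0 = 0 := by simp [hNdef, hv0]
  have hNbound : ∀ z ∈ Icc (0:ℝ) r, |N z| ≤ M₃ * z * z := by
    intro z hz
    have key := norm_image_sub_le_of_norm_deriv_le_segment'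
      (f := N) (f' := D) (a := (0:ℝ)) (b := z) (C := M₃ * z)
      (fun y hy => (hND y (hIccU ⟨hy.1, le_trans hy.2 hz.2⟩)).hasDerivWithinAt)
      (fun y hy => by
        have h1 := hDbound y ⟨hy.1, le_trans (le_of_lt hy.2) hz.2⟩
        have : M₃ * y ≤ M₃ * z := by nlinarith [hy.1, hy.2.le]
        calc ‖D y‖ = |D y| := rfl
          _ ≤ M₃ * y := h1
          _ ≤ M₃ * z := this) z ⟨hz.1, le_refl _⟩
    rw [hN0, sub_zero, sub_zero] at key
    simpa using key
  -- slope bound near 0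
  have hslope : Tendsto (fun z => v z / z) (𝓝[≠] (0:ℝ)) (𝓝 (deriv v 0)) := by
    have h := hasDerivAt_iff_tendsto_slope.1 ((hv 0 h0).differentiableAt).hasDerivAt
    refine Tendsto.congr' ?_ h
    filter_upwards [self_mem_nhdsWithin] with z hz
    simp [slope_def_field, hv0, zero_sub, neg_div_neg_eq]
  have hev : ∀ᶠ z in 𝓝[≠] (0:ℝ), deriv v 0 / 2 < v z / z :=
    hslope.eventually_const_lt (by linarith)
  rw [eventually_nhdsWithin_iff] at hev
  obtain ⟨δ₂, hδ₂, hδ₂'⟩ := Metric.eventually_nhds_iff.1 hev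
  refine ⟨min r δ₂, lt_min hr hδ₂, M₃ / (deriv v 0 / 2), ?_⟩
  intro z hz
  have hz0 : 0 < z := hz.1
  have hzr : z ≤ r := le_of_lt (lt_of_lt_of_le hz.2 (min_le_left _ _))
  have hzδ : z < δ₂ := lt_of_lt_of_le hz.2 (min_le_right _ _)
  have hslopez : deriv v 0 / 2 < v z / z := by
    refine hδ₂' ?_ ?_
    · simp only [Real.dist_eq, sub_zero, abs_of_pos hz0]
      exact hzδ
    · simp [ne_of_gt hz0]
  have hvz : (deriv v 0 / 2) * z < v z := (lt_div_iff₀ hz0).1 hslopez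
  refine ⟨hvz, ?_⟩
  have hvpos : 0 < v z := lt_trans (by positivity) hvz
  have hNz : |N z| ≤ M₃ * z * z := hNbound z ⟨hz0.le, hzr⟩
  have hvne : v z ≠ 0 := ne_of_gt hvpos
  have hzne : z ≠ 0 := ne_of_gt hz0
  have key : 2 * mu z / v z - α / z = N z / (z * v z) := by
    simp only [hNdef]
    field_simp
  rw [key, abs_div, abs_of_pos (by positivity : (0:ℝ) < z * v z)]
  have h1 : (deriv v 0 / 2) * z * z ≤ z * v z := by nlinarith
  calc |N z| / (z * v z) ≤ (M₃ * z * z) / ((deriv v 0 / 2) * z * z) :=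
        div_le_div₀ (by positivity) hNz (by positivity) h1
    _ = M₃ / (deriv v 0 / 2) := by
        rw [mul_div_mul_right _ _ hzne, mul_div_mul_right _ _ hzne]


lemma master (g F h : ℝ → ℝ) (α M δ₀ K : ℝ)
    (hg : ContinuousOn g (Ioo 0 1))
    (hδ₀ : 0 < δ₀) (hδ₀1 : δ₀ < 1)
    (hbound : ∀ z ∈ Ioo (0:ℝ) δ₀, |g z - α / z| ≤ M)
    (hF : ContinuousOn F (Ioo 0 1))
    (hFlim : Tendsto F (𝓝[Ioo (0:ℝ) 1] 0) (𝓝 K)) (hK : 0 < K)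
    (hpos : ∀ p ∈ Ioo (0:ℝ) 1, 0 < h p)
    (hh : ∀ p ∈ Ioo (0:ℝ) 1, HasDerivAt h
      (-2 * Real.exp (-∫ z in (1/2:ℝ)..p, g z) * F p) p) :
    (α < 1 → ∃ L, 0 < L ∧ Tendsto h (𝓝[Ioo (0:ℝ) 1] 0) (𝓝 L)) ∧
    (1 ≤ α → Tendsto h (𝓝[Ioo (0:ℝ) 1] 0) atTop) := by
  have hM0 : 0 ≤ M :=
    le_trans (abs_nonneg _) (hbound (δ₀/2) ⟨by positivity, by linarith⟩)
  set Sf : ℝ → ℝ := fun p => Real.exp (-∫ z in (1/2:ℝ)..p, g z) with hSfdef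
  have hSfpos : ∀ p, 0 < Sf p := fun p => Real.exp_pos _
  have hhalf : (1/2:ℝ) ∈ Ioo (0:ℝ) 1 := by norm_num
  have hii : ∀ a ∈ Ioo (0:ℝ) 1, ∀ b ∈ Ioo (0:ℝ) 1, IntervalIntegrable g volume a b :=
    fun a ha b hb => (hg.mono (Set.ordConnected_Ioo.uIcc_subset ha hb)).intervalIntegrable
  have hI : ∀ p ∈ Ioo (0:ℝ) 1, HasDerivAt (fun u => ∫ z in (1/2:ℝ)..u, g z) (g p) p :=
    fun p hp => intervalIntegral.integral_hasDerivAt_right (hii _ hhalf _ hp)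
      ((hg.stronglyMeasurableAtFilter isOpen_Ioo) p hp)
      (hg.continuousAt (isOpen_Ioo.mem_nhds hp))
  have hSfd : ∀ p ∈ Ioo (0:ℝ) 1, HasDerivAt Sf (Real.exp (-∫ z in (1/2:ℝ)..p, g z) * -g p) p :=
    fun p hp => ((hI p hp).neg).exp
  have hSfc : ContinuousOn Sf (Ioo (0:ℝ) 1) :=
    fun p hp => ((hSfd p hp).continuousAt).continuousWithinAt
  set ψ : ℝ → ℝ := fun z => 2 * Sf z * F z with hψdef
  have hψc : ContinuousOn ψ (Ioo (0:ℝ) 1) := (continuousOn_const.mul hSfc).mul hF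
  have hψii : ∀ a ∈ Ioo (0:ℝ) 1, ∀ b ∈ Ioo (0:ℝ) 1, IntervalIntegrable ψ volume a b :=
    fun a ha b hb => (hψc.mono (Set.ordConnected_Ioo.uIcc_subset ha hb)).intervalIntegrable
  have hkey : ∀ p ∈ Ioo (0:ℝ) 1, ∀ d ∈ Ioo (0:ℝ) 1, h p = h d + ∫ z in p..d, ψ z := by
    intro p hp d hd
    have h2 : ∫ z in p..d, (-ψ z) = h d - h p := by
      refine intervalIntegral.integral_eq_sub_of_hasDerivAt (fun x hx => ?_) ?_
      · have := hh x (Set.ordConnected_Ioo.uIcc_subset hp hd hx)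
        exact this.congr_deriv (by simp only [hψdef]; ring)
      · exact ((hψii _ hp _ hd).neg)
    rw [intervalIntegral.integral_neg] at h2
    linarith
  -- choose δ
  obtain ⟨δ₁, hδ₁, hFδ⟩ := Metric.tendsto_nhdsWithin_nhds.1 hFlim (K/2) (by linarith)
  have hminpos : 0 < min δ₀ δ₁ := lt_min hδ₀ hδ₁
  set δ : ℝ := min δ₀ δ₁ / 2 with hδdef
  have hδpos : 0 < δ := by positivity
  have hδδ₀ : δ < δ₀ := by
    have : min δ₀ δ₁ ≤ δ₀ := min_le_left _ _
    simp only [hδdef]; linarith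
  have hδδ₁ : δ < δ₁ := by
    have : min δ₀ δ₁ ≤ δ₁ := min_le_right _ _
    simp only [hδdef]; linarith
  have hδmem : δ ∈ Ioo (0:ℝ) 1 := ⟨hδpos, by linarith⟩
  have hsubδ : Ioc (0:ℝ) δ ⊆ Ioo (0:ℝ) 1 :=
    fun z hz => ⟨hz.1, lt_of_le_of_lt hz.2 hδmem.2⟩
  have hFK : ∀ z ∈ Ioc (0:ℝ) δ, K/2 ≤ F z ∧ F z ≤ 2*K := by
    intro z hz
    have hd := hFδ (hsubδ hz) (by
      rw [Real.dist_eq, sub_zero, abs_of_pos hz.1]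
      exact lt_of_le_of_lt hz.2 hδδ₁)
    rw [Real.dist_eq, abs_lt] at hd
    constructor <;> linarith [hd.1, hd.2]
  have hSfsplit : ∀ p ∈ Ioo (0:ℝ) 1, Sf p = Sf δ * Real.exp (∫ z in p..δ, g z) := by
    intro p hp
    have hadd := intervalIntegral.integral_add_adjacent_intervals
      (hii _ hhalf _ hδmem) (hii _ hδmem _ hp)
    have hsymm := intervalIntegral.integral_symm p δ (f := g) (μ := volume)
    simp only [hSfdef]
    rw [← Real.exp_add]
    congr 1
    linarith
  -- bounds on Sf
  have hlogint : ∀ p ∈ Ioc (0:ℝ) δ, (∫ z in p..δ, α / z) = α * (Real.log δ - Real.log p) := by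
    intro p hp
    have h0 : (0:ℝ) ∉ uIcc p δ := notMem_uIcc_of_lt hp.1 hδpos
    simp_rw [div_eq_mul_inv]
    rw [intervalIntegral.integral_const_mul, integral_inv h0,
      Real.log_div (ne_of_gt hδpos) (ne_of_gt hp.1)]
  have hinvii : ∀ p ∈ Ioc (0:ℝ) δ, IntervalIntegrable (fun z => α / z) volume p δ := by
    intro p hp
    refine (ContinuousOn.div continuousOn_const continuousOn_id ?_).intervalIntegrable
    intro z hz
    rw [uIcc_of_le hp.2] at hz
    exact ne_of_gt (lt_of_lt_of_le hp.1 hz.1)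
  have hintbound : ∀ p ∈ Ioc (0:ℝ) δ,
      |(∫ z in p..δ, g z) - α * (Real.log δ - Real.log p)| ≤ M := by
    intro p hp
    have hsub : (∫ z in p..δ, g z) - α * (Real.log δ - Real.log p)
        = ∫ z in p..δ, (g z - α / z) := by
      rw [intervalIntegral.integral_sub (hii _ (hsubδ hp) _ hδmem) (hinvii p hp), hlogint p hp]
    rw [hsub]
    have hb := intervalIntegral.norm_integral_le_of_norm_le_const (C := M)
      (f := fun z => g z - α / z) (a := p) (b := δ) ?_
    · calc |∫ z in p..δ, (g z - α / z)| ≤ M * |δ - p| := hb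
        _ ≤ M * 1 := by
            apply mul_le_mul_of_nonneg_left _ hM0
            rw [abs_of_nonneg (by linarith [hp.2] : (0:ℝ) ≤ δ - p)]
            linarith [hp.1, hδmem.2]
        _ = M := mul_one M
    · intro x hx
      rw [uIoc_of_le hp.2] at hx
      exact hbound x ⟨lt_trans hp.1 hx.1, lt_of_le_of_lt hx.2 hδδ₀⟩
  set c₁ : ℝ := Sf δ * Real.exp (-M) * δ ^ α with hc₁def
  set c₂ : ℝ := Sf δ * Real.exp M * δ ^ α with hc₂def
  have hc₁pos : 0 < c₁ := by
    have := hSfpos δ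
    have := Real.exp_pos (-M)
    have := Real.rpow_pos_of_pos hδpos α
    positivity
  have hc₂pos : 0 < c₂ := by
    have := hSfpos δ
    have := Real.exp_pos M
    have := Real.rpow_pos_of_pos hδpos α
    positivity
  have hSfbounds : ∀ p ∈ Ioc (0:ℝ) δ,
      c₁ * p ^ (-α) ≤ Sf p ∧ Sf p ≤ c₂ * p ^ (-α) := by
    intro p hp
    have hrw : Sf p = Sf δ * Real.exp (∫ z in p..δ, g z) := hSfsplit p (hsubδ hp)
    have hb := hintbound p hp
    rw [abs_le] at hb
    have hexp : δ ^ α * p ^ (-α) = Real.exp (α * (Real.log δ - Real.log p)) := by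
      rw [Real.rpow_def_of_pos hδpos, Real.rpow_def_of_pos hp.1, ← Real.exp_add]
      ring_nf
    have hSfδpos := hSfpos δ
    constructor
    · have h5 : Real.exp (-M) * Real.exp (α * (Real.log δ - Real.log p))
          ≤ Real.exp (∫ z in p..δ, g z) := by
        rw [← Real.exp_add]
        exact Real.exp_le_exp.2 (by linarith [hb.1])
      calc c₁ * p ^ (-α) = Sf δ * (Real.exp (-M) * (δ ^ α * p ^ (-α))) := by
            simp only [hc₁def]; ring
        _ = Sf δ * (Real.exp (-M) * Real.exp (α * (Real.log δ - Real.log p))) := by rw [hexp]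
        _ ≤ Sf δ * Real.exp (∫ z in p..δ, g z) :=
            mul_le_mul_of_nonneg_left h5 hSfδpos.le
        _ = Sf p := hrw.symm
    · have h5 : Real.exp (∫ z in p..δ, g z)
          ≤ Real.exp M * Real.exp (α * (Real.log δ - Real.log p)) := by
        rw [← Real.exp_add]
        exact Real.exp_le_exp.2 (by linarith [hb.2])
      calc Sf p = Sf δ * Real.exp (∫ z in p..δ, g z) := hrw
        _ ≤ Sf δ * (Real.exp M * Real.exp (α * (Real.log δ - Real.log p))) :=
            mul_le_mul_of_nonneg_left h5 hSfδpos.le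
        _ = Sf δ * (Real.exp M * (δ ^ α * p ^ (-α))) := by rw [hexp]
        _ = c₂ * p ^ (-α) := by simp only [hc₂def]; ring
  haveI hne : (𝓝[Ioo (0:ℝ) 1] (0:ℝ)).NeBot := by
    refine mem_closure_iff_nhdsWithin_neBot.1 ?_
    rw [closure_Ioo (by norm_num : (0:ℝ) ≠ 1)]
    exact ⟨le_refl 0, by norm_num⟩
  have hevδ : ∀ᶠ p in 𝓝[Ioo (0:ℝ) 1] 0, p ∈ Ioo (0:ℝ) δ := by
    filter_upwards [self_mem_nhdsWithin,
      mem_nhdsWithin_of_mem_nhds (Ioo_mem_nhds (by linarith : -δ < 0) hδpos)] with p hp1 hp2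
    exact ⟨hp1.1, hp2.2⟩
  constructor
  · -- finite case
    intro hα1
    set G : ℝ → ℝ := fun z => (4 * K * c₂) * z ^ (-α) with hGdef
    have hGint : IntervalIntegrable G volume 0 δ :=
      (intervalIntegral.intervalIntegrable_rpow' (by linarith : (-1:ℝ) < -α)).const_mul _
    have hψbound : ∀ z ∈ Ioc (0:ℝ) δ, ‖ψ z‖ ≤ G z := by
      intro z hz
      have h1 := (hSfbounds z hz).2
      have h2 := hFK z hz
      have hSfz := hSfpos z
      have hFz : 0 < F z := lt_of_lt_of_le (by linarith) h2.1
      have hψpos : 0 < ψ z := by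
        simp only [hψdef]; positivity
      have hrp : (0:ℝ) < z ^ (-α) := Real.rpow_pos_of_pos hz.1 _
      rw [Real.norm_eq_abs, abs_of_pos hψpos]
      simp only [hψdef, hGdef]
      nlinarith [h2.1, h2.2]
    have hψint : IntervalIntegrable ψ volume 0 δ := by
      rw [intervalIntegrable_iff_integrableOn_Ioc_of_le hδpos.le]
      refine Integrable.mono'
        ((intervalIntegrable_iff_integrableOn_Ioc_of_le hδpos.le).1 hGint)
        ((hψc.mono hsubδ).aestronglyMeasurable measurableSet_Ioc) ?_
      exact ae_restrict_of_forall_mem measurableSet_Ioc hψbound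
    set L : ℝ := h δ + ∫ z in (0:ℝ)..δ, ψ z with hLdef
    have hrep : ∀ p ∈ Ioo (0:ℝ) δ, h p = L - ∫ z in (0:ℝ)..p, ψ z := by
      intro p hp
      have hpI : p ∈ Ioo (0:ℝ) 1 := hsubδ ⟨hp.1, hp.2.le⟩
      have h1 := hkey p hpI δ hδmem
      have hψ0p : IntervalIntegrable ψ volume 0 p := by
        refine hψint.mono_set ?_
        rw [uIcc_of_le hδpos.le, uIcc_of_le hp.1.le]
        exact Icc_subset_Icc (le_refl _) hp.2.le
      have hψpδ : IntervalIntegrable ψ volume p δ := by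
        refine hψint.mono_set ?_
        rw [uIcc_of_le hδpos.le, uIcc_of_le hp.2.le]
        exact Icc_subset_Icc hp.1.le (le_refl _)
      have hadd := intervalIntegral.integral_add_adjacent_intervals hψ0p hψpδ
      simp only [hLdef]
      linarith
    have hz : Tendsto (fun p => ∫ z in (0:ℝ)..p, ψ z) (𝓝[Ioo (0:ℝ) 1] 0) (𝓝 0) := by
      have hGval : ∀ p ∈ Ioo (0:ℝ) δ, |∫ z in (0:ℝ)..p, G z|
          = (4 * K * c₂) * (p ^ (-α + 1) / (-α + 1)) := by
        intro p hp
        have : (∫ z in (0:ℝ)..p, G z) = (4 * K * c₂) * ((p ^ (-α + 1) - 0 ^ (-α + 1)) / (-α + 1)) := by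
          simp only [hGdef]
          rw [intervalIntegral.integral_const_mul, integral_rpow (Or.inl (by linarith))]
        rw [this, Real.zero_rpow (by intro hcon; linarith : -α + 1 ≠ 0), sub_zero]
        refine abs_of_nonneg ?_
        have h1 : (0:ℝ) ≤ p ^ (-α + 1) := (Real.rpow_pos_of_pos hp.1 _).le
        have h2 : (0:ℝ) < -α + 1 := by linarith
        positivity
      refine squeeze_zero_norm'
        (a := fun p => (4 * K * c₂ / (-α + 1)) * p ^ (-α + 1)) ?_ ?_
      · filter_upwards [hevδ] with p hp
        have hb := intervalIntegral.norm_integral_le_abs_of_norm_le (μ := volume)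
          (f := ψ) (g := G) (a := 0) (b := p) ?_ ?_
        · calc ‖∫ z in (0:ℝ)..p, ψ z‖ ≤ |∫ z in (0:ℝ)..p, G z| := hb
            _ = (4 * K * c₂) * (p ^ (-α + 1) / (-α + 1)) := hGval p hp
            _ = (4 * K * c₂ / (-α + 1)) * p ^ (-α + 1) := by ring
        · rw [uIoc_of_le hp.1.le]
          refine ae_restrict_of_forall_mem measurableSet_Ioc ?_
          intro z hz
          exact hψbound z ⟨hz.1, hz.2.trans hp.2.le⟩
        · refine hGint.mono_set ?_
          rw [uIcc_of_le hδpos.le, uIcc_of_le hp.1.le]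
          exact Icc_subset_Icc (le_refl _) hp.2.le
      · have hc : ContinuousAt (fun x : ℝ => x ^ (-α + 1)) 0 :=
          Real.continuousAt_rpow_const 0 _ (Or.inr (by linarith))
        have h0 : (fun x : ℝ => x ^ (-α + 1)) 0 = 0 := Real.zero_rpow (by intro hcon; linarith)
        have := (hc.tendsto.mono_left (nhdsWithin_le_nhds (s := Ioo (0:ℝ) 1))).const_mul
          (4 * K * c₂ / (-α + 1))
        simp only [h0, mul_zero] at this
        exact this
    have htend : Tendsto h (𝓝[Ioo (0:ℝ) 1] 0) (𝓝 L) := by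
      have h1 : Tendsto (fun p => L - ∫ z in (0:ℝ)..p, ψ z) (𝓝[Ioo (0:ℝ) 1] 0) (𝓝 (L - 0)) :=
        tendsto_const_nhds.sub hz
      rw [sub_zero] at h1
      refine h1.congr' ?_
      filter_upwards [hevδ] with p hp
      exact (hrep p hp).symm
    refine ⟨L, ?_, htend⟩
    have hLge : h δ ≤ L := by
      refine ge_of_tendsto htend ?_
      filter_upwards [hevδ] with p hp
      have hpI : p ∈ Ioo (0:ℝ) 1 := hsubδ ⟨hp.1, hp.2.le⟩
      have h1 := hkey p hpI δ hδmem
      have h2 : 0 ≤ ∫ z in p..δ, ψ z := by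
        refine intervalIntegral.integral_nonneg hp.2.le ?_
        intro u hu
        have huI : u ∈ Ioc (0:ℝ) δ := ⟨lt_of_lt_of_le hp.1 hu.1, hu.2⟩
        have hFu := (hFK u huI).1
        have hSfu := hSfpos u
        simp only [hψdef]
        nlinarith
      linarith
    exact lt_of_lt_of_le (hpos δ hδmem) hLge
  · -- infinite case
    intro hα1
    set c₃ : ℝ := K * c₁ with hc₃def
    have hc₃pos : 0 < c₃ := by positivity
    have hψlow : ∀ z ∈ Ioc (0:ℝ) δ, c₃ * z⁻¹ ≤ ψ z := by
      intro z hz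
      have h1 := (hSfbounds z hz).1
      have h2 := (hFK z hz).1
      have hz1 : z ≤ 1 := le_trans hz.2 (by linarith [hδmem.2])
      have hrpow : z ^ (-(1:ℝ)) ≤ z ^ (-α) :=
        Real.rpow_le_rpow_of_exponent_ge hz.1 hz1 (by linarith)
      rw [Real.rpow_neg_one] at hrpow
      have hSfz := hSfpos z
      have hrp : (0:ℝ) < z ^ (-α) := Real.rpow_pos_of_pos hz.1 _
      have hinv : (0:ℝ) < z⁻¹ := inv_pos.2 hz.1
      simp only [hψdef, hc₃def]
      nlinarith [mul_le_mul_of_nonneg_left hrpow (mul_pos hK hc₁pos).le,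
        mul_le_mul_of_nonneg_right h1 (by linarith : (0:ℝ) ≤ K/2),
        mul_le_mul_of_nonneg_left h2 (mul_pos (by linarith : (0:ℝ) < 2) hSfz).le]
    have hlow : ∀ p ∈ Ioo (0:ℝ) δ,
        h δ + c₃ * (Real.log δ - Real.log p) ≤ h p := by
      intro p hp
      have hpI : p ∈ Ioo (0:ℝ) 1 := hsubδ ⟨hp.1, hp.2.le⟩
      have h1 := hkey p hpI δ hδmem
      have hintc₃ : IntervalIntegrable (fun z => c₃ * z⁻¹) volume p δ := by
        refine (continuousOn_const.mul (ContinuousOn.inv₀ continuousOn_id ?_)).intervalIntegrable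
        intro z hzz
        rw [uIcc_of_le hp.2.le] at hzz
        exact ne_of_gt (lt_of_lt_of_le hp.1 hzz.1)
      have hmono := intervalIntegral.integral_mono_on (μ := volume) hp.2.le hintc₃
        (hψii p hpI δ hδmem) (fun u hu => hψlow u ⟨lt_of_lt_of_le hp.1 hu.1, hu.2⟩)
      have hval : (∫ z in p..δ, c₃ * z⁻¹) = c₃ * (Real.log δ - Real.log p) := by
        rw [intervalIntegral.integral_const_mul, integral_inv (notMem_uIcc_of_lt hp.1 hδpos),
          Real.log_div (ne_of_gt hδpos) (ne_of_gt hp.1)]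
      rw [hval] at hmono
      linarith
    have hlog : Tendsto Real.log (𝓝[Ioo (0:ℝ) 1] 0) atBot :=
      Real.tendsto_log_nhdsGT_zero.mono_left
        (nhdsWithin_mono _ (fun x hx => hx.1))
    have h2 : Tendsto (fun p => -Real.log p) (𝓝[Ioo (0:ℝ) 1] 0) atTop :=
      tendsto_neg_atBot_atTop.comp hlog
    have h3 : Tendsto (fun p => c₃ * -Real.log p) (𝓝[Ioo (0:ℝ) 1] 0) atTop :=
      h2.const_mul_atTop hc₃pos
    have h4 := tendsto_atTop_add_const_left _ (h δ + c₃ * Real.log δ) h3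
    refine tendsto_atTop_mono' _ ?_ h4
    filter_upwards [hevδ] with p hp
    calc h δ + c₃ * Real.log δ + c₃ * -Real.log p
        = h δ + c₃ * (Real.log δ - Real.log p) := by ring
      _ ≤ h p := hlow p hp


lemma wipi_integrable (wi pi : ℝ → ℝ)
    (hw_cont : ContinuousOn wi (Icc 0 1))
    (hπc : ContinuousOn pi (Ioo (0:ℝ) 1))
    (hπpos : ∀ p ∈ Ioo (0:ℝ) 1, 0 < pi p)
    (hπint : IntegrableOn pi (Ioo (0:ℝ) 1)) :
    IntegrableOn (fun q => wi q * pi q) (Ioo (0:ℝ) 1) := by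
  obtain ⟨B, hB⟩ := (isCompact_Icc (a := (0:ℝ)) (b := 1)).exists_bound_of_continuousOn hw_cont
  refine Integrable.mono' (hπint.const_mul B)
    (((hw_cont.mono Ioo_subset_Icc_self).mul hπc).aestronglyMeasurable measurableSet_Ioo) ?_
  refine ae_restrict_of_forall_mem measurableSet_Ioo ?_
  intro q hq
  have h1 := hB q (Ioo_subset_Icc_self hq)
  have h2 := hπpos q hq
  have h3 : ‖wi q * pi q‖ = |wi q| * pi q := by
    rw [norm_mul, Real.norm_eq_abs, Real.norm_eq_abs, abs_of_pos h2]
  rw [h3]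
  exact mul_le_mul_of_nonneg_right (by simpa using h1) h2.le

lemma kappa_pos (wi pi : ℝ → ℝ)
    (hw_cont : ContinuousOn wi (Icc 0 1))
    (hw_nonneg : ∀ p ∈ Icc (0:ℝ) 1, 0 ≤ wi p)
    (hπc : ContinuousOn pi (Ioo (0:ℝ) 1))
    (hπpos : ∀ p ∈ Ioo (0:ℝ) 1, 0 < pi p)
    (hπint : IntegrableOn pi (Ioo (0:ℝ) 1))
    (hex : ∃ p ∈ Icc (0:ℝ) 1, wi p ≠ 0) :
    0 < ∫ q in Ioo (0:ℝ) 1, wi q * pi q := by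
  obtain ⟨p₀, hp₀, hw0⟩ := hex
  have hw0' : 0 < wi p₀ := lt_of_le_of_ne (hw_nonneg p₀ hp₀) (Ne.symm hw0)
  have hev : ∀ᶠ q in 𝓝[Icc (0:ℝ) 1] p₀, 0 < wi q :=
    Filter.Tendsto.eventually_const_lt hw0' (hw_cont p₀ hp₀)
  rw [eventually_nhdsWithin_iff] at hev
  obtain ⟨ε, hε, hball⟩ := Metric.eventually_nhds_iff.1 hev
  rw [setIntegral_pos_iff_support_of_nonneg_ae ?nonneg
    (wipi_integrable wi pi hw_cont hπc hπpos hπint)]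
  case nonneg =>
    refine ae_restrict_of_forall_mem measurableSet_Ioo ?_
    intro q hq
    exact mul_nonneg (hw_nonneg q (Ioo_subset_Icc_self hq)) (hπpos q hq).le
  have hTopen : IsOpen (Ioo (0:ℝ) 1 ∩ Metric.ball p₀ ε) := isOpen_Ioo.inter Metric.isOpen_ball
  have hTne : (Ioo (0:ℝ) 1 ∩ Metric.ball p₀ ε).Nonempty := by
    have hcl : p₀ ∈ closure (Ioo (0:ℝ) 1) := by
      rw [closure_Ioo (by norm_num : (0:ℝ) ≠ 1)]; exact hp₀
    obtain ⟨q, hq1, hq2⟩ := mem_closure_iff.1 hcl _ Metric.isOpen_ball (Metric.mem_ball_self hε)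
    exact ⟨q, hq2, hq1⟩
  refine lt_of_lt_of_le (hTopen.measure_pos volume hTne) (measure_mono ?_)
  intro q hq
  refine ⟨?_, hq.1⟩
  have hq1 : 0 < wi q := hball (Metric.mem_ball.1 hq.2) (Ioo_subset_Icc_self hq.1)
  exact ne_of_gt (mul_pos hq1 (hπpos q hq.1))

/-- the jump rate constant `rᵢ = lim_{p→i} (m̃(p)/π(p))·λκᵢ` exists in
`[0,∞]`: it is a finite positive real if `2|μ(i)| < |v'(i)|` and `λwᵢ ≢ 0`; it is `∞`
(the limit is `atTop`) if `2|μ(i)| ≥ |v'(i)|` and `λwᵢ ≢ 0`; and it is `0` if `λwᵢ ≡ 0`. -/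
theorem stmt_14 (lam : ℝ) (v mu w0 pi : ℝ → ℝ)
    (H : ModelAssumptions lam v mu w0)
    (HP : StationaryDensity lam v mu w0 pi)
    (i : ℝ) (wi : ℝ → ℝ)
    (hwi : (i = 0 ∧ wi = w0) ∨ (i = 1 ∧ wi = fun p => 1 - w0 p)) :
    (2 * |mu i| < |deriv v i| → (∃ p ∈ Icc (0 : ℝ) 1, lam * wi p ≠ 0) →
      ∃ r : ℝ, 0 < r ∧
        Tendsto (fun p => bwdSpeedDensity v mu pi p / pi p
            * (lam * ∫ q in Ioo (0 : ℝ) 1, wi q * pi q))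
          (𝓝[Ioo (0 : ℝ) 1] i) (𝓝 r)) ∧
    (2 * |mu i| ≥ |deriv v i| → (∃ p ∈ Icc (0 : ℝ) 1, lam * wi p ≠ 0) →
      Tendsto (fun p => bwdSpeedDensity v mu pi p / pi p
          * (lam * ∫ q in Ioo (0 : ℝ) 1, wi q * pi q))
        (𝓝[Ioo (0 : ℝ) 1] i) atTop) ∧
    ((∀ p ∈ Icc (0 : ℝ) 1, lam * wi p = 0) →
      Tendsto (fun p => bwdSpeedDensity v mu pi p / pi p
          * (lam * ∫ q in Ioo (0 : ℝ) 1, wi q * pi q))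
        (𝓝[Ioo (0 : ℝ) 1] i) (𝓝 0)) := by

  obtain ⟨U, hUopen, hUicc, hva, hmua, hw0a⟩ := H.analytic
  have hIooU : Ioo (0:ℝ) 1 ⊆ U := fun p hp => hUicc (Ioo_subset_Icc_self hp)
  have hhalf : (1/2:ℝ) ∈ Ioo (0:ℝ) 1 := by norm_num
  have hπc : ContinuousOn pi (Ioo (0:ℝ) 1) := HP.contDiffOn.continuousOn
  have hvC : ContDiffOn ℝ 2 v (Ioo (0:ℝ) 1) :=
    (hva.contDiffOn_of_completeSpace).mono hIooU
  set P : ℝ → ℝ := fun q => v q * pi q with hPdef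
  have hP2 : ContDiffOn ℝ 2 P (Ioo (0:ℝ) 1) := hvC.mul HP.contDiffOn
  have hPdiff : ∀ p ∈ Ioo (0:ℝ) 1, DifferentiableAt ℝ P p := fun p hp =>
    (hP2.contDiffAt (isOpen_Ioo.mem_nhds hp)).differentiableAt (by norm_num)
  have hPd : ∀ p ∈ Ioo (0:ℝ) 1, HasDerivAt P (deriv P p) p := fun p hp =>
    (hPdiff p hp).hasDerivAt
  have hP'c : ContinuousOn (deriv P) (Ioo (0:ℝ) 1) :=
    hP2.continuousOn_deriv_of_isOpen isOpen_Ioo (by norm_num)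
  have hPpos : ∀ p ∈ Ioo (0:ℝ) 1, 0 < P p := fun p hp =>
    mul_pos (H.v_pos p hp) (HP.pos p hp)
  set g : ℝ → ℝ := fun p => 2 * mu p / v p with hgdef
  have hgc : ContinuousOn g (Ioo (0:ℝ) 1) :=
    (continuousOn_const.mul (hmua.continuousOn.mono hIooU)).div
      (hva.continuousOn.mono hIooU) (fun p hp => ne_of_gt (H.v_pos p hp))
  set Sf : ℝ → ℝ := fun p => Real.exp (-∫ z in (1/2:ℝ)..p, g z) with hSfdef
  have hSfpos : ∀ p, 0 < Sf p := fun p => Real.exp_pos _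
  have hgii : ∀ a ∈ Ioo (0:ℝ) 1, ∀ b ∈ Ioo (0:ℝ) 1, IntervalIntegrable g volume a b :=
    fun a ha b hb => (hgc.mono (Set.ordConnected_Ioo.uIcc_subset ha hb)).intervalIntegrable
  have hSfd : ∀ p ∈ Ioo (0:ℝ) 1,
      HasDerivAt Sf (Real.exp (-∫ z in (1/2:ℝ)..p, g z) * -g p) p :=
    fun p hp => ((intervalIntegral.integral_hasDerivAt_right (hgii _ hhalf _ hp)
      ((hgc.stronglyMeasurableAtFilter isOpen_Ioo) p hp)
      (hgc.continuousAt (isOpen_Ioo.mem_nhds hp))).neg).exp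
  set F : ℝ → ℝ := fun p => mu p * pi p - deriv (fun q => 1 / 2 * v q * pi q) p with hFdef
  have hderiv_half : ∀ p ∈ Ioo (0:ℝ) 1,
      deriv (fun q => 1 / 2 * v q * pi q) p = 1/2 * deriv P p := by
    intro p hp
    have e : (fun q => 1 / 2 * v q * pi q) = fun q => 1/2 * P q := by
      funext q; simp only [hPdef]; ring
    rw [e, deriv_const_mul _ (hPdiff p hp)]
  have hFc : ContinuousOn F (Ioo (0:ℝ) 1) := by
    refine ContinuousOn.congr
      (((hmua.continuousOn.mono hIooU).mul hπc).sub
        ((continuousOn_const (c := (1/2:ℝ))).mul hP'c)) ?_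
    intro p hp
    simp only [hFdef]
    rw [hderiv_half p hp]
    rfl
  set h : ℝ → ℝ := fun p => v p * pi p * Sf p with hhdef
  have hposh : ∀ p ∈ Ioo (0:ℝ) 1, 0 < h p := fun p hp =>
    mul_pos (hPpos p hp) (hSfpos p)
  have hhd : ∀ p ∈ Ioo (0:ℝ) 1, HasDerivAt h (-2 * Sf p * F p) p := by
    intro p hp
    have hvne := ne_of_gt (H.v_pos p hp)
    have hπne := ne_of_gt (HP.pos p hp)
    have hd : HasDerivAt h
        (deriv P p * Sf p + P p * (Real.exp (-∫ z in (1/2:ℝ)..p, g z) * -g p)) p :=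
      (hPd p hp).mul (hSfd p hp)
    convert hd using 1
    simp only [hFdef]
    rw [hderiv_half p hp]
    simp only [hPdef, hgdef, hSfdef]
    field_simp
    ring
  have hdrift : ∀ z ∈ Ioo (0:ℝ) 1, 2 * bwdDrift v mu pi z / v z
      = -(g z) + 2 * (deriv P z / P z) := by
    intro z hz
    have hvz := ne_of_gt (H.v_pos z hz)
    have hπz := ne_of_gt (HP.pos z hz)
    simp only [bwdDrift]
    rw [← hPdef]
    have hPz : P z = v z * pi z := rfl
    simp only [hgdef]
    rw [hPz]
    field_simp
  have hΦ : ∀ p ∈ Ioo (0:ℝ) 1, (∫ z in (1/2:ℝ)..p, 2 * (deriv P z / P z))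
      = 2 * Real.log (P p) - 2 * Real.log (P (1/2)) := by
    intro p hp
    have hsub := Set.ordConnected_Ioo.uIcc_subset hhalf hp
    have key := intervalIntegral.integral_eq_sub_of_hasDerivAt
      (f := fun z => 2 * Real.log (P z)) (f' := fun z => 2 * (deriv P z / P z))
      (a := 1/2) (b := p)
      (fun x hx => (((hPd x (hsub hx)).log (ne_of_gt (hPpos x (hsub hx)))).const_mul 2))
      (by
        have hcc : ContinuousOn (fun z => 2 * (deriv P z / P z)) (uIcc (1/2:ℝ) p) :=
          continuousOn_const.mul
            ((hP'c.mono hsub).div (hP2.continuousOn.mono hsub)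
              (fun z hz => ne_of_gt (hPpos z (hsub hz))))
        exact hcc.intervalIntegrable)
    simpa using key
  have hPh : 0 < P (1/2) := hPpos _ hhalf
  have hscale : ∀ p ∈ Ioo (0:ℝ) 1, bwdScaleDensity v mu pi p
      = (P (1/2))^2 / ((P p)^2 * Sf p) := by
    intro p hp
    have hsub := Set.ordConnected_Ioo.uIcc_subset hhalf hp
    have hint1 : (∫ z in (1/2:ℝ)..p, 2 * bwdDrift v mu pi z / v z)
        = (∫ z in (1/2:ℝ)..p, -(g z)) + ∫ z in (1/2:ℝ)..p, 2 * (deriv P z / P z) := by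
      have i1 : IntervalIntegrable (fun z => -(g z)) volume (1/2:ℝ) p :=
        ContinuousOn.intervalIntegrable ((hgc.mono hsub).neg)
      have i2 : IntervalIntegrable (fun z => 2 * (deriv P z / P z)) volume (1/2:ℝ) p :=
        ContinuousOn.intervalIntegrable (continuousOn_const.mul
          ((hP'c.mono hsub).div (hP2.continuousOn.mono hsub)
            (fun z hz => ne_of_gt (hPpos z (hsub hz)))))
      rw [← intervalIntegral.integral_add i1 i2]
      refine intervalIntegral.integral_congr ?_
      intro z hz
      exact hdrift z (hsub hz)
    simp only [bwdScaleDensity]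
    rw [hint1, intervalIntegral.integral_neg, hΦ p hp]
    have hPp := hPpos p hp
    have hSfp := hSfpos p
    have hrhs : (0:ℝ) < (P (1/2))^2 / ((P p)^2 * Sf p) := by positivity
    rw [← Real.exp_log hrhs]
    congr 1
    have h1 : ((P (1/2)):ℝ)^2 ≠ 0 := by positivity
    have h2 : ((P p):ℝ)^2 ≠ 0 := by positivity
    have h3 : Sf p ≠ 0 := ne_of_gt hSfp
    rw [Real.log_div h1 (mul_ne_zero h2 h3), Real.log_mul h2 h3, Real.log_pow, Real.log_pow,
      hSfdef]
    rw [Real.log_exp]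
    push_cast
    ring
  have hL1 : ∀ p ∈ Ioo (0:ℝ) 1, ∀ c : ℝ,
      bwdSpeedDensity v mu pi p / pi p * c = h p * (c / (P (1/2))^2) := by
    intro p hp c
    have hvp := H.v_pos p hp
    have hπp := HP.pos p hp
    have hSfp := hSfpos p
    have hv2 := H.v_pos _ hhalf
    have hπ2' := HP.pos _ hhalf
    simp only [bwdSpeedDensity]
    rw [hscale p hp]
    simp only [hhdef, hPdef]
    field_simp
  -- generic enders
  have endNhds : ∀ (c : ℝ), 0 < c → ∀ L, 0 < L → ∀ (j : ℝ),
      Tendsto h (𝓝[Ioo (0:ℝ) 1] j) (𝓝 L) →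
      ∃ r, 0 < r ∧ Tendsto (fun p => bwdSpeedDensity v mu pi p / pi p * c)
        (𝓝[Ioo (0:ℝ) 1] j) (𝓝 r) := by
    intro c hc L hL j htend
    refine ⟨L * (c / (P (1/2))^2), mul_pos hL (div_pos hc (pow_pos hPh 2)), ?_⟩
    refine Tendsto.congr' ?_ (htend.mul_const (c / (P (1/2))^2))
    filter_upwards [self_mem_nhdsWithin] with p hp
    exact (hL1 p hp c).symm
  have endTop : ∀ (c : ℝ), 0 < c → ∀ (j : ℝ), Tendsto h (𝓝[Ioo (0:ℝ) 1] j) atTop →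
      Tendsto (fun p => bwdSpeedDensity v mu pi p / pi p * c)
        (𝓝[Ioo (0:ℝ) 1] j) atTop := by
    intro c hc j htend
    refine Tendsto.congr' ?_ (htend.atTop_mul_const (div_pos hc (pow_pos hPh 2)))
    filter_upwards [self_mem_nhdsWithin] with p hp
    exact (hL1 p hp c).symm
  have endZero : ∀ (j : ℝ) (W : ℝ → ℝ), (∀ p ∈ Icc (0:ℝ) 1, lam * W p = 0) →
      Tendsto (fun p => bwdSpeedDensity v mu pi p / pi p
          * (lam * ∫ q in Ioo (0:ℝ) 1, W q * pi q))
        (𝓝[Ioo (0:ℝ) 1] j) (𝓝 0) := by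
    intro j W hzero
    have hκ0 : lam * ∫ q in Ioo (0:ℝ) 1, W q * pi q = 0 := by
      by_cases hl : lam = 0
      · simp [hl]
      · have hw : EqOn (fun q => W q * pi q) (fun _ => (0:ℝ)) (Ioo (0:ℝ) 1) := by
          intro q hq
          have h1 := hzero q (Ioo_subset_Icc_self hq)
          rcases mul_eq_zero.1 h1 with h' | h'
          · exact absurd h' hl
          · simp only []
            rw [h', zero_mul]
        rw [setIntegral_congr_fun measurableSet_Ioo hw]
        simp
    have heq : (fun p => bwdSpeedDensity v mu pi p / pi p
        * (lam * ∫ q in Ioo (0:ℝ) 1, W q * pi q)) = fun _ => (0:ℝ) := by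
      funext p; rw [hκ0, mul_zero]
    rw [heq]
    exact tendsto_const_nhds
  rcases hwi with ⟨hi, hwid⟩ | ⟨hi, hwid⟩
  · -- i = 0
    subst hi; subst hwid
    have hexK : (∃ p ∈ Icc (0:ℝ) 1, lam * wi p ≠ 0) →
        0 < lam * ∫ q in Ioo (0:ℝ) 1, wi q * pi q := by
      intro hex
      obtain ⟨p₀, hp₀, hne⟩ := hex
      have hlam : lam ≠ 0 := fun h0 => hne (by rw [h0, zero_mul])
      have hlam' : 0 < lam := lt_of_le_of_ne H.lam_nonneg (Ne.symm hlam)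
      refine mul_pos hlam' (kappa_pos wi pi (hw0a.continuousOn.mono hUicc)
        (fun p hp => (H.w0_mem p hp).1) hπc HP.pos HP.integrableOn ⟨p₀, hp₀, ?_⟩)
      intro hwiz
      exact hne (by rw [hwiz, mul_zero])
    obtain ⟨δB, hδBpos, M, hM⟩ := lemB v mu U hUopen (hUicc ⟨le_refl 0, zero_le_one⟩)
      hva hmua H.v_zero H.deriv_v_zero_pos
    have hmaster := fun (hex : ∃ p ∈ Icc (0:ℝ) 1, lam * wi p ≠ 0) =>
      master g F h (2 * mu 0 / deriv v 0) M (min δB (1/2)) _ hgc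
        (lt_min hδBpos (by norm_num)) (lt_of_le_of_lt (min_le_right _ _) (by norm_num))
        (fun z hz => (hM z ⟨hz.1, lt_of_lt_of_le hz.2 (min_le_left _ _)⟩).2)
        hFc HP.bc_zero (hexK hex) hposh hhd
    refine ⟨?_, ?_, fun hz => endZero 0 wi hz⟩
    · intro hcond hex
      have hα1 : 2 * mu 0 / deriv v 0 < 1 := by
        rw [abs_of_pos H.mu_zero_pos, abs_of_pos H.deriv_v_zero_pos] at hcond
        rw [div_lt_one H.deriv_v_zero_pos]; linarith
      obtain ⟨L, hL, htd⟩ := (hmaster hex).1 hα1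
      exact endNhds _ (hexK hex) L hL 0 htd
    · intro hcond hex
      have hα1 : 1 ≤ 2 * mu 0 / deriv v 0 := by
        rw [abs_of_pos H.mu_zero_pos, abs_of_pos H.deriv_v_zero_pos] at hcond
        rw [le_div_iff₀ H.deriv_v_zero_pos]; linarith
      exact endTop _ (hexK hex) 0 ((hmaster hex).2 hα1)
  · -- i = 1
    subst hi; subst hwid
    have hm : MapsTo (fun p : ℝ => 1 - p) (Ioo (0:ℝ) 1) (Ioo (0:ℝ) 1) := by
      intro x hx
      simp only [mem_Ioo] at hx ⊢
      constructor <;> linarith [hx.1, hx.2]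
    have hrt : Tendsto (fun q : ℝ => 1 - q) (𝓝[Ioo (0:ℝ) 1] 0) (𝓝[Ioo (0:ℝ) 1] 1) := by
      have hc : ContinuousWithinAt (fun p : ℝ => 1 - p) (Ioo (0:ℝ) 1) 0 :=
        (continuous_const.sub continuous_id).continuousWithinAt
      have := hc.tendsto_nhdsWithin hm
      simpa using this
    have hrt' : Tendsto (fun p : ℝ => 1 - p) (𝓝[Ioo (0:ℝ) 1] 1) (𝓝[Ioo (0:ℝ) 1] 0) := by
      have hc : ContinuousWithinAt (fun p : ℝ => 1 - p) (Ioo (0:ℝ) 1) 1 :=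
        (continuous_const.sub continuous_id).continuousWithinAt
      have := hc.tendsto_nhdsWithin hm
      simpa using this
    set g1 : ℝ → ℝ := fun q => 2 * (-mu (1 - q)) / v (1 - q) with hg1def
    have hg1g : ∀ x : ℝ, g1 x = -(g (1 - x)) := by
      intro x; simp only [hg1def, hgdef]; rw [mul_neg, neg_div]
    have hSfrefl : ∀ q : ℝ, Real.exp (-∫ z in (1/2:ℝ)..q, g1 z) = Sf (1 - q) := by
      intro q
      have h1 : (∫ z in (1/2:ℝ)..q, g1 z) = ∫ z in (1/2:ℝ)..q, -(g (1 - z)) := by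
        simp only [hg1g]
      rw [h1, intervalIntegral.integral_neg,
        intervalIntegral.integral_comp_sub_left (fun z => g z) 1]
      rw [show (1:ℝ) - 1/2 = 1/2 by norm_num, intervalIntegral.integral_symm]
      simp only [hSfdef, neg_neg]
    set F1 : ℝ → ℝ := fun q => -(F (1 - q)) with hF1def
    set h1f : ℝ → ℝ := fun q => h (1 - q) with hh1def
    have hg1c : ContinuousOn g1 (Ioo (0:ℝ) 1) := by
      refine ContinuousOn.congr ?_ (fun x hx => hg1g x)
      exact (hgc.comp ((continuous_const.sub continuous_id).continuousOn) hm).neg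
    have hF1c : ContinuousOn F1 (Ioo (0:ℝ) 1) :=
      (hFc.comp ((continuous_const.sub continuous_id).continuousOn) hm).neg
    have hF1lim : Tendsto F1 (𝓝[Ioo (0:ℝ) 1] 0)
        (𝓝 (lam * ∫ p in Ioo (0:ℝ) 1, (1 - w0 p) * pi p)) := by
      have h1 := (HP.bc_one.comp hrt).neg
      rw [neg_neg] at h1
      exact h1
    have hposh1 : ∀ p ∈ Ioo (0:ℝ) 1, 0 < h1f p := fun p hp => hposh _ (hm hp)
    have hhd1 : ∀ q ∈ Ioo (0:ℝ) 1,
        HasDerivAt h1f (-2 * Real.exp (-∫ z in (1/2:ℝ)..q, g1 z) * F1 q) q := by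
      intro q hq
      have hq' : (1 - q) ∈ Ioo (0:ℝ) 1 := hm hq
      have hcomp := (hhd (1-q) hq').comp q ((hasDerivAt_id q).const_sub 1)
      have hcomp' : HasDerivAt h1f ((-2 * Sf (1-q) * F (1-q)) * -1) q := hcomp
      convert hcomp' using 1
      rw [hSfrefl q]
      simp only [hF1def]
      ring
    set U1 : Set ℝ := (fun q : ℝ => 1 - q) ⁻¹' U with hU1def
    have hU1open : IsOpen U1 := hUopen.preimage (continuous_const.sub continuous_id)
    have h1U : (1:ℝ) ∈ U := hUicc ⟨zero_le_one, le_refl 1⟩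
    have h0U1 : (0:ℝ) ∈ U1 := by
      simp only [hU1def, mem_preimage, sub_zero]
      exact h1U
    have hmapsU : MapsTo (fun q : ℝ => 1 - q) U1 U := fun x hx => hx
    have haffine : AnalyticOnNhd ℝ (fun q : ℝ => 1 - q) U1 :=
      analyticOnNhd_const.sub analyticOnNhd_id
    have hv1a : AnalyticOnNhd ℝ (fun q => v (1 - q)) U1 := hva.comp haffine hmapsU
    have hmu1a : AnalyticOnNhd ℝ (fun q => -mu (1 - q)) U1 :=
      (hmua.comp haffine hmapsU).neg
    have hdv1 : HasDerivAt (fun q : ℝ => v (1 - q)) (deriv v 1 * -1) 0 := by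
      have hvd : HasDerivAt v (deriv v 1) ((fun q : ℝ => 1 - q) 0) := by
        simp only [sub_zero]
        exact ((hva 1 h1U).differentiableAt).hasDerivAt
      exact hvd.comp 0 ((hasDerivAt_id 0).const_sub 1)
    have hdv1' : deriv (fun q : ℝ => v (1 - q)) 0 = -deriv v 1 := by
      rw [hdv1.deriv]; ring
    obtain ⟨δB, hδBpos, M, hM⟩ := lemB (fun q => v (1 - q)) (fun q => -mu (1 - q))
      U1 hU1open h0U1 hv1a hmu1a (by simp [H.v_one])
      (by rw [hdv1']; linarith [H.deriv_v_one_neg])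
    have hexK : (∃ p ∈ Icc (0:ℝ) 1, lam * (1 - w0 p) ≠ 0) →
        0 < lam * ∫ q in Ioo (0:ℝ) 1, (1 - w0 q) * pi q := by
      intro hex
      obtain ⟨p₀, hp₀, hne⟩ := hex
      have hlam : lam ≠ 0 := fun h0 => hne (by rw [h0, zero_mul])
      have hlam' : 0 < lam := lt_of_le_of_ne H.lam_nonneg (Ne.symm hlam)
      refine mul_pos hlam' (kappa_pos (fun p => 1 - w0 p) pi
        (continuousOn_const.sub (hw0a.continuousOn.mono hUicc))
        (fun p hp => by
          show (0:ℝ) ≤ 1 - w0 p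
          linarith [(H.w0_mem p hp).2]) hπc HP.pos HP.integrableOn
        ⟨p₀, hp₀, ?_⟩)
      intro hw0z
      have hb : (1 - w0 p₀) = 0 := hw0z
      exact hne (by rw [hb, mul_zero])
    have hα1eq : 2 * (-mu (1 - 0)) / deriv (fun q : ℝ => v (1 - q)) 0
        = 2 * |mu 1| / |deriv v 1| := by
      rw [hdv1', show (1:ℝ) - 0 = 1 by norm_num, abs_of_neg H.mu_one_neg,
        abs_of_neg H.deriv_v_one_neg]
    have hmaster := fun (hex : ∃ p ∈ Icc (0:ℝ) 1, lam * (1 - w0 p) ≠ 0) =>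
      master g1 F1 h1f (2 * (-mu (1 - 0)) / deriv (fun q : ℝ => v (1 - q)) 0) M
        (min δB (1/2)) _ hg1c
        (lt_min hδBpos (by norm_num)) (lt_of_le_of_lt (min_le_right _ _) (by norm_num))
        (fun z hz => (hM z ⟨hz.1, lt_of_lt_of_le hz.2 (min_le_left _ _)⟩).2)
        hF1c hF1lim (hexK hex) hposh1 hhd1
    refine ⟨?_, ?_, fun hz => endZero 1 (fun p => 1 - w0 p) hz⟩
    · intro hcond hex
      have hα1 : 2 * (-mu (1 - 0)) / deriv (fun q : ℝ => v (1 - q)) 0 < 1 := by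
        rw [hα1eq, div_lt_one (abs_pos.2 (ne_of_lt H.deriv_v_one_neg))]
        exact hcond
      obtain ⟨L, hL, htd⟩ := (hmaster hex).1 hα1
      have htransfer : Tendsto h (𝓝[Ioo (0:ℝ) 1] 1) (𝓝 L) := by
        have hcc := htd.comp hrt'
        refine Tendsto.congr (fun p => ?_) hcc
        simp only [Function.comp, hh1def, sub_sub_cancel]
      exact endNhds _ (hexK hex) L hL 1 htransfer
    · intro hcond hex
      have hα1 : 1 ≤ 2 * (-mu (1 - 0)) / deriv (fun q : ℝ => v (1 - q)) 0 := by
        rw [hα1eq, le_div_iff₀ (abs_pos.2 (ne_of_lt H.deriv_v_one_neg))]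
        linarith [hcond]
      have htd := (hmaster hex).2 hα1
      have htransfer : Tendsto h (𝓝[Ioo (0:ℝ) 1] 1) atTop := by
        have hcc := htd.comp hrt'
        refine Tendsto.congr (fun p => ?_) hcc
        simp only [Function.comp, hh1def, sub_sub_cancel]
      exact endTop _ (hexK hex) 1 htransfer
end

section
/- Let φ : [0,1] → ℝ be twice continuously differentiable, and let ψ : [0,1] → ℝ be continuous, twice continuously differentiable on (0,1), such that the function p ↦ (1/2) v(p) ψ''(p) + μ̃(p) ψ'(p) is bounded on (0,1), and such that for each i ∈ {0,1} the limit lim_{p→i} ((1/2) v π ψ')(p) exists and equals (−1)^{i+1} ∫₀¹ (ψ(p) − ψ(i)) λ wᵢ(p) π(p) dp. Then ∫₀¹ Gφ(p) ψ(p) π(p) dp = ∫₀¹ φ(p) ((1/2) v(p) ψ''(p) + μ̃(p) ψ'(p)) π(p) dp. -/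
open MeasureTheory Set Filter Topology Asymptotics

lemma ftc_Ioo {F F' : ℝ → ℝ} {a b Fa Fb : ℝ} (hab : a < b)
    (hderiv : ∀ x ∈ Ioo a b, HasDerivAt F (F' x) x)
    (hint : IntegrableOn F' (Ioo a b))
    (ha : Tendsto F (𝓝[Ioo a b] a) (𝓝 Fa))
    (hb : Tendsto F (𝓝[Ioo a b] b) (𝓝 Fb)) :
    ∫ x in Ioo a b, F' x = Fb - Fa := by
  set an : ℕ → ℝ := fun n => a + (b - a) / (n + 2) with han
  set bn : ℕ → ℝ := fun n => b - (b - a) / (n + 2) with hbn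
  have hpos : ∀ n : ℕ, (0:ℝ) < (b - a) / (n + 2) := fun n =>
    div_pos (by linarith) (by positivity)
  have hhalf : ∀ n : ℕ, (b - a) / (n + 2) ≤ (b - a) / 2 := by
    intro n
    have h0 : (0:ℝ) ≤ n := Nat.cast_nonneg n
    gcongr
    · linarith
  have hanbn : ∀ n, an n ≤ bn n := by
    intro n
    have := hhalf n
    simp only [han, hbn]
    linarith
  have hmemA : ∀ n, an n ∈ Ioo a b := fun n => by
    refine ⟨by simp only [han]; linarith [hpos n], ?_⟩
    have h1 := hhalf n; have h2 := hpos n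
    simp only [han]; linarith
  have hmemB : ∀ n, bn n ∈ Ioo a b := fun n => by
    refine ⟨?_, by simp only [hbn]; linarith [hpos n]⟩
    have h1 := hhalf n; have h2 := hpos n
    simp only [hbn]; linarith
  have hsub : ∀ n, Icc (an n) (bn n) ⊆ Ioo a b := fun n =>
    fun x hx => ⟨lt_of_lt_of_le (hmemA n).1 hx.1, lt_of_le_of_lt hx.2 (hmemB n).2⟩
  have hd0 : Tendsto (fun n : ℕ => (b - a) / (n + 2)) atTop (𝓝 0) := by
    apply Tendsto.div_atTop tendsto_const_nhds
    exact tendsto_atTop_add_const_right _ 2 tendsto_natCast_atTop_atTop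
  have htendA : Tendsto an atTop (𝓝 a) := by simpa using tendsto_const_nhds.add hd0
  have htendB : Tendsto bn atTop (𝓝 b) := by simpa using tendsto_const_nhds.sub hd0
  have hφ := MeasureTheory.aecover_Ioo_of_Icc (μ := (volume : Measure ℝ)) htendA htendB
  have hlim1 : Tendsto (fun n => ∫ x in (an n)..(bn n), F' x) atTop
      (𝓝 (∫ x in Ioo a b, F' x)) := by
    refine (hφ.integral_tendsto_of_countably_generated hint).congr ?_
    intro n
    rw [Measure.restrict_restrict measurableSet_Icc, inter_eq_left.mpr (hsub n),
      integral_Icc_eq_integral_Ioc, intervalIntegral.integral_of_le (hanbn n)]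
  have heq : ∀ n, (∫ x in (an n)..(bn n), F' x) = F (bn n) - F (an n) := by
    intro n
    apply intervalIntegral.integral_eq_sub_of_hasDerivAt
    · intro x hx
      rw [uIcc_of_le (hanbn n)] at hx
      exact hderiv x (hsub n hx)
    · rw [intervalIntegrable_iff_integrableOn_Ioc_of_le (hanbn n)]
      exact hint.mono_set fun x hx => hsub n ⟨hx.1.le, hx.2⟩
  have hlim2 : Tendsto (fun n => F (bn n) - F (an n)) atTop (𝓝 (Fb - Fa)) := by
    apply Tendsto.sub
    · exact hb.comp (tendsto_nhdsWithin_iff.mpr ⟨htendB, Eventually.of_forall hmemB⟩)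
    · exact ha.comp (tendsto_nhdsWithin_iff.mpr ⟨htendA, Eventually.of_forall hmemA⟩)
  exact tendsto_nhds_unique (hlim1.congr fun n => (heq n)) hlim2

set_option maxHeartbeats 2000000 in
/-- the adjoint relation between the forward generator `G` and the
backward diffusion operator `Ãψ = (1/2)vψ'' + μ̃ψ'` for `ψ` satisfying the non-local
boundary conditions defining the core of the backward generator. -/
theorem stmt_15 (lam : ℝ) (v mu w0 pi : ℝ → ℝ)
    (H : ModelAssumptions lam v mu w0)
    (HP : StationaryDensity lam v mu w0 pi)
    (phi psi : ℝ → ℝ)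
    (hphi : ContDiff ℝ 2 phi)
    (hpsi_cont : ContinuousOn psi (Icc (0 : ℝ) 1))
    (hpsi_C2 : ContDiffOn ℝ 2 psi (Ioo (0 : ℝ) 1))
    (hbdd : ∃ M : ℝ, ∀ p ∈ Ioo (0 : ℝ) 1,
      |1 / 2 * v p * deriv (deriv psi) p + bwdDrift v mu pi p * deriv psi p| ≤ M)
    (hb0 : Tendsto (fun p => 1 / 2 * v p * pi p * deriv psi p) (𝓝[Ioo (0 : ℝ) 1] 0)
      (𝓝 (-(∫ p in Ioo (0 : ℝ) 1, (psi p - psi 0) * (lam * w0 p * pi p)))))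
    (hb1 : Tendsto (fun p => 1 / 2 * v p * pi p * deriv psi p) (𝓝[Ioo (0 : ℝ) 1] 1)
      (𝓝 (∫ p in Ioo (0 : ℝ) 1, (psi p - psi 1) * (lam * (1 - w0 p) * pi p)))) :
    (∫ p in Ioo (0 : ℝ) 1, fwdGen lam v mu w0 phi p * psi p * pi p)
      = ∫ p in Ioo (0 : ℝ) 1,
          phi p * (1 / 2 * v p * deriv (deriv psi) p + bwdDrift v mu pi p * deriv psi p)
            * pi p := by
  obtain ⟨U, hUopen, hIccU, hva, hmua, hw0a⟩ := H.analytic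
  set I : Set ℝ := Ioo (0 : ℝ) 1 with hIdef
  have hIopen : IsOpen I := isOpen_Ioo
  have hIsub : I ⊆ Icc (0 : ℝ) 1 := Ioo_subset_Icc_self
  have hIU : I ⊆ U := fun p hp => hIccU (hIsub hp)
  have hIccU' : Icc (0:ℝ) 1 ⊆ U := hIccU
  -- abbreviations
  set Apsi : ℝ → ℝ := fun p =>
    1 / 2 * v p * deriv (deriv psi) p + bwdDrift v mu pi p * deriv psi p with hApsidef
  set g : ℝ → ℝ := fun p => lam * (w0 p * phi 0 + (1 - w0 p) * phi 1) * psi p * pi p with hgdef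
  set F : ℝ → ℝ := fun p =>
    (1 / 2 * v p * pi p) * (psi p * deriv phi p)
      - phi p * (1 / 2 * v p * pi p * deriv psi p)
      + phi p * psi p * (mu p * pi p - deriv (fun q => 1 / 2 * v q * pi q) p) with hFdef
  -- basic smoothness facts
  have hvd : ∀ p ∈ I, HasDerivAt v (deriv v p) p := fun p hp =>
    ((hva p (hIU hp)).differentiableAt).hasDerivAt
  have hva' : AnalyticOnNhd ℝ (deriv v) U := hva.deriv
  have hvd2 : ∀ p ∈ I, HasDerivAt (deriv v) (deriv (deriv v) p) p := fun p hp =>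
    ((hva' p (hIU hp)).differentiableAt).hasDerivAt
  have hmud : ∀ p ∈ I, HasDerivAt mu (deriv mu p) p := fun p hp =>
    ((hmua p (hIU hp)).differentiableAt).hasDerivAt
  have hpid : ∀ p ∈ I, HasDerivAt pi (deriv pi p) p := fun p hp =>
    (((HP.contDiffOn.differentiableOn (by norm_num)) p hp).differentiableAt
      (hIopen.mem_nhds hp)).hasDerivAt
  have hpiC1 : ContDiffOn ℝ 1 (deriv pi) I :=
    HP.contDiffOn.deriv_of_isOpen hIopen (by norm_num)
  have hpid2 : ∀ p ∈ I, HasDerivAt (deriv pi) (deriv (deriv pi) p) p := fun p hp =>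
    (((hpiC1.differentiableOn (by norm_num)) p hp).differentiableAt
      (hIopen.mem_nhds hp)).hasDerivAt
  have hpsid : ∀ p ∈ I, HasDerivAt psi (deriv psi p) p := fun p hp =>
    (((hpsi_C2.differentiableOn (by norm_num)) p hp).differentiableAt
      (hIopen.mem_nhds hp)).hasDerivAt
  have hpsiC1 : ContDiffOn ℝ 1 (deriv psi) I :=
    hpsi_C2.deriv_of_isOpen hIopen (by norm_num)
  have hpsid2 : ∀ p ∈ I, HasDerivAt (deriv psi) (deriv (deriv psi) p) p := fun p hp =>
    (((hpsiC1.differentiableOn (by norm_num)) p hp).differentiableAt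
      (hIopen.mem_nhds hp)).hasDerivAt
  have hphid : ∀ p : ℝ, HasDerivAt phi (deriv phi p) p := fun p =>
    ((hphi.differentiable (by norm_num)) p).hasDerivAt
  have hphiC1 : ContDiff ℝ 1 (deriv phi) := by
    have := (contDiff_succ_iff_deriv (n := 1)).mp (by exact_mod_cast hphi)
    exact this.2.2
  have hphid2 : ∀ p : ℝ, HasDerivAt (deriv phi) (deriv (deriv phi) p) p := fun p =>
    ((hphiC1.differentiable (by norm_num)) p).hasDerivAt
  have hpine : ∀ p ∈ I, pi p ≠ 0 := fun p hp => (HP.pos p hp).ne'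
  -- derivative of (1/2 v pi)
  have hAd : ∀ p ∈ I, HasDerivAt (fun q => 1 / 2 * v q * pi q)
      (1 / 2 * deriv v p * pi p + 1 / 2 * v p * deriv pi p) p := by
    intro p hp
    exact (((hvd p hp).const_mul (1/2 : ℝ)).mul (hpid p hp))
  have hAderiv : ∀ p ∈ I, deriv (fun q => 1 / 2 * v q * pi q) p
      = 1 / 2 * deriv v p * pi p + 1 / 2 * v p * deriv pi p := fun p hp => (hAd p hp).deriv
  -- derivative of deriv (1/2 v pi)
  have hAd2 : ∀ p ∈ I, HasDerivAt (deriv (fun q => 1 / 2 * v q * pi q))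
      (1 / 2 * deriv (deriv v) p * pi p + deriv v p * deriv pi p
        + 1 / 2 * v p * deriv (deriv pi) p) p := by
    intro p hp
    have h1 : HasDerivAt (fun x => 1 / 2 * deriv v x * pi x + 1 / 2 * v x * deriv pi x)
        (1 / 2 * deriv (deriv v) p * pi p + deriv v p * deriv pi p
          + 1 / 2 * v p * deriv (deriv pi) p) p := by
      have := (((hvd2 p hp).const_mul (1/2 : ℝ)).mul (hpid p hp)).add
        (((hvd p hp).const_mul (1/2 : ℝ)).mul (hpid2 p hp))
      exact this.congr_deriv (by ring)
    apply h1.congr_of_eventuallyEq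
    filter_upwards [hIopen.mem_nhds hp] with x hx
    exact hAderiv x hx
  -- derivative of (v pi)
  have hvpideriv : ∀ p ∈ I, deriv (fun q => v q * pi q) p
      = deriv v p * pi p + v p * deriv pi p := fun p hp => ((hvd p hp).mul (hpid p hp)).deriv
  -- derivative of (mu pi)
  have hmupideriv : ∀ p ∈ I, deriv (fun q => mu q * pi q) p
      = deriv mu p * pi p + mu p * deriv pi p := fun p hp => ((hmud p hp).mul (hpid p hp)).deriv
  -- the ODE in explicit form
  have hode : ∀ p ∈ I, 1 / 2 * deriv (deriv v) p * pi p + deriv v p * deriv pi p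
      + 1 / 2 * v p * deriv (deriv pi) p
      - (deriv mu p * pi p + mu p * deriv pi p) - lam * pi p = 0 := by
    intro p hp
    have h := HP.ode p hp
    rwa [(hAd2 p hp).deriv, hmupideriv p hp] at h
  -- STEP: HasDerivAt F
  have hFderiv : ∀ p ∈ I, HasDerivAt F
      (fwdGen lam v mu w0 phi p * psi p * pi p - phi p * Apsi p * pi p - g p) p := by
    intro p hp
    have t1 := (hAd p hp).mul ((hpsid p hp).mul (hphid2 p))
    have t2 := (hphid p).mul ((hAd p hp).mul (hpsid2 p hp))
    have t3 := ((hphid p).mul (hpsid p hp)).mul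
      (((hmud p hp).mul (hpid p hp)).sub (hAd2 p hp))
    have big : HasDerivAt F _ p := (t1.sub t2).add t3
    convert big using 1
    simp only [hApsidef, hgdef, fwdGen, bwdDrift, Pi.mul_apply, Pi.sub_apply]
    rw [hvpideriv p hp, hAderiv p hp]
    have hne := hpine p hp
    field_simp
    linear_combination (2 * phi p * psi p) * hode p hp
  -- continuity facts
  have hvc : ContinuousOn v (Icc (0:ℝ) 1) := (hva.continuousOn).mono hIccU'
  have hmuc : ContinuousOn mu (Icc (0:ℝ) 1) := (hmua.continuousOn).mono hIccU'
  have hw0c : ContinuousOn w0 (Icc (0:ℝ) 1) := (hw0a.continuousOn).mono hIccU'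
  have hpic : ContinuousOn pi I := HP.contDiffOn.continuousOn
  have hdpic : ContinuousOn (deriv pi) I := hpiC1.continuousOn
  have hdpsic : ContinuousOn (deriv psi) I := hpsiC1.continuousOn
  have hddpsic : ContinuousOn (deriv (deriv psi)) I :=
    (hpsiC1.deriv_of_isOpen (m := 0) hIopen (by norm_num)).continuousOn
  have hphic : Continuous phi := hphi.continuous
  have hdphic : Continuous (deriv phi) := hphiC1.continuous
  have hddphic : Continuous (deriv (deriv phi)) := by
    have := (contDiff_succ_iff_deriv (n := 0)).mp (by exact_mod_cast hphiC1)
    exact this.2.2.continuous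
  -- integrability helper
  have hbnd : ∀ c : ℝ → ℝ, ContinuousOn c I → (∃ M, ∀ x ∈ I, |c x| ≤ M) →
      IntegrableOn (fun p => c p * pi p) I := by
    rintro c hc ⟨M, hM⟩
    refine Integrable.bdd_mul (c := M) (HP.integrableOn) (hc.aestronglyMeasurable measurableSet_Ioo) ?_
    refine (ae_restrict_iff' measurableSet_Ioo).mpr (Eventually.of_forall fun x hx => ?_)
    rw [Real.norm_eq_abs]
    exact hM x hx
  -- boundedness helper on Icc
  have hIccbd : ∀ c : ℝ → ℝ, ContinuousOn c (Icc (0:ℝ) 1) → ∃ M, ∀ x ∈ I, |c x| ≤ M := by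
    intro c hc
    obtain ⟨M, hM⟩ := isCompact_Icc.exists_bound_of_continuousOn hc
    exact ⟨M, fun x hx => hM x (hIsub hx)⟩
  -- integrability of the various integrands
  have hGc : ContinuousOn (fun p => fwdGen lam v mu w0 phi p * psi p) (Icc (0:ℝ) 1) := by
    apply ContinuousOn.mul _ hpsi_cont
    unfold fwdGen
    exact (((((continuousOn_const.mul hvc).mul hddphic.continuousOn).add
      (hmuc.mul hdphic.continuousOn)).add
      (((continuousOn_const.mul hw0c)).mul (continuousOn_const.sub hphic.continuousOn))).add
      ((continuousOn_const.mul (continuousOn_const.sub hw0c)).mul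
        (continuousOn_const.sub hphic.continuousOn)))
  have int1 : IntegrableOn (fun p => fwdGen lam v mu w0 phi p * psi p * pi p) I :=
    hbnd _ (hGc.mono hIsub) (hIccbd _ hGc)
  have hbwdc : ContinuousOn (bwdDrift v mu pi) I := by
    unfold bwdDrift
    apply ContinuousOn.add (hmuc.mono hIsub).neg
    apply ContinuousOn.div _ hpic hpine
    refine ContinuousOn.congr (((hva'.continuousOn.mono hIU).mul hpic).add
      ((hva.continuousOn.mono hIU).mul hdpic)) ?_
    intro x hx
    rw [hvpideriv x hx]
    rfl
  have hApsic : ContinuousOn (fun p => phi p * Apsi p) I := by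
    apply ContinuousOn.mul hphic.continuousOn
    simp only [hApsidef]
    exact ((continuousOn_const.mul (hvc.mono hIsub)).mul hddpsic).add (hbwdc.mul hdpsic)
  have int2 : IntegrableOn (fun p => phi p * Apsi p * pi p) I := by
    apply hbnd _ hApsic
    obtain ⟨M, hM⟩ := hbdd
    obtain ⟨Mp, hMp⟩ := hIccbd phi hphic.continuousOn
    have hM0 : 0 ≤ M := le_trans (abs_nonneg _) (hM (1/2) (by constructor <;> norm_num))
    have hMp0 : 0 ≤ Mp := le_trans (abs_nonneg _) (hMp (1/2) (by constructor <;> norm_num))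
    refine ⟨Mp * M, fun x hx => ?_⟩
    rw [abs_mul]
    have hax : |Apsi x| ≤ M := hM x hx
    exact mul_le_mul (hMp x hx) hax (abs_nonneg _) hMp0
  have hgc : ContinuousOn (fun p => lam * (w0 p * phi 0 + (1 - w0 p) * phi 1) * psi p)
      (Icc (0:ℝ) 1) :=
    (continuousOn_const.mul ((hw0c.mul continuousOn_const).add
      ((continuousOn_const.sub hw0c).mul continuousOn_const))).mul hpsi_cont
  have int3 : IntegrableOn g I := by
    simp only [hgdef]
    exact hbnd _ (hgc.mono hIsub) (hIccbd _ hgc)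
  have iw0 : IntegrableOn (fun p => w0 p * pi p) I :=
    hbnd _ (hw0c.mono hIsub) (hIccbd _ hw0c)
  have iw1 : IntegrableOn (fun p => (1 - w0 p) * pi p) I :=
    hbnd _ ((continuousOn_const.sub hw0c).mono hIsub)
      (hIccbd _ (continuousOn_const.sub hw0c))
  have iJ0 : IntegrableOn (fun p => psi p * w0 p * pi p) I :=
    hbnd _ ((hpsi_cont.mul hw0c).mono hIsub) (hIccbd _ (hpsi_cont.mul hw0c))
  have iJ1 : IntegrableOn (fun p => psi p * (1 - w0 p) * pi p) I :=
    hbnd _ ((hpsi_cont.mul (continuousOn_const.sub hw0c)).mono hIsub)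
      (hIccbd _ (hpsi_cont.mul (continuousOn_const.sub hw0c)))
  -- limits of F at the endpoints
  have hpsi0 : Tendsto psi (𝓝[I] 0) (𝓝 (psi 0)) :=
    (hpsi_cont 0 (by norm_num)).mono_left (nhdsWithin_mono _ hIsub)
  have hpsi1 : Tendsto psi (𝓝[I] 1) (𝓝 (psi 1)) :=
    (hpsi_cont 1 (by norm_num)).mono_left (nhdsWithin_mono _ hIsub)
  have hphit : ∀ x : ℝ, Tendsto phi (𝓝[I] x) (𝓝 (phi x)) := fun x =>
    (hphic.tendsto x).mono_left nhdsWithin_le_nhds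
  have hdphit : ∀ x : ℝ, Tendsto (deriv phi) (𝓝[I] x) (𝓝 (deriv phi x)) := fun x =>
    (hdphic.tendsto x).mono_left nhdsWithin_le_nhds
  have hT10 : Tendsto (fun p => 1 / 2 * v p * pi p) (𝓝[I] 0) (𝓝 0) := by
    have := HP.vpi_zero.const_mul (1/2 : ℝ)
    rw [mul_zero] at this
    exact this.congr fun p => by ring
  have hT11 : Tendsto (fun p => 1 / 2 * v p * pi p) (𝓝[I] 1) (𝓝 0) := by
    have := HP.vpi_one.const_mul (1/2 : ℝ)
    rw [mul_zero] at this
    exact this.congr fun p => by ring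
  have hF0 : Tendsto F (𝓝[I] 0) (𝓝
      (0 * (psi 0 * deriv phi 0)
        - phi 0 * (-(∫ p in I, (psi p - psi 0) * (lam * w0 p * pi p)))
        + phi 0 * psi 0 * (lam * ∫ p in I, w0 p * pi p))) :=
    ((hT10.mul (hpsi0.mul (hdphit 0))).sub ((hphit 0).mul hb0)).add
      (((hphit 0).mul hpsi0).mul HP.bc_zero)
  have hF1 : Tendsto F (𝓝[I] 1) (𝓝
      (0 * (psi 1 * deriv phi 1)
        - phi 1 * (∫ p in I, (psi p - psi 1) * (lam * (1 - w0 p) * pi p))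
        + phi 1 * psi 1 * (-(lam * ∫ p in I, (1 - w0 p) * pi p)))) :=
    ((hT11.mul (hpsi1.mul (hdphit 1))).sub ((hphit 1).mul hb1)).add
      (((hphit 1).mul hpsi1).mul HP.bc_one)
  -- fundamental theorem of calculus on (0,1)
  have hFTC := ftc_Ioo (by norm_num : (0:ℝ) < 1) hFderiv
    ((int1.sub int2).sub int3) hF0 hF1
  -- integral computations
  have hsplit : (∫ p in I, (fwdGen lam v mu w0 phi p * psi p * pi p
        - phi p * Apsi p * pi p - g p))
      = (∫ p in I, fwdGen lam v mu w0 phi p * psi p * pi p)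
        - (∫ p in I, phi p * Apsi p * pi p) - ∫ p in I, g p := by
    have i12 : IntegrableOn (fun p => fwdGen lam v mu w0 phi p * psi p * pi p
        - phi p * Apsi p * pi p) I := by exact int1.sub int2
    rw [integral_sub i12 int3, integral_sub int1 int2]
  have hE1 : (∫ p in I, (psi p - psi 0) * (lam * w0 p * pi p))
      = lam * (∫ p in I, psi p * w0 p * pi p)
        - lam * psi 0 * ∫ p in I, w0 p * pi p := by
    rw [show (fun p => (psi p - psi 0) * (lam * w0 p * pi p))
        = fun p => lam * (psi p * w0 p * pi p) - lam * psi 0 * (w0 p * pi p) from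
      funext fun p => by ring]
    rw [integral_sub (iJ0.const_mul lam) (iw0.const_mul (lam * psi 0)),
      integral_const_mul, integral_const_mul]
  have hE2 : (∫ p in I, (psi p - psi 1) * (lam * (1 - w0 p) * pi p))
      = lam * (∫ p in I, psi p * (1 - w0 p) * pi p)
        - lam * psi 1 * ∫ p in I, (1 - w0 p) * pi p := by
    rw [show (fun p => (psi p - psi 1) * (lam * (1 - w0 p) * pi p))
        = fun p => lam * (psi p * (1 - w0 p) * pi p)
            - lam * psi 1 * ((1 - w0 p) * pi p) from
      funext fun p => by ring]
    rw [integral_sub (iJ1.const_mul lam) (iw1.const_mul (lam * psi 1)),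
      integral_const_mul, integral_const_mul]
  have hE3 : (∫ p in I, g p)
      = lam * phi 0 * (∫ p in I, psi p * w0 p * pi p)
        + lam * phi 1 * ∫ p in I, psi p * (1 - w0 p) * pi p := by
    rw [show g = fun p => lam * phi 0 * (psi p * w0 p * pi p)
        + lam * phi 1 * (psi p * (1 - w0 p) * pi p) from
      funext fun p => by simp only [hgdef]; ring]
    rw [integral_add (iJ0.const_mul (lam * phi 0)) (iJ1.const_mul (lam * phi 1)),
      integral_const_mul, integral_const_mul]
  rw [hsplit, hE1, hE2, hE3] at hFTC
  linear_combination hFTC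
end

section
/- Let i ∈ {0,1} and suppose π : (0,1) → (0,∞) satisfies π(p) ≤ C̄ · ln(1/|p−i|) for all p in some neighborhood of i in (0,1), for some constant C̄ > 0. Let ψ : [0,1] → ℝ be continuous and continuously differentiable on (0,1). If the limit lim_{p→i} v(p) π(p) ψ'(p) exists in ℝ, then it equals 0. -/
open MeasureTheory Set Filter Topology Asymptotics

/-- Core contradiction lemma: a function continuous up to `0⁺` cannot have derivative
bounded below by `c/(p·(−log p))` near `0⁺`. -/
lemma stmt16_core (f : ℝ → ℝ) (F0 : ℝ)
    (hf0 : Tendsto f (𝓝[>] (0 : ℝ)) (𝓝 F0))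
    (hdiff : ∀ p ∈ Ioo (0 : ℝ) 1, DifferentiableAt ℝ f p)
    (c : ℝ) (hc : 0 < c)
    (hb : ∀ᶠ p in 𝓝[>] (0 : ℝ), c / (p * (-Real.log p)) ≤ deriv f p) : False := by
  rw [eventually_nhdsWithin_iff, Metric.eventually_nhds_iff] at hb
  obtain ⟨δ0, hδ0, hbb⟩ := hb
  set δ : ℝ := min δ0 (1/2) with hδdef
  have hδpos : 0 < δ := lt_min hδ0 (by norm_num)
  have hδle : δ ≤ 1/2 := min_le_right _ _
  have hbb' : ∀ p ∈ Ioo (0:ℝ) δ, c / (p * (-Real.log p)) ≤ deriv f p := by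
    intro p hp
    refine hbb ?_ hp.1
    rw [Real.dist_eq, sub_zero, abs_of_pos hp.1]
    exact lt_of_lt_of_le hp.2 (min_le_left _ _)
  -- facts about points of `Ioo 0 δ`
  have hmem : ∀ p ∈ Ioo (0:ℝ) δ, 0 < p ∧ p < 1 ∧ Real.log p < 0 := by
    intro p hp
    have h1 : p < 1 := lt_of_lt_of_le hp.2 (hδle.trans (by norm_num))
    exact ⟨hp.1, h1, Real.log_neg hp.1 h1⟩
  set g : ℝ → ℝ := fun p => Real.log (-Real.log p) with hgdef
  set h : ℝ → ℝ := fun p => f p + c * g p with hhdef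
  have hder : ∀ p ∈ Ioo (0:ℝ) δ,
      HasDerivAt h (deriv f p + c * ((-Real.log p)⁻¹ * (-p⁻¹))) p := by
    intro p hp
    obtain ⟨hp0, hp1, hlogneg⟩ := hmem p hp
    have hg1 : HasDerivAt (fun q : ℝ => -Real.log q) (-p⁻¹) p :=
      (Real.hasDerivAt_log hp0.ne').neg
    have hg2 : HasDerivAt Real.log (-Real.log p)⁻¹ (-Real.log p) :=
      Real.hasDerivAt_log (by linarith)
    have hg : HasDerivAt g ((-Real.log p)⁻¹ * (-p⁻¹)) p := by have := hg2.comp p hg1; exact this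
    exact ((hdiff p ⟨hp0, hp1⟩).hasDerivAt).add (hg.const_mul c)
  have hmono : MonotoneOn h (Ioo (0:ℝ) δ) := by
    apply monotoneOn_of_deriv_nonneg (convex_Ioo _ _)
    · intro p hp
      exact ((hder p hp).differentiableAt).continuousAt.continuousWithinAt
    · rw [interior_Ioo]
      intro p hp
      exact ((hder p hp).differentiableAt).differentiableWithinAt
    · rw [interior_Ioo]
      intro p hp
      obtain ⟨hp0, hp1, hlogneg⟩ := hmem p hp
      rw [(hder p hp).deriv]
      have key : c * ((-Real.log p)⁻¹ * (-p⁻¹)) = -(c / (p * (-Real.log p))) := by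
        field_simp
      rw [key]
      have := hbb' p hp
      linarith
  -- now derive the contradiction
  set b : ℝ := δ/2 with hbdef
  have hbmem : b ∈ Ioo (0:ℝ) δ := ⟨by positivity, by simp [hbdef]; linarith⟩
  have hev1 : ∀ᶠ p in 𝓝[>] (0:ℝ), p ∈ Ioo (0:ℝ) b :=
    Ioo_mem_nhdsGT_of_mem ⟨le_refl _, hbmem.1⟩
  have hub : ∀ᶠ p in 𝓝[>] (0:ℝ), f p + c * g p ≤ h b := by
    filter_upwards [hev1] with p hp
    have hpδ : p ∈ Ioo (0:ℝ) δ := ⟨hp.1, hp.2.trans hbmem.2⟩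
    exact hmono hpδ hbmem hp.2.le
  -- the left side tends to +∞
  have hgtop : Tendsto g (𝓝[>] (0:ℝ)) atTop := by
    apply Real.tendsto_log_atTop.comp
    exact tendsto_neg_atBot_atTop.comp Real.tendsto_log_nhdsGT_zero
  have hcgtop : Tendsto (fun p => c * g p) (𝓝[>] (0:ℝ)) atTop := by
    exact Tendsto.const_mul_atTop hc hgtop
  have hlo : ∀ᶠ p in 𝓝[>] (0:ℝ), F0 - 1 < f p :=
    hf0.eventually_const_lt (by linarith)
  have hlo2 : ∀ᶠ p in 𝓝[>] (0:ℝ), h b - F0 + 1 < c * g p :=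
    hcgtop.eventually_gt_atTop _
  obtain ⟨p, h1, h2, h3⟩ := (hub.and (hlo.and hlo2)).exists
  linarith

/-- Bridge: if `w > 0` near `0⁺`, `w ≤ M·p·(−log p)`, and `w·f' → L > 0`, then `f`
cannot extend continuously to `0`. -/
lemma stmt16_bridge (f w : ℝ → ℝ) (F0 L M : ℝ)
    (hf0 : Tendsto f (𝓝[>] (0 : ℝ)) (𝓝 F0))
    (hdiff : ∀ p ∈ Ioo (0 : ℝ) 1, DifferentiableAt ℝ f p)
    (hM : 0 < M)
    (hw_pos : ∀ᶠ p in 𝓝[>] (0 : ℝ), 0 < w p)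
    (hw_le : ∀ᶠ p in 𝓝[>] (0 : ℝ), w p ≤ M * (p * (-Real.log p)))
    (hL : 0 < L)
    (hlim : Tendsto (fun p => w p * deriv f p) (𝓝[>] (0 : ℝ)) (𝓝 L)) : False := by
  apply stmt16_core f F0 hf0 hdiff (L / 2 / M) (by positivity)
  have hev : ∀ᶠ p in 𝓝[>] (0:ℝ), L / 2 < w p * deriv f p :=
    hlim.eventually_const_lt (by linarith)
  have hmem : ∀ᶠ p in 𝓝[>] (0:ℝ), p ∈ Ioo (0:ℝ) (1/2) :=
    Ioo_mem_nhdsGT_of_mem ⟨le_refl _, by norm_num⟩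
  filter_upwards [hev, hw_pos, hw_le, hmem] with p h1 h2 h3 h4
  have hlog : Real.log p < 0 := Real.log_neg h4.1 (by linarith [h4.2])
  have hX : 0 < p * (-Real.log p) := by
    apply mul_pos h4.1; linarith
  have hd : L / 2 / w p ≤ deriv f p := by
    rw [div_le_iff₀ h2]; linarith
  calc L / 2 / M / (p * (-Real.log p)) = L / 2 / (M * (p * (-Real.log p))) := by
        rw [div_div]
    _ ≤ L / 2 / w p := by
        apply div_le_div_of_nonneg_left (by linarith) h2 h3
    _ ≤ deriv f p := hd

/-- if `π` grows at most logarithmically near `i` and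
`lim_{p→i} v(p)π(p)ψ'(p)` exists, then the limit is zero. -/
theorem stmt_16 (lam : ℝ) (v mu w0 : ℝ → ℝ)
    (H : ModelAssumptions lam v mu w0)
    (i : ℝ) (hi : i = 0 ∨ i = 1)
    (pi : ℝ → ℝ) (hpos : ∀ p ∈ Ioo (0 : ℝ) 1, 0 < pi p)
    (Cb : ℝ) (hCb : 0 < Cb)
    (hbound : ∀ᶠ p in 𝓝[Ioo (0 : ℝ) 1] i, pi p ≤ Cb * Real.log (1 / |p - i|))
    (psi : ℝ → ℝ)
    (hpsi_cont : ContinuousOn psi (Icc (0 : ℝ) 1))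
    (hpsi_C1 : ContDiffOn ℝ 1 psi (Ioo (0 : ℝ) 1))
    (L : ℝ)
    (hlim : Tendsto (fun p => v p * pi p * deriv psi p) (𝓝[Ioo (0 : ℝ) 1] i) (𝓝 L)) :
    L = 0 := by
  obtain ⟨U, hUopen, hIccU, hva, -, -⟩ := H.analytic
  have hpsidiff : ∀ p ∈ Ioo (0 : ℝ) 1, DifferentiableAt ℝ psi p := fun p hp =>
    (hpsi_C1.differentiableOn one_ne_zero).differentiableAt (isOpen_Ioo.mem_nhds hp)
  have l0eq : 𝓝[Ioo (0:ℝ) 1] 0 = 𝓝[>] (0:ℝ) := nhdsWithin_Ioo_eq_nhdsGT one_pos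
  have hmemIoo : ∀ᶠ p in 𝓝[>] (0:ℝ), p ∈ Ioo (0:ℝ) 1 :=
    Ioo_mem_nhdsGT_of_mem ⟨le_refl _, one_pos⟩
  by_contra hL0
  rcases hi with hi0 | hi1
  · -- case i = 0
    rw [hi0, l0eq] at hbound hlim
    set K : ℝ := deriv v 0 + 1 with hKdef
    have hK : 0 < K := by have := H.deriv_v_zero_pos; linarith
    have hv0 : HasDerivAt v (deriv v 0) 0 :=
      ((hva 0 (hIccU ⟨le_refl _, zero_le_one⟩)).differentiableAt).hasDerivAt
    have hslope : Tendsto (slope v 0) (𝓝[>] (0:ℝ)) (𝓝 (deriv v 0)) :=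
      (hasDerivAt_iff_tendsto_slope.1 hv0).mono_left
        (nhdsWithin_mono _ (fun x hx => ne_of_gt hx))
    have hvlt : ∀ᶠ p in 𝓝[>] (0:ℝ), v p < K * p := by
      filter_upwards [hslope.eventually_lt_const (by linarith : deriv v 0 < K),
        self_mem_nhdsWithin] with p h1 h2
      rw [slope_def_field, H.v_zero, sub_zero, sub_zero] at h1
      exact (div_lt_iff₀ h2).1 h1
    have hw_pos : ∀ᶠ p in 𝓝[>] (0:ℝ), 0 < v p * pi p := by
      filter_upwards [hmemIoo] with p hp
      exact mul_pos (H.v_pos p hp) (hpos p hp)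
    have hw_le : ∀ᶠ p in 𝓝[>] (0:ℝ), v p * pi p ≤ (K * Cb) * (p * (-Real.log p)) := by
      filter_upwards [hvlt, hbound, hmemIoo] with p h1 h2 h3
      rw [sub_zero, abs_of_pos h3.1, one_div, Real.log_inv] at h2
      calc v p * pi p ≤ (K * p) * (Cb * (-Real.log p)) :=
            mul_le_mul h1.le h2 (hpos p h3).le (mul_nonneg hK.le h3.1.le)
        _ = (K * Cb) * (p * (-Real.log p)) := by ring
    have hf0 : Tendsto psi (𝓝[>] (0:ℝ)) (𝓝 (psi 0)) := by
      refine (hpsi_cont 0 ⟨le_refl _, zero_le_one⟩).mono_left ?_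
      rw [← l0eq]
      exact nhdsWithin_mono _ Ioo_subset_Icc_self
    rcases lt_or_gt_of_ne hL0 with hL | hL
    · refine stmt16_bridge (fun p => -psi p) (fun p => v p * pi p) (-psi 0) (-L)
        ((K * Cb)) hf0.neg (fun p hp => (hpsidiff p hp).neg) (by positivity)
        hw_pos hw_le (by linarith) ?_
      refine hlim.neg.congr (fun p => ?_)
      rw [show (fun p => -psi p) = -psi from rfl, deriv.neg]; ring
    · exact stmt16_bridge psi (fun p => v p * pi p) (psi 0) L (K * Cb) hf0 hpsidiff
        (by positivity) hw_pos hw_le hL hlim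
  · -- case i = 1
    rw [hi1] at hbound hlim
    have hT : Tendsto (fun p : ℝ => 1 - p) (𝓝[>] (0:ℝ)) (𝓝[Ioo (0:ℝ) 1] 1) := by
      apply tendsto_nhdsWithin_of_tendsto_nhds_of_eventually_within
      · exact (((continuous_const.sub continuous_id).tendsto' 0 1 (by norm_num)).mono_left
          nhdsWithin_le_nhds)
      · filter_upwards [hmemIoo] with p hp
        exact ⟨by simp; linarith [hp.2], by simp; linarith [hp.1]⟩
    have hTne : Tendsto (fun p : ℝ => 1 - p) (𝓝[>] (0:ℝ)) (𝓝[{(1:ℝ)}ᶜ] 1) := by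
      apply tendsto_nhdsWithin_of_tendsto_nhds_of_eventually_within
      · exact (((continuous_const.sub continuous_id).tendsto' 0 1 (by norm_num)).mono_left
          nhdsWithin_le_nhds)
      · filter_upwards [self_mem_nhdsWithin] with p hp
        simp only [mem_compl_iff, mem_singleton_iff]
        intro h
        have : p = 0 := by linarith
        exact absurd this (ne_of_gt hp)
    have hbound1 := hT.eventually hbound
    have hlim1 := hlim.comp hT
    set K : ℝ := 1 - deriv v 1 with hKdef
    have hK : 0 < K := by have := H.deriv_v_one_neg; linarith
    have hv1 : HasDerivAt v (deriv v 1) 1 :=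
      ((hva 1 (hIccU ⟨zero_le_one, le_refl _⟩)).differentiableAt).hasDerivAt
    have hslope : Tendsto (fun p => slope v 1 (1 - p)) (𝓝[>] (0:ℝ)) (𝓝 (deriv v 1)) :=
      (hasDerivAt_iff_tendsto_slope.1 hv1).comp hTne
    have hvlt : ∀ᶠ p in 𝓝[>] (0:ℝ), v (1 - p) < K * p := by
      filter_upwards [hslope.eventually_const_lt (by linarith : deriv v 1 - 1 < deriv v 1),
        self_mem_nhdsWithin] with p h1 h2
      have hp0 : (0:ℝ) < p := h2
      rw [slope_def_field, H.v_one, sub_zero] at h1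
      have he : (1 - p - 1 : ℝ) = -p := by ring
      rw [he, div_neg] at h1
      have h1' : v (1 - p) / p < 1 - deriv v 1 := by linarith
      exact (div_lt_iff₀ hp0).1 h1'
    have hw_pos : ∀ᶠ p in 𝓝[>] (0:ℝ), 0 < v (1 - p) * pi (1 - p) := by
      filter_upwards [hmemIoo] with p hp
      have h1p : (1:ℝ) - p ∈ Ioo (0:ℝ) 1 := ⟨by linarith [hp.2], by linarith [hp.1]⟩
      exact mul_pos (H.v_pos _ h1p) (hpos _ h1p)
    have hw_le : ∀ᶠ p in 𝓝[>] (0:ℝ),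
        v (1 - p) * pi (1 - p) ≤ (K * Cb) * (p * (-Real.log p)) := by
      filter_upwards [hvlt, hbound1, hmemIoo] with p h1 h2 h3
      have h1p : (1:ℝ) - p ∈ Ioo (0:ℝ) 1 := ⟨by linarith [h3.2], by linarith [h3.1]⟩
      have he : (1 - p - 1 : ℝ) = -p := by ring
      rw [he, abs_neg, abs_of_pos h3.1, one_div, Real.log_inv] at h2
      calc v (1 - p) * pi (1 - p) ≤ (K * p) * (Cb * (-Real.log p)) :=
            mul_le_mul h1.le h2 (hpos _ h1p).le (mul_nonneg hK.le h3.1.le)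
        _ = (K * Cb) * (p * (-Real.log p)) := by ring
    have hf0 : Tendsto (fun p : ℝ => psi (1 - p)) (𝓝[>] (0:ℝ)) (𝓝 (psi 1)) :=
      ((hpsi_cont 1 ⟨zero_le_one, le_refl _⟩).mono_left
        (nhdsWithin_mono _ Ioo_subset_Icc_self)).comp hT
    have hderiv : ∀ p ∈ Ioo (0:ℝ) 1,
        HasDerivAt (fun p : ℝ => psi (1 - p)) (deriv psi (1 - p) * (-1)) p := by
      intro p hp
      have h1p : (1:ℝ) - p ∈ Ioo (0:ℝ) 1 := ⟨by linarith [hp.2], by linarith [hp.1]⟩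
      exact ((hpsidiff _ h1p).hasDerivAt).comp p ((hasDerivAt_id p).const_sub 1)
    rcases lt_or_gt_of_ne hL0 with hL | hL
    · -- L < 0 : use f p = psi (1 - p)
      refine stmt16_bridge (fun p => psi (1 - p)) (fun p => v (1 - p) * pi (1 - p))
        (psi 1) (-L) (K * Cb) hf0
        (fun p hp => (hderiv p hp).differentiableAt) (by positivity)
        hw_pos hw_le (by linarith) ?_
      refine hlim1.neg.congr' ?_
      filter_upwards [hmemIoo] with p hp
      rw [(hderiv p hp).deriv]
      simp only [Function.comp_apply]; ring
    · -- L > 0 : use f p = -psi (1 - p)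
      refine stmt16_bridge (fun p => -psi (1 - p)) (fun p => v (1 - p) * pi (1 - p))
        (-psi 1) L (K * Cb) hf0.neg
        (fun p hp => (hderiv p hp).differentiableAt.neg) (by positivity)
        hw_pos hw_le hL ?_
      refine hlim1.congr' ?_
      filter_upwards [hmemIoo] with p hp
      have := ((hderiv p hp).neg).deriv
      rw [show (fun p => -psi (1 - p)) = -(fun p => psi (1 - p)) from rfl, this]
      simp only [Function.comp_apply]; ring
end
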